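/- arXiv:0804.2766 — 7 statements merged into one kernel-verified Lean document; each statement's English description precedes it below -/
import Mathlib

section
/- Let D ⊂ ℂ² be a bounded domain (nonempty, open and connected), let p ∈ D, and let (φ_j) be a sequence of automorphisms of D (bijective holomorphic self-maps of D with holomorphic inverse) such that φ_j(p) converges to a point p∞ in the boundary ∂D of D. Assume there is an open neighbourhood U of p∞ in ℂ² such that every holomorphic map from the open unit disc in ℂ into ℂ² whose image is contained in U ∩ ∂D is constant. Then the sequence (φ_j) converges locally uniformly on D to the constant map with value p∞. -/
open Complex Filter Metric Set Topology
set_option linter.unusedSectionVars false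
set_option maxHeartbeats 2000000

namespace Stmt0Aux

variable {F : Type*} [NormedAddCommGroup F] [NormedSpace ℂ F] [CompleteSpace F]


variable {F : Type*} [NormedAddCommGroup F] [NormedSpace ℂ F] [CompleteSpace F]

lemma slice_diffOn {E : Type*} [NormedAddCommGroup E] [NormedSpace ℂ E]
    {f : E → F} {s : Set E} (hd : DifferentiableOn ℂ f s)
    (x v : E) {ρ : ℝ} (hmaps : ∀ ζ ∈ ball (0:ℂ) ρ, x + ζ • v ∈ s) :
    DifferentiableOn ℂ (fun ζ : ℂ => f (x + ζ • v)) (ball 0 ρ) := by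
  have hl : Differentiable ℂ (fun ζ : ℂ => x + ζ • v) :=
    (differentiable_id.smul_const v).const_add x
  exact hd.comp hl.differentiableOn (fun ζ hζ => hmaps ζ hζ)

lemma slice_hasDerivAt {E : Type*} [NormedAddCommGroup E] [NormedSpace ℂ E]
    {f : E → F} {x v : E} (hd : DifferentiableAt ℂ f x) :
    HasDerivAt (fun ζ : ℂ => f (x + ζ • v)) (fderiv ℂ f x v) 0 := by
  have hl : HasDerivAt (fun ζ : ℂ => x + ζ • v) v 0 := by
    simpa using ((hasDerivAt_id (0:ℂ)).smul_const v).const_add x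
  have hx : x + (0:ℂ) • v = x := by simp
  have hf := hd.hasFDerivAt
  rw [← hx] at hf
  have h2 := hf.comp_hasDerivAt 0 hl
  simp only [Function.comp_def, hx] at h2
  exact h2

lemma lip_slice {E : Type*} [NormedAddCommGroup E] [NormedSpace ℂ E]
    {f : E → F} {c : E} {R M : ℝ}
    (hd : DifferentiableOn ℂ f (ball c R))
    (hM : ∀ w ∈ ball c R, ‖f w‖ ≤ M)
    {z : E} (hz : z ∈ ball c R) {y : E} (hy : dist y z < R - dist z c) :
    dist (f y) (f z) ≤ (2 * M + 1) / (R - dist z c) * dist y z := by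
  have hzc : dist z c < R := mem_ball.mp hz
  have hR1 : 0 < R - dist z c := by linarith
  have hM0 : 0 ≤ M := le_trans (norm_nonneg _) (hM z hz)
  rcases eq_or_ne y z with rfl | hyz
  · simp
  have hv : y - z ≠ 0 := sub_ne_zero.mpr hyz
  have hvn : 0 < ‖y - z‖ := norm_pos_iff.mpr hv
  set ρ : ℝ := (R - dist z c) / ‖y - z‖ with hρdef
  have hρ : 0 < ρ := div_pos hR1 hvn
  have hmaps : ∀ ζ ∈ ball (0:ℂ) ρ, z + ζ • (y - z) ∈ ball c R := by
    intro ζ hζ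
    rw [mem_ball] at hζ ⊢
    have : dist (z + ζ • (y - z)) c ≤ ‖ζ • (y - z)‖ + dist z c := by
      calc dist (z + ζ • (y - z)) c ≤ dist (z + ζ • (y - z)) z + dist z c := dist_triangle _ _ _
        _ = ‖ζ • (y - z)‖ + dist z c := by rw [dist_eq_norm, add_sub_cancel_left]
    have h2 : ‖ζ • (y - z)‖ < ρ * ‖y - z‖ := by
      rw [norm_smul]
      have := mem_ball_zero_iff.mp hζ
      exact mul_lt_mul_of_pos_right this hvn
    have h3 : ρ * ‖y - z‖ = R - dist z c := by
      rw [hρdef, div_mul_cancel₀ _ hvn.ne']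
    linarith
  have hd' : DifferentiableOn ℂ (fun ζ : ℂ => f (z + ζ • (y - z))) (ball 0 ρ) :=
    slice_diffOn hd z (y - z) hmaps
  have hmaps2 : MapsTo (fun ζ : ℂ => f (z + ζ • (y - z))) (ball 0 ρ)
      (ball ((fun ζ : ℂ => f (z + ζ • (y - z))) 0) (2 * M + 1)) := by
    intro ζ hζ
    simp only [mem_ball]
    have h0 : z + (0:ℂ) • (y - z) = z := by simp
    rw [h0]
    calc dist (f (z + ζ • (y - z))) (f z) ≤ ‖f (z + ζ • (y - z))‖ + ‖f z‖ := dist_le_norm_add_norm _ _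
      _ ≤ M + M := add_le_add (hM _ (hmaps ζ hζ)) (hM z hz)
      _ < 2 * M + 1 := by linarith
  have h1 : (1:ℂ) ∈ ball (0:ℂ) ρ := by
    rw [mem_ball_zero_iff]
    simp only [norm_one]
    rw [hρdef, lt_div_iff₀ hvn, one_mul]
    rw [dist_eq_norm] at hy
    exact hy
  have := Complex.dist_le_div_mul_dist_of_mapsTo_ball hd' (hmaps2.mono_right ball_subset_closedBall) h1
  simp only [one_smul, zero_smul, add_zero, add_sub_cancel] at this
  have hd10 : dist (1:ℂ) 0 = 1 := by simp
  rw [hd10, mul_one] at this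
  calc dist (f y) (f z) ≤ (2 * M + 1) / ρ := this
    _ = (2 * M + 1) / (R - dist z c) * dist y z := by
        rw [hρdef, dist_eq_norm, div_div_eq_mul_div, mul_div_assoc, dist_eq_norm]
        ring

lemma deriv_bound {E : Type*} [NormedAddCommGroup E] [NormedSpace ℂ E]
    {f : E → F} {c : E} {R M : ℝ}
    (hd : DifferentiableOn ℂ f (ball c R))
    (hM : ∀ w ∈ ball c R, ‖f w‖ ≤ M)
    {z : E} (hz : z ∈ ball c R) (v : E) :
    ‖fderiv ℂ f z v‖ ≤ (2 * M + 1) * ‖v‖ / (R - dist z c) := by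
  have hzc : dist z c < R := mem_ball.mp hz
  have hR1 : 0 < R - dist z c := by linarith
  have hM0 : 0 ≤ M := le_trans (norm_nonneg _) (hM z hz)
  rcases eq_or_ne v 0 with rfl | hv
  · simp [hR1.le]
  have hvn : 0 < ‖v‖ := norm_pos_iff.mpr hv
  set ρ : ℝ := (R - dist z c) / ‖v‖ with hρdef
  have hρ : 0 < ρ := div_pos hR1 hvn
  have hmaps : ∀ ζ ∈ ball (0:ℂ) ρ, z + ζ • v ∈ ball c R := by
    intro ζ hζ
    rw [mem_ball] at hζ ⊢
    have h1 : dist (z + ζ • v) c ≤ ‖ζ • v‖ + dist z c := by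
      calc dist (z + ζ • v) c ≤ dist (z + ζ • v) z + dist z c := dist_triangle _ _ _
        _ = ‖ζ • v‖ + dist z c := by rw [dist_eq_norm, add_sub_cancel_left]
    have h2 : ‖ζ • v‖ < ρ * ‖v‖ := by
      rw [norm_smul]
      exact mul_lt_mul_of_pos_right (mem_ball_zero_iff.mp hζ) hvn
    have h3 : ρ * ‖v‖ = R - dist z c := by
      rw [hρdef, div_mul_cancel₀ _ hvn.ne']
    linarith
  have hd' : DifferentiableOn ℂ (fun ζ : ℂ => f (z + ζ • v)) (ball 0 ρ) :=
    slice_diffOn hd z v hmaps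
  have hmaps2 : MapsTo (fun ζ : ℂ => f (z + ζ • v)) (ball 0 ρ)
      (ball ((fun ζ : ℂ => f (z + ζ • v)) 0) (2 * M + 1)) := by
    intro ζ hζ
    simp only [mem_ball]
    have h0 : z + (0:ℂ) • v = z := by simp
    rw [h0]
    calc dist (f (z + ζ • v)) (f z) ≤ ‖f (z + ζ • v)‖ + ‖f z‖ := dist_le_norm_add_norm _ _
      _ ≤ M + M := add_le_add (hM _ (hmaps ζ hζ)) (hM z hz)
      _ < 2 * M + 1 := by linarith
  have hder : deriv (fun ζ : ℂ => f (z + ζ • v)) 0 = fderiv ℂ f z v :=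
    (slice_hasDerivAt (hd.differentiableAt (isOpen_ball.mem_nhds hz))).deriv
  have := Complex.norm_deriv_le_div_of_mapsTo_ball hd' (hmaps2.mono_right ball_subset_closedBall) hρ
  rw [hder] at this
  calc ‖fderiv ℂ f z v‖ ≤ (2 * M + 1) / ρ := this
    _ = (2 * M + 1) * ‖v‖ / (R - dist z c) := by rw [hρdef]; field_simp


lemma mixedHol {E : Type*} [NormedAddCommGroup E] [NormedSpace ℂ E]
    {f : E → F} {c : E} {R M s : ℝ} (hs : 0 < s)
    (hd : DifferentiableOn ℂ f (ball c R))
    (hM : ∀ w ∈ ball c R, ‖f w‖ ≤ M) (hMpos : 0 ≤ M)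
    (v : E) (hv : v ≠ 0) (x : E) (w : E) {ρ : ℝ}
    (hmaps : ∀ ζ ∈ ball (0:ℂ) ρ, x + ζ • w ∈ ball c (R - s)) :
    DifferentiableOn ℂ (fun ζ : ℂ => fderiv ℂ f (x + ζ • w) v) (ball 0 ρ) := by
  rcases le_or_gt ρ 0 with hρ | hρ
  · rw [Metric.ball_eq_empty.mpr hρ]
    exact differentiableOn_empty
  have hvn : 0 < ‖v‖ := norm_pos_iff.mpr hv
  set s₁ : ℝ := s / ‖v‖ with hs₁def
  have hs₁ : 0 < s₁ := div_pos hs hvn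
  -- points of the slice are inside `ball c (R - s)`, and shifted points stay in `ball c R`
  have hmem : ∀ ζ ∈ ball (0:ℂ) ρ, ∀ μ : ℂ, ‖μ‖ < s₁ → (x + ζ • w) + μ • v ∈ ball c R := by
    intro ζ hζ μ hμ
    have h1 : dist (x + ζ • w) c < R - s := mem_ball.mp (hmaps ζ hζ)
    rw [mem_ball]
    calc dist ((x + ζ • w) + μ • v) c ≤ dist ((x + ζ • w) + μ • v) (x + ζ • w) + dist (x + ζ • w) c :=
          dist_triangle _ _ _
      _ = ‖μ • v‖ + dist (x + ζ • w) c := by rw [dist_eq_norm, add_sub_cancel_left]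
      _ < s₁ * ‖v‖ + (R - s) := by
          apply add_lt_add _ h1
          rw [norm_smul]
          exact mul_lt_mul_of_pos_right hμ hvn
      _ = R := by rw [hs₁def, div_mul_cancel₀ _ hvn.ne']; ring
  -- the difference quotients
  set Q : ℂ → ℂ → F := fun t ζ => (t⁻¹ : ℂ) • (f ((x + ζ • w) + t • v) - f (x + ζ • w)) with hQdef
  set G : ℂ → F := fun ζ => fderiv ℂ f (x + ζ • w) v with hGdef
  -- dslope facts, for ζ fixed
  have hQfacts : ∀ ζ ∈ ball (0:ℂ) ρ, ∀ t : ℂ, ‖t‖ < s₁ →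
      dist (G ζ) (Q t ζ) ≤ ((2 * ((2*M+1)/s₁) + 1) / s₁) * ‖t‖ ∨ t = 0 := by
    intro ζ hζ t ht
    rcases eq_or_ne t 0 with rfl | htne
    · exact Or.inr rfl
    left
    set y : E := x + ζ • w with hydef
    set q : ℂ → F := fun μ => f (y + μ • v) with hqdef
    have hq : DifferentiableOn ℂ q (ball 0 s₁) :=
      slice_diffOn hd y v (fun μ hμ => hmem ζ hζ μ (mem_ball_zero_iff.mp hμ))
    have hds : DifferentiableOn ℂ (dslope q 0) (ball 0 s₁) :=
      (differentiableOn_dslope (ball_mem_nhds 0 hs₁)).mpr hq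
    have hq0 : q 0 = f y := by simp [hqdef]
    have hqb : MapsTo q (ball 0 s₁) (ball (q 0) (2*M+1)) := by
      intro μ hμ
      rw [mem_ball, hq0]
      calc dist (q μ) (f y) ≤ ‖q μ‖ + ‖f y‖ := dist_le_norm_add_norm _ _
        _ ≤ M + M := add_le_add
            (hM _ (hmem ζ hζ μ (mem_ball_zero_iff.mp hμ)))
            (hM _ (by
              have := hmaps ζ hζ
              rw [mem_ball] at this ⊢
              linarith))
        _ < 2*M+1 := by linarith
    have hdsb : ∀ μ ∈ ball (0:ℂ) s₁, ‖dslope q 0 μ‖ ≤ (2*M+1)/s₁ := by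
      intro μ hμ
      have := Complex.norm_dslope_le_div_of_mapsTo_ball hq (hqb.mono_right ball_subset_closedBall) hμ
      exact this
    have h0b : (0:ℂ) ∈ ball (0:ℂ) s₁ := mem_ball_self hs₁
    have hlip := lip_slice hds hdsb h0b (y := t) (by simpa using ht)
    have hd0 : dslope q 0 0 = G ζ := by
      rw [dslope_same]
      have : DifferentiableAt ℂ f y :=
        hd.differentiableAt (isOpen_ball.mem_nhds (by
          have := hmaps ζ hζ
          rw [mem_ball] at this ⊢
          linarith))
      exact (slice_hasDerivAt this).deriv
    have hdt : dslope q 0 t = Q t ζ := by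
      rw [dslope_of_ne _ htne]
      simp only [slope_def_module, hqdef, hQdef]
      simp [hydef]
    rw [dist_comm] at hlip
    rw [← hd0, ← hdt]
    simpa [dist_zero_right] using hlip
  -- uniform convergence of difference quotients on the slice disc
  have hunif : TendstoUniformlyOn Q G (𝓝[≠] (0:ℂ)) (ball 0 ρ) := by
    rw [Metric.tendstoUniformlyOn_iff]
    intro ε hε
    set CL : ℝ := (2 * ((2*M+1)/s₁) + 1) / s₁ with hCLdef
    have hCL : 0 < CL := by positivity
    set τ : ℝ := min (s₁/2) (ε/(2*CL)) with hτdef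
    have hτ : 0 < τ := by positivity
    have hball : ∀ᶠ t in 𝓝[≠] (0:ℂ), t ∈ ball (0:ℂ) τ :=
      eventually_nhdsWithin_of_eventually_nhds
        (Metric.eventually_nhds_iff_ball.mpr ⟨τ, hτ, fun t ht => ht⟩)
    filter_upwards [hball, self_mem_nhdsWithin] with t ht htne
    intro ζ hζ
    have htn : ‖t‖ < s₁ := by
      have := mem_ball_zero_iff.mp ht
      calc ‖t‖ < τ := this
        _ ≤ s₁/2 := min_le_left _ _
        _ < s₁ := by linarith
    rcases hQfacts ζ hζ t htn with hle | rfl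
    · calc dist (G ζ) (Q t ζ) ≤ CL * ‖t‖ := hle
        _ < CL * (ε/(2*CL)) := by
            apply mul_lt_mul_of_pos_left _ hCL
            calc ‖t‖ < τ := mem_ball_zero_iff.mp ht
              _ ≤ ε/(2*CL) := min_le_right _ _
        _ = ε/2 := by field_simp
        _ < ε := by linarith
    · exact absurd rfl htne
  -- each difference quotient is holomorphic on the slice disc
  have hdiffQ : ∀ᶠ t in 𝓝[≠] (0:ℂ), DifferentiableOn ℂ (Q t) (ball 0 ρ) := by
    have hball : ∀ᶠ t in 𝓝[≠] (0:ℂ), t ∈ ball (0:ℂ) s₁ :=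
      eventually_nhdsWithin_of_eventually_nhds
        (Metric.eventually_nhds_iff_ball.mpr ⟨s₁, hs₁, fun t ht => ht⟩)
    filter_upwards [hball] with t ht
    have h1 : DifferentiableOn ℂ (fun ζ : ℂ => f ((x + t • v) + ζ • w)) (ball 0 ρ) := by
      apply slice_diffOn hd (x + t • v) w
      intro ζ hζ
      have := hmem ζ hζ t (mem_ball_zero_iff.mp ht)
      have heq : (x + ζ • w) + t • v = (x + t • v) + ζ • w := by abel
      rwa [heq] at this
    have h2 : DifferentiableOn ℂ (fun ζ : ℂ => f (x + ζ • w)) (ball 0 ρ) := by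
      apply slice_diffOn hd x w
      intro ζ hζ
      have := hmaps ζ hζ
      rw [mem_ball] at this ⊢
      linarith
    have h3 : DifferentiableOn ℂ (fun ζ : ℂ => f ((x + ζ • w) + t • v)) (ball 0 ρ) := by
      have heq : ∀ ζ : ℂ, (x + ζ • w) + t • v = (x + t • v) + ζ • w := fun ζ => by abel
      simpa only [heq] using h1
    exact (h3.sub h2).const_smul _
  exact (hunif.tendstoLocallyUniformlyOn.differentiableOn hdiffQ isOpen_ball :
    DifferentiableOn ℂ G (ball 0 ρ))



lemma hurwitz1 {ι : Type*} {𝒰 : Filter ι} [𝒰.NeBot] {u : ι → ℂ → ℂ} {g : ℂ → ℂ} {ρ : ℝ}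
    (hρ : 0 < ρ)
    (hdiff : ∀ j, DifferentiableOn ℂ (u j) (ball 0 ρ))
    (hne : ∀ j, ∀ z ∈ ball (0:ℂ) ρ, u j z ≠ 0)
    (hconv : TendstoLocallyUniformlyOn u g 𝒰 (ball 0 ρ))
    (h0 : g 0 = 0) : ∀ z ∈ ball (0:ℂ) ρ, g z = 0 := by
  have hg : DifferentiableOn ℂ g (ball 0 ρ) :=
    hconv.differentiableOn (Filter.Eventually.of_forall hdiff) isOpen_ball
  have han : AnalyticOnNhd ℂ g (ball 0 ρ) := hg.analyticOnNhd isOpen_ball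
  have h00 : (0:ℂ) ∈ ball (0:ℂ) ρ := mem_ball_self hρ
  have key : g =ᶠ[𝓝 (0:ℂ)] 0 := by
    rcases (han 0 h00).eventually_eq_zero_or_eventually_ne_zero with h | h
    · exact h
    exfalso
    rw [eventually_nhdsWithin_iff] at h
    rw [Metric.eventually_nhds_iff] at h
    obtain ⟨r, hr, hrne⟩ := h
    set sr : ℝ := min (r/2) (ρ/2) with hsrdef
    have hsr : 0 < sr := by positivity
    have hsrρ : sr < ρ := lt_of_le_of_lt (min_le_right _ _) (by linarith)
    have hsphsub : sphere (0:ℂ) sr ⊆ ball (0:ℂ) ρ := by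
      intro z hz
      rw [mem_sphere_zero_iff_norm] at hz
      rw [mem_ball_zero_iff, hz]
      exact hsrρ
    have hgne : ∀ z ∈ sphere (0:ℂ) sr, g z ≠ 0 := by
      intro z hz
      rw [mem_sphere_zero_iff_norm] at hz
      apply hrne
      · rw [dist_zero_right, hz]
        exact lt_of_le_of_lt (min_le_left _ _) (by linarith)
      · intro hz0
        rw [hz0] at hz
        simp at hz
        linarith [hz ▸ hsr]
    have hsph_ne : (sphere (0:ℂ) sr).Nonempty := ⟨(sr:ℂ), by simp [abs_of_pos hsr]⟩
    obtain ⟨zm, hzm, hmin⟩ := (isCompact_sphere (0:ℂ) sr).exists_isMinOn hsph_ne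
      ((hg.continuousOn.mono hsphsub).norm)
    set m : ℝ := ‖g zm‖ with hmdef
    have hm : 0 < m := norm_pos_iff.mpr (hgne zm hzm)
    have hmle : ∀ z ∈ sphere (0:ℂ) sr, m ≤ ‖g z‖ := fun z hz => hmin hz
    -- uniform convergence on the sphere
    have hTU : TendstoUniformlyOn u g 𝒰 (sphere (0:ℂ) sr) := by
      have := (tendstoLocallyUniformlyOn_iff_forall_isCompact isOpen_ball).mp hconv
      exact this _ hsphsub (isCompact_sphere _ _)
    have hev1 : ∀ᶠ j in 𝒰, ∀ z ∈ sphere (0:ℂ) sr, dist (g z) (u j z) < m/2 :=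
      (Metric.tendstoUniformlyOn_iff.mp hTU) (m/2) (by positivity)
    have hev2 : ∀ᶠ j in 𝒰, dist (u j 0) (g 0) < m/2 :=
      Metric.tendsto_nhds.mp (hconv.tendsto_at h00) (m/2) (by positivity)
    obtain ⟨j, hj1, hj2⟩ := (hev1.and hev2).exists
    -- maximum principle for 1/(u j)
    have hinv : DifferentiableOn ℂ (fun z => (u j z)⁻¹) (ball 0 ρ) :=
      (hdiff j).inv (hne j)
    have hcl : closedBall (0:ℂ) sr ⊆ ball (0:ℂ) ρ := closedBall_subset_ball hsrρ
    have hdcc : DiffContOnCl ℂ (fun z => (u j z)⁻¹) (ball (0:ℂ) sr) := by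
      apply DifferentiableOn.diffContOnCl
      rw [closure_ball _ hsr.ne']
      exact hinv.mono hcl
    have hfr : ∀ z ∈ frontier (ball (0:ℂ) sr), ‖(u j z)⁻¹‖ ≤ 2/m := by
      rw [frontier_ball _ hsr.ne']
      intro z hz
      have h1 : m/2 ≤ ‖u j z‖ := by
        have h2 := hj1 z hz
        have h3 := hmle z hz
        have h4 : ‖g z‖ - ‖u j z‖ ≤ dist (g z) (u j z) := by
          rw [dist_eq_norm]
          exact norm_sub_norm_le _ _
        linarith
      rw [norm_inv]
      have hujz : 0 < ‖u j z‖ := by linarith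
      calc ‖u j z‖⁻¹ ≤ (m/2)⁻¹ := inv_anti₀ (by positivity) h1
        _ = 2/m := by rw [inv_div]
    have hmax := Complex.norm_le_of_forall_mem_frontier_norm_le isBounded_ball hdcc hfr
      (z := 0) (by
        rw [closure_ball _ hsr.ne']
        exact mem_closedBall_self hsr.le)
    rw [norm_inv] at hmax
    have hu0 : u j 0 ≠ 0 := hne j 0 h00
    have hu0n : 0 < ‖u j 0‖ := norm_pos_iff.mpr hu0
    have hfin : m/2 ≤ ‖u j 0‖ := by
      rw [show (2:ℝ)/m = (m/2)⁻¹ by rw [inv_div]] at hmax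
      have h5 : 0 < m/2 := by positivity
      by_contra hcon
      push_neg at hcon
      have := inv_strictAnti₀ hu0n hcon
      linarith
    rw [h0, dist_zero_right] at hj2
    linarith
  intro z hz
  have := han.eqOn_zero_of_preconnected_of_eventuallyEq_zero
    (convex_ball (0:ℂ) ρ).isPreconnected h00 key hz
  exact this

lemma ulim {E : Type*} [NormedAddCommGroup E] [NormedSpace ℂ E] [ProperSpace F]
    (𝒰 : Ultrafilter ℕ) (S : Set E) (f : ℕ → E → F)
    (hb : ∀ x ∈ S, ∃ C, ∀ j, ‖f j x‖ ≤ C)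
    (hlip : ∀ x ∈ S, ∃ δ, 0 < δ ∧ ∃ L, 0 ≤ L ∧ ball x δ ⊆ S ∧
      ∀ j, ∀ y ∈ ball x δ, ∀ z ∈ ball x δ, dist (f j y) (f j z) ≤ L * dist y z) :
    ∃ h : E → F, (∀ x ∈ S, ContinuousAt h x) ∧
      (∀ x ∈ S, Tendsto (fun j => f j x) 𝒰 (𝓝 (h x))) ∧
      (∀ K ⊆ S, IsCompact K → TendstoUniformlyOn f h 𝒰 K) := by
  have hex : ∀ x : E, ∃ a : F, x ∈ S → Tendsto (fun j => f j x) 𝒰 (𝓝 a) := by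
    intro x
    by_cases hx : x ∈ S
    · obtain ⟨C, hC⟩ := hb x hx
      have hmem : closedBall (0:F) C ∈ Ultrafilter.map (fun j => f j x) 𝒰 :=
        Filter.mem_map.mpr (Filter.univ_mem'
          (fun j => mem_closedBall_zero_iff.mpr (hC j)))
      obtain ⟨a, _, ha⟩ := (isCompact_closedBall (0:F) C).ultrafilter_le_nhds
        (𝒰.map (fun j => f j x)) (Filter.le_principal_iff.mpr hmem)
      refine ⟨a, fun _ => ?_⟩
      rw [Ultrafilter.coe_map] at ha
      exact ha
    · exact ⟨0, fun h => absurd h hx⟩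
  choose h hh using hex
  have htend : ∀ x ∈ S, Tendsto (fun j => f j x) 𝒰 (𝓝 (h x)) := fun x hx => hh x hx
  -- Lipschitz estimates pass to the limit
  have hdist : ∀ x δ L, ball x δ ⊆ S →
      (∀ j, ∀ y ∈ ball x δ, ∀ z ∈ ball x δ, dist (f j y) (f j z) ≤ L * dist y z) →
      ∀ y ∈ ball x δ, ∀ z ∈ ball x δ, dist (h y) (h z) ≤ L * dist y z := by
    intro x δ L hsub hf' y hy z hz
    have h1 : Tendsto (fun j => dist (f j y) (f j z)) 𝒰 (𝓝 (dist (h y) (h z))) :=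
      (htend y (hsub hy)).dist (htend z (hsub hz))
    exact le_of_tendsto h1 (Filter.Eventually.of_forall fun j => hf' j y hy z hz)
  have hcont : ∀ x ∈ S, ContinuousAt h x := by
    intro x hx
    obtain ⟨δ, hδ, L, hL0, hsub, hf'⟩ := hlip x hx
    have hlipOn : LipschitzOnWith (Real.toNNReal L) h (ball x δ) := by
      apply LipschitzOnWith.of_dist_le_mul
      intro y hy z hz
      have := hdist x δ L hsub hf' y hy z hz
      rwa [Real.coe_toNNReal _ hL0]
    exact hlipOn.continuousOn.continuousAt (isOpen_ball.mem_nhds (mem_ball_self hδ))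
  refine ⟨h, hcont, htend, ?_⟩
  intro K hKS hK
  rw [Metric.tendstoUniformlyOn_iff]
  intro ε hε
  have key : ∀ x (_ : x ∈ K), ∃ r, 0 < r ∧ ∃ L, 0 ≤ L ∧ ball x r ⊆ S ∧
      (∀ j, ∀ y ∈ ball x r, ∀ z ∈ ball x r, dist (f j y) (f j z) ≤ L * dist y z) ∧
      L * r ≤ ε/4 := by
    intro x hx
    obtain ⟨δ, hδ, L, hL0, hsub, hf'⟩ := hlip x (hKS hx)
    refine ⟨min δ (ε/(4*(L+1))), by positivity, L, hL0, ?_, ?_, ?_⟩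
    · exact fun y hy => hsub (mem_ball.mpr (lt_of_lt_of_le (mem_ball.mp hy) (min_le_left _ _)))
    · intro j y hy z hz
      exact hf' j y (mem_ball.mpr (lt_of_lt_of_le (mem_ball.mp hy) (min_le_left _ _)))
        z (mem_ball.mpr (lt_of_lt_of_le (mem_ball.mp hz) (min_le_left _ _)))
    · calc L * min δ (ε/(4*(L+1))) ≤ L * (ε/(4*(L+1))) := by
            apply mul_le_mul_of_nonneg_left (min_le_right _ _) hL0
        _ ≤ ε/4 := by
            rw [mul_div_assoc', div_le_div_iff₀ (by positivity) (by norm_num)]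
            nlinarith
  choose r hr0 L hL0 hsub hfl hrL using key
  obtain ⟨t, hcover⟩ := hK.elim_nhds_subcover' (fun x hx => ball x (r x hx))
    (fun x hx => isOpen_ball.mem_nhds (mem_ball_self (hr0 x hx)))
  have hbig : ∀ᶠ j in 𝒰, ∀ i ∈ t, dist (f j i.1) (h i.1) < ε/4 := by
    rw [Filter.eventually_all_finset]
    intro i _
    have := Metric.tendsto_nhds.mp (htend i.1 (hKS i.2)) (ε/4) (by positivity)
    filter_upwards [this] with j hj
    exact hj
  filter_upwards [hbig] with j hj
  intro y hyK
  obtain ⟨i, hit⟩ := mem_iUnion₂.mp (hcover hyK)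
  obtain ⟨hit, hyi⟩ := hit
  have hyb : y ∈ ball i.1 (r i.1 i.2) := hyi
  have hib : i.1 ∈ ball i.1 (r i.1 i.2) := mem_ball_self (hr0 i.1 i.2)
  have e1 : dist (h y) (h i.1) ≤ ε/4 := by
    calc dist (h y) (h i.1) ≤ L i.1 i.2 * dist y i.1 :=
          hdist i.1 (r i.1 i.2) (L i.1 i.2) (hsub i.1 i.2) (hfl i.1 i.2) y hyb i.1 hib
      _ ≤ L i.1 i.2 * r i.1 i.2 := by
          apply mul_le_mul_of_nonneg_left (le_of_lt (mem_ball.mp hyb)) (hL0 i.1 i.2)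
      _ ≤ ε/4 := hrL i.1 i.2
  have e2 : dist (h i.1) (f j i.1) < ε/4 := by rw [dist_comm]; exact hj i hit
  have e3 : dist (f j i.1) (f j y) ≤ ε/4 := by
    calc dist (f j i.1) (f j y) ≤ L i.1 i.2 * dist i.1 y := hfl i.1 i.2 j i.1 hib y hyb
      _ ≤ L i.1 i.2 * r i.1 i.2 := by
          apply mul_le_mul_of_nonneg_left _ (hL0 i.1 i.2)
          rw [dist_comm]
          exact le_of_lt (mem_ball.mp hyb)
      _ ≤ ε/4 := hrL i.1 i.2
  calc dist (h y) (f j y) ≤ dist (h y) (h i.1) + dist (h i.1) (f j i.1) + dist (f j i.1) (f j y) :=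
        dist_triangle4 _ _ _ _
    _ < ε := by linarith


lemma tendsto_comp_of_uniform {ι E : Type*} [NormedAddCommGroup E] {𝒰 : Filter ι}
    {f : ι → E → F} {h : E → F} {K : Set E} {b : E}
    (hK : TendstoUniformlyOn f h 𝒰 K) (hb : ContinuousAt h b) (y : ι → E)
    (hyK : ∀ᶠ j in 𝒰, y j ∈ K) (hyb : Tendsto y 𝒰 (𝓝 b)) :
    Tendsto (fun j => f j (y j)) 𝒰 (𝓝 (h b)) := by
  rw [Metric.tendsto_nhds]
  intro ε hε
  have h2 : ∀ᶠ j in 𝒰, ∀ x ∈ K, dist (h x) (f j x) < ε/2 :=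
    (Metric.tendstoUniformlyOn_iff.mp hK) (ε/2) (by positivity)
  have h3 : ∀ᶠ j in 𝒰, dist (h (y j)) (h b) < ε/2 :=
    (Metric.tendsto_nhds.mp (hb.tendsto.comp hyb)) (ε/2) (by positivity)
  filter_upwards [h2, h3, hyK] with j hj1 hj2 hjK
  calc dist (f j (y j)) (h b) ≤ dist (f j (y j)) (h (y j)) + dist (h (y j)) (h b) :=
        dist_triangle _ _ _
    _ < ε/2 + ε/2 := by
        have := hj1 (y j) hjK
        rw [dist_comm] at this
        exact add_lt_add this hj2
    _ = ε := by ring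

noncomputable def det2 (T : (ℂ × ℂ) →L[ℂ] (ℂ × ℂ)) : ℂ :=
  (T (1, 0)).1 * (T (0, 1)).2 - (T (0, 1)).1 * (T (1, 0)).2

lemma apply_eq (T : (ℂ × ℂ) →L[ℂ] (ℂ × ℂ)) (u : ℂ × ℂ) :
    T u = u.1 • T (1, 0) + u.2 • T (0, 1) := by
  have hu : u = u.1 • ((1:ℂ), (0:ℂ)) + u.2 • ((0:ℂ), (1:ℂ)) := by
    apply Prod.ext <;> simp
  calc T u = T (u.1 • ((1:ℂ), (0:ℂ)) + u.2 • ((0:ℂ), (1:ℂ))) := by rw [← hu]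
    _ = u.1 • T (1, 0) + u.2 • T (0, 1) := by rw [map_add, map_smul, map_smul]

lemma det2_comp (P Q : (ℂ × ℂ) →L[ℂ] (ℂ × ℂ)) :
    det2 (P.comp Q) = det2 P * det2 Q := by
  simp only [det2, ContinuousLinearMap.comp_apply, apply_eq P (Q (1,0)), apply_eq P (Q (0,1))]
  simp only [Prod.fst_add, Prod.snd_add, Prod.smul_fst, Prod.smul_snd, smul_eq_mul]
  ring

lemma det2_id : det2 (ContinuousLinearMap.id ℂ (ℂ × ℂ)) = 1 := by
  simp [det2]



/-- Transfer uniform convergence on compacts to slices. -/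
lemma sliceTLU {F : Type*} [UniformSpace F] {E : Type*} [NormedAddCommGroup E]
    [NormedSpace ℂ E] {ι : Type*} {𝒰 : Filter ι}
    {G : ι → E → F} {h' : E → F} {D : Set E}
    (hU : ∀ K' ⊆ D, IsCompact K' → TendstoUniformlyOn G h' 𝒰 K')
    (x w : E) {ρ : ℝ} (hmaps : ∀ ζ ∈ ball (0:ℂ) ρ, x + ζ • w ∈ D) :
    TendstoLocallyUniformlyOn (fun j (ζ : ℂ) => G j (x + ζ • w)) (fun ζ : ℂ => h' (x + ζ • w))
      𝒰 (ball 0 ρ) := by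
  rw [tendstoLocallyUniformlyOn_iff_forall_isCompact isOpen_ball]
  intro K' hK' hK'c
  set l : ℂ → E := fun ζ => x + ζ • w with hldef
  have hlc : Continuous l := by
    apply Continuous.add continuous_const
    exact (continuous_id.smul continuous_const)
  have himg : IsCompact (l '' K') := hK'c.image hlc
  have hsub : l '' K' ⊆ D := by
    rintro _ ⟨ζ, hζ, rfl⟩
    exact hmaps ζ (hK' hζ)
  have h1 := (hU _ hsub himg).comp l
  have h2 := h1.mono (fun ζ hζ => mem_preimage.mpr (mem_image_of_mem l hζ))
  simpa [Function.comp_def] using h2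

noncomputable def mk2 (u v : ℂ × ℂ) : (ℂ × ℂ) →L[ℂ] (ℂ × ℂ) :=
  (ContinuousLinearMap.fst ℂ ℂ ℂ).smulRight u + (ContinuousLinearMap.snd ℂ ℂ ℂ).smulRight v

lemma mk2_apply (u v x : ℂ × ℂ) : mk2 u v x = x.1 • u + x.2 • v := by
  simp [mk2]

lemma norm_fst_le' (x : ℂ × ℂ) : ‖x.1‖ ≤ ‖x‖ := norm_fst_le x
lemma norm_snd_le' (x : ℂ × ℂ) : ‖x.2‖ ≤ ‖x‖ := norm_snd_le x

lemma mk2_norm_le (u v : ℂ × ℂ) (x : ℂ × ℂ) : ‖mk2 u v x‖ ≤ (‖u‖ + ‖v‖) * ‖x‖ := by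
  rw [mk2_apply]
  calc ‖x.1 • u + x.2 • v‖ ≤ ‖x.1 • u‖ + ‖x.2 • v‖ := norm_add_le _ _
    _ = ‖x.1‖ * ‖u‖ + ‖x.2‖ * ‖v‖ := by rw [norm_smul, norm_smul]
    _ ≤ ‖x‖ * ‖u‖ + ‖x‖ * ‖v‖ := by
        apply add_le_add
        · exact mul_le_mul_of_nonneg_right (norm_fst_le x) (norm_nonneg u)
        · exact mul_le_mul_of_nonneg_right (norm_snd_le x) (norm_nonneg v)
    _ = (‖u‖ + ‖v‖) * ‖x‖ := by ring

lemma abmul (a b a' b' : ℂ) : ‖a * b - a' * b'‖ ≤ ‖a‖ * ‖b - b'‖ + ‖b'‖ * ‖a - a'‖ := by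
  have he : a * b - a' * b' = a * (b - b') + (a - a') * b' := by ring
  rw [he]
  calc ‖a * (b - b') + (a - a') * b'‖ ≤ ‖a * (b - b')‖ + ‖(a - a') * b'‖ := norm_add_le _ _
    _ = ‖a‖ * ‖b - b'‖ + ‖b'‖ * ‖a - a'‖ := by
        rw [norm_mul, norm_mul]; ring


end Stmt0Aux

open Stmt0Aux in
/-- If `D ⊂ ℂ²` is a bounded domain, `p ∈ D`, and `(φ j)` is a sequence of
automorphisms of `D` with `φ j p → p∞ ∈ ∂D`, and `p∞` has an open neighbourhood `U` such
that every holomorphic disc contained in `U ∩ ∂D` is constant, then `φ j` converges to the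
constant map `p∞` locally uniformly on `D`. -/
theorem stmt0
    (D : Set (ℂ × ℂ)) (hDne : D.Nonempty) (hDopen : IsOpen D) (hDconn : IsConnected D)
    (hDbd : Bornology.IsBounded D)
    (p : ℂ × ℂ) (hp : p ∈ D)
    (φ : ℕ → (ℂ × ℂ) → (ℂ × ℂ))
    (hφ : ∀ j, DifferentiableOn ℂ (φ j) D ∧ Set.MapsTo (φ j) D D ∧
      ∃ ψ : (ℂ × ℂ) → (ℂ × ℂ), DifferentiableOn ℂ ψ D ∧ Set.MapsTo ψ D D ∧
        Set.EqOn (ψ ∘ φ j) id D ∧ Set.EqOn (φ j ∘ ψ) id D)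
    (pinf : ℂ × ℂ) (hpinf : pinf ∈ frontier D)
    (hlim : Tendsto (fun j => φ j p) atTop (nhds pinf))
    (U : Set (ℂ × ℂ)) (hU : IsOpen U) (hpU : pinf ∈ U)
    (hdisc : ∀ f : ℂ → ℂ × ℂ, DifferentiableOn ℂ f (Metric.ball 0 1) →
      f '' (Metric.ball 0 1) ⊆ U ∩ frontier D →
      ∀ z ∈ Metric.ball (0 : ℂ) 1, ∀ w ∈ Metric.ball (0 : ℂ) 1, f z = f w) :
    TendstoLocallyUniformlyOn (fun j => φ j) (fun _ => pinf) atTop D := by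
  classical
  obtain ⟨M, hM⟩ : ∃ M, ∀ z ∈ D, ‖z‖ ≤ M := by
    obtain ⟨Mr, hMr⟩ := hDbd.subset_closedBall 0
    exact ⟨Mr, fun z hz => mem_closedBall_zero_iff.mp (hMr hz)⟩
  have hM0 : 0 ≤ M := le_trans (norm_nonneg p) (hM p hp)
  have hφd : ∀ j, DifferentiableOn ℂ (φ j) D := fun j => (hφ j).1
  have hφm : ∀ j, Set.MapsTo (φ j) D D := fun j => (hφ j).2.1
  choose ψ hψd hψm hψφ hφψ using fun j => (hφ j).2.2
  rw [tendstoLocallyUniformlyOn_iff_forall_isCompact hDopen]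
  by_contra hcon
  push_neg at hcon
  obtain ⟨K, hKD, hKc, hKn⟩ := hcon
  rw [Metric.tendstoUniformlyOn_iff] at hKn
  push_neg at hKn
  obtain ⟨ε, hε, hfreq⟩ := hKn
  set T : Set ℕ := {j | ∃ x ∈ K, ε ≤ dist pinf (φ j x)} with hTdef
  have hfreq2 : ∃ᶠ j in atTop, j ∈ T := by
    apply hfreq.mono
    intro j hj
    obtain ⟨x, hx, hxd⟩ := hj
    exact ⟨x, hx, hxd⟩
  haveI hNB : (atTop ⊓ 𝓟 T).NeBot := by
    rw [← Filter.frequently_mem_iff_neBot]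
    exact hfreq2
  set 𝒰 : Ultrafilter ℕ := Ultrafilter.of (atTop ⊓ 𝓟 T) with h𝒰def
  have h𝒰le : (𝒰 : Filter ℕ) ≤ atTop := le_trans (Ultrafilter.of_le _) inf_le_left
  have hT𝒰 : T ∈ 𝒰 := by
    have := le_trans (Ultrafilter.of_le (atTop ⊓ 𝓟 T)) inf_le_right
    exact Filter.le_principal_iff.mp this
  -- generic machinery for bounded holomorphic families on D
  have hball : ∀ x ∈ D, ∃ R, 0 < R ∧ ball x R ⊆ D := by
    intro x hx
    obtain ⟨R, hR, hsub⟩ := Metric.isOpen_iff.mp hDopen x hx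
    exact ⟨R, hR, hsub⟩
  have hfam : ∀ (G : ℕ → (ℂ × ℂ) → (ℂ × ℂ)), (∀ j, DifferentiableOn ℂ (G j) D) →
      (∀ j, Set.MapsTo (G j) D D) →
      ∃ h : (ℂ × ℂ) → (ℂ × ℂ), (∀ x ∈ D, ContinuousAt h x) ∧
        (∀ x ∈ D, Tendsto (fun j => G j x) (𝒰 : Filter ℕ) (𝓝 (h x))) ∧
        (∀ K' ⊆ D, IsCompact K' → TendstoUniformlyOn G h (𝒰 : Filter ℕ) K') := by
    intro G hGd hGm
    apply ulim
    · intro x hx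
      exact ⟨M, fun j => hM _ (hGm j hx)⟩
    · intro x hx
      obtain ⟨R, hR, hsub⟩ := hball x hx
      refine ⟨R/4, by positivity, (2*M+1)/(3*R/4), by positivity,
        fun y hy => hsub (ball_subset_ball (by linarith) hy), ?_⟩
      intro j y hy z hz
      have hzD : z ∈ ball x R := ball_subset_ball (by linarith) hz
      have hGb : DifferentiableOn ℂ (G j) (ball x R) := (hGd j).mono hsub
      have hGM : ∀ w ∈ ball x R, ‖G j w‖ ≤ M := fun w hw => hM _ (hGm j (hsub hw))
      have hzx : dist z x < R/4 := mem_ball.mp hz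
      have hyx : dist y x < R/4 := mem_ball.mp hy
      have hyz : dist y z < R - dist z x := by
        have := dist_triangle y x z
        rw [dist_comm x z] at this
        linarith
      have hle := lip_slice hGb hGM hzD hyz
      calc dist (G j y) (G j z) ≤ (2*M+1)/(R - dist z x) * dist y z := hle
        _ ≤ (2*M+1)/(3*R/4) * dist y z := by
            apply mul_le_mul_of_nonneg_right _ dist_nonneg
            apply div_le_div_of_nonneg_left (by linarith) (by linarith) (by linarith)
  obtain ⟨h, hhc, hht, hhu⟩ := hfam φ hφd hφm
  obtain ⟨g, hgc, hgt, hgu⟩ := hfam ψ hψd hψm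
  have hcl : ∀ x ∈ D, h x ∈ closure D := fun x hx =>
    mem_closure_of_tendsto (hht x hx) (Filter.Eventually.of_forall (fun j => hφm j hx))
  have hhp : h p = pinf := tendsto_nhds_unique (hht p hp) (hlim.mono_left h𝒰le)
  -- the bad point
  have hTne : T.Nonempty := Ultrafilter.nonempty_of_mem hT𝒰
  obtain ⟨j₀, hj₀⟩ := hTne
  obtain ⟨x₀K, hx₀K, -⟩ := hj₀
  have hxsel : ∀ j, ∃ x, x ∈ K ∧ (j ∈ T → ε ≤ dist pinf (φ j x)) := by
    intro j
    by_cases hj : j ∈ T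
    · obtain ⟨x, hx, hxd⟩ := hj
      exact ⟨x, hx, fun _ => hxd⟩
    · exact ⟨x₀K, hx₀K, fun hh => absurd hh hj⟩
  choose xs hxsK hxsT using hxsel
  obtain ⟨xbar, hxbarK, hxbar⟩ := hKc.ultrafilter_le_nhds (𝒰.map xs)
    (Filter.le_principal_iff.mpr (Filter.mem_map.mpr (Filter.univ_mem'
      (fun j => hxsK j))))
  have hxbart : Tendsto xs (𝒰 : Filter ℕ) (𝓝 xbar) := by
    rwa [Ultrafilter.coe_map] at hxbar
  have hbad : ε ≤ dist pinf (h xbar) := by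
    have hlim2 : Tendsto (fun j => φ j (xs j)) (𝒰 : Filter ℕ) (𝓝 (h xbar)) :=
      tendsto_comp_of_uniform (hhu K hKD hKc) (hhc xbar (hKD hxbarK)) xs
        (Filter.Eventually.of_forall hxsK) hxbart
    have hdistlim : Tendsto (fun j => dist pinf (φ j (xs j))) (𝒰 : Filter ℕ)
        (𝓝 (dist pinf (h xbar))) := tendsto_const_nhds.dist hlim2
    apply ge_of_tendsto hdistlim
    have hevT : ∀ᶠ j in (𝒰 : Filter ℕ), j ∈ T := hT𝒰
    filter_upwards [hevT] with j hj using hxsT j hj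
  
  -- uniform local bounds and Lipschitz estimates for directional derivatives
  have hDent : ∀ (G : ℕ → (ℂ × ℂ) → (ℂ × ℂ)), (∀ j, DifferentiableOn ℂ (G j) D) →
      (∀ j, Set.MapsTo (G j) D D) → ∀ (v : ℂ × ℂ), v ≠ 0 → ∀ x ∈ D,
      ∃ δ, 0 < δ ∧ ∃ L, 0 ≤ L ∧ ∃ C, 0 ≤ C ∧ ball x δ ⊆ D ∧
        (∀ j, ∀ y ∈ ball x δ, ‖fderiv ℂ (G j) y v‖ ≤ C) ∧
        (∀ j, ∀ y ∈ ball x δ, ∀ z ∈ ball x δ,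
          dist (fderiv ℂ (G j) y v) (fderiv ℂ (G j) z v) ≤ L * dist y z) := by
    intro G hGd hGm v hv x hx
    have hvn : 0 < ‖v‖ := norm_pos_iff.mpr hv
    obtain ⟨R, hR, hsub⟩ := hball x hx
    set B : ℝ := (2*M+1) * ‖v‖ / (R/2) with hBdef
    have hB : 0 < B := by positivity
    refine ⟨R/16, by positivity, (2*B+1)/(R/4), by positivity, B, hB.le,
      fun y hy => hsub (ball_subset_ball (by linarith) hy), ?_, ?_⟩
    · -- bound
      intro j y hy
      have hyR : y ∈ ball x R := ball_subset_ball (by linarith) hy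
      have hGb : DifferentiableOn ℂ (G j) (ball x R) := (hGd j).mono hsub
      have hGM : ∀ u ∈ ball x R, ‖G j u‖ ≤ M := fun u hu => hM _ (hGm j (hsub hu))
      have hdb := deriv_bound hGb hGM hyR v
      calc ‖fderiv ℂ (G j) y v‖ ≤ (2*M+1)*‖v‖/(R - dist y x) := hdb
        _ ≤ B := by
            rw [hBdef]
            apply div_le_div_of_nonneg_left (by positivity) (by positivity)
            have := mem_ball.mp hy
            linarith
    · -- Lipschitz
      intro j y hy z hz
      rcases eq_or_ne y z with rfl | hyz
      · simp
      set w : ℂ × ℂ := y - z with hwdef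
      have hwne : w ≠ 0 := sub_ne_zero.mpr hyz
      have hwn : 0 < ‖w‖ := norm_pos_iff.mpr hwne
      have hwlt : ‖w‖ < R/8 := by
        have h1 : dist y x < R/16 := mem_ball.mp hy
        have h2 : dist z x < R/16 := mem_ball.mp hz
        have h3 := dist_triangle y x z
        rw [dist_comm x z] at h3
        have h4 : dist y z < R/8 := by linarith
        rwa [dist_eq_norm] at h4
      set ρw : ℝ := (R/4) / ‖w‖ with hρwdef
      have hρwpos : 0 < ρw := by positivity
      have hρw1 : 1 < ρw := by
        rw [hρwdef, lt_div_iff₀ hwn, one_mul]; linarith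
      have hGb : DifferentiableOn ℂ (G j) (ball x R) := (hGd j).mono hsub
      have hGM : ∀ u ∈ ball x R, ‖G j u‖ ≤ M := fun u hu => hM _ (hGm j (hsub hu))
      have hsl : ∀ ζ ∈ ball (0:ℂ) ρw, z + ζ • w ∈ ball x (R - R/2) := by
        intro ζ hζ
        rw [mem_ball]
        have h2 : dist z x < R/16 := mem_ball.mp hz
        calc dist (z + ζ • w) x ≤ dist (z + ζ • w) z + dist z x := dist_triangle _ _ _
          _ = ‖ζ • w‖ + dist z x := by rw [dist_eq_norm, add_sub_cancel_left]
          _ < (R/4) + R/16 := by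
              apply add_lt_add _ h2
              rw [norm_smul]
              calc ‖ζ‖ * ‖w‖ < ρw * ‖w‖ :=
                    mul_lt_mul_of_pos_right (mem_ball_zero_iff.mp hζ) hwn
                _ = R/4 := by rw [hρwdef, div_mul_cancel₀ _ hwn.ne']
          _ ≤ R - R/2 := by linarith
      have hudiff : DifferentiableOn ℂ (fun ζ : ℂ => fderiv ℂ (G j) (z + ζ • w) v)
          (ball 0 ρw) := mixedHol (by positivity : (0:ℝ) < R/2) hGb hGM hM0 v hv z w hsl
      have hub : ∀ ζ ∈ ball (0:ℂ) ρw, ‖fderiv ℂ (G j) (z + ζ • w) v‖ ≤ B := by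
        intro ζ hζ
        have hpt : z + ζ • w ∈ ball x R := by
          have := hsl ζ hζ; rw [mem_ball] at this ⊢; linarith
        have hdb := deriv_bound hGb hGM hpt v
        calc ‖fderiv ℂ (G j) (z + ζ • w) v‖ ≤ (2*M+1)*‖v‖/(R - dist (z + ζ • w) x) := hdb
          _ ≤ B := by
              rw [hBdef]
              apply div_le_div_of_nonneg_left (by positivity) (by positivity)
              have := hsl ζ hζ; rw [mem_ball] at this; linarith
      have h0m : (0:ℂ) ∈ ball (0:ℂ) ρw := mem_ball_self hρwpos
      have h1m : dist (1:ℂ) (0:ℂ) < ρw - dist (0:ℂ) (0:ℂ) := by simpa using hρw1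
      have hlip1 := lip_slice hudiff hub h0m (y := (1:ℂ)) h1m
      have e1 : z + (1:ℂ) • w = y := by rw [hwdef]; simp
      have e0 : z + (0:ℂ) • w = z := by simp
      rw [e1, e0] at hlip1
      have hd10 : dist (1:ℂ) (0:ℂ) = 1 := by simp
      have hd00 : dist (0:ℂ) (0:ℂ) = 0 := by simp
      rw [hd10, hd00, mul_one, sub_zero] at hlip1
      calc dist (fderiv ℂ (G j) y v) (fderiv ℂ (G j) z v) ≤ (2*B+1)/ρw := hlip1
        _ = (2*B+1)/(R/4) * ‖w‖ := by
            rw [hρwdef, div_div_eq_mul_div, div_mul_eq_mul_div]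
        _ = (2*B+1)/(R/4) * dist y z := by rw [hwdef, dist_eq_norm]
  -- limits of the directional derivatives of φ
  have hfamD : ∀ (v : ℂ × ℂ), v ≠ 0 →
      ∃ a : (ℂ × ℂ) → (ℂ × ℂ), (∀ x ∈ D, ContinuousAt a x) ∧
        (∀ x ∈ D, Tendsto (fun j => fderiv ℂ (φ j) x v) (𝒰 : Filter ℕ) (𝓝 (a x))) ∧
        (∀ K' ⊆ D, IsCompact K' →
          TendstoUniformlyOn (fun j x => fderiv ℂ (φ j) x v) a (𝒰 : Filter ℕ) K') := by
    intro v hv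
    apply ulim
    · intro x hx
      obtain ⟨δ, hδ, L, hL, C, hC, hsub, hbd, hlip⟩ := hDent φ hφd hφm v hv x hx
      exact ⟨C, fun j => hbd j x (mem_ball_self hδ)⟩
    · intro x hx
      obtain ⟨δ, hδ, L, hL, C, hC, hsub, hbd, hlip⟩ := hDent φ hφd hφm v hv x hx
      exact ⟨δ, hδ, L, hL, hsub, hlip⟩
  obtain ⟨a1, ha1c, ha1t, ha1u⟩ := hfamD ((1:ℂ), (0:ℂ)) (by simp [Prod.ext_iff])
  obtain ⟨a2, ha2c, ha2t, ha2u⟩ := hfamD ((0:ℂ), (1:ℂ)) (by simp [Prod.ext_iff])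
  -- limits of the Jacobian determinants
  have hfamJ : ∀ (G : ℕ → (ℂ × ℂ) → (ℂ × ℂ)), (∀ j, DifferentiableOn ℂ (G j) D) →
      (∀ j, Set.MapsTo (G j) D D) →
      ∃ JG : (ℂ × ℂ) → ℂ, (∀ x ∈ D, ContinuousAt JG x) ∧
        (∀ x ∈ D, Tendsto (fun j => det2 (fderiv ℂ (G j) x)) (𝒰 : Filter ℕ) (𝓝 (JG x))) ∧
        (∀ K' ⊆ D, IsCompact K' →
          TendstoUniformlyOn (fun j x => det2 (fderiv ℂ (G j) x)) JG (𝒰 : Filter ℕ) K') := by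
    intro G hGd hGm
    have he1 : ((1:ℂ), (0:ℂ)) ≠ (0 : ℂ × ℂ) := by simp [Prod.ext_iff]
    have he2 : ((0:ℂ), (1:ℂ)) ≠ (0 : ℂ × ℂ) := by simp [Prod.ext_iff]
    apply ulim
    · intro x hx
      obtain ⟨δ1, hδ1, L1, hL1, C1, hC1, hsub1, hbd1, hlip1⟩ := hDent G hGd hGm _ he1 x hx
      obtain ⟨δ2, hδ2, L2, hL2, C2, hC2, hsub2, hbd2, hlip2⟩ := hDent G hGd hGm _ he2 x hx
      refine ⟨2*C1*C2, fun j => ?_⟩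
      have h1 := hbd1 j x (mem_ball_self hδ1)
      have h2 := hbd2 j x (mem_ball_self hδ2)
      set T := fderiv ℂ (G j) x
      calc ‖det2 T‖ ≤ ‖(T ((1:ℂ),(0:ℂ))).1 * (T ((0:ℂ),(1:ℂ))).2‖ +
            ‖(T ((0:ℂ),(1:ℂ))).1 * (T ((1:ℂ),(0:ℂ))).2‖ := norm_sub_le _ _
        _ ≤ C1*C2 + C2*C1 := by
            apply add_le_add
            · rw [norm_mul]
              apply mul_le_mul (le_trans (norm_fst_le _) h1) (le_trans (norm_snd_le _) h2)
                (norm_nonneg _) hC1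
            · rw [norm_mul]
              apply mul_le_mul (le_trans (norm_fst_le _) h2) (le_trans (norm_snd_le _) h1)
                (norm_nonneg _) hC2
        _ = 2*C1*C2 := by ring
    · intro x hx
      obtain ⟨δ1, hδ1, L1, hL1, C1, hC1, hsub1, hbd1, hlip1⟩ := hDent G hGd hGm _ he1 x hx
      obtain ⟨δ2, hδ2, L2, hL2, C2, hC2, hsub2, hbd2, hlip2⟩ := hDent G hGd hGm _ he2 x hx
      refine ⟨min δ1 δ2, by positivity, 2*(C1*L2 + C2*L1), by positivity,
        fun y hy => hsub1 (mem_of_mem_of_subset hy (ball_subset_ball (min_le_left _ _))), ?_⟩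
      intro j y hy z hz
      have hy1 : y ∈ ball x δ1 := mem_of_mem_of_subset hy (ball_subset_ball (min_le_left _ _))
      have hy2 : y ∈ ball x δ2 := mem_of_mem_of_subset hy (ball_subset_ball (min_le_right _ _))
      have hz1 : z ∈ ball x δ1 := mem_of_mem_of_subset hz (ball_subset_ball (min_le_left _ _))
      have hz2 : z ∈ ball x δ2 := mem_of_mem_of_subset hz (ball_subset_ball (min_le_right _ _))
      set Ty := fderiv ℂ (G j) y
      set Tz := fderiv ℂ (G j) z
      set d := dist y z with hddef
      have hd0 : 0 ≤ d := dist_nonneg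
      -- entry estimates
      have k11 : ‖(Ty ((1:ℂ),(0:ℂ))).1 - (Tz ((1:ℂ),(0:ℂ))).1‖ ≤ L1 * d := by
        calc ‖(Ty ((1:ℂ),(0:ℂ))).1 - (Tz ((1:ℂ),(0:ℂ))).1‖
            ≤ ‖Ty ((1:ℂ),(0:ℂ)) - Tz ((1:ℂ),(0:ℂ))‖ := norm_fst_le (Ty ((1:ℂ),(0:ℂ)) - Tz ((1:ℂ),(0:ℂ)))
          _ ≤ L1 * d := by
              rw [← dist_eq_norm]
              exact hlip1 j y hy1 z hz1
      have k12 : ‖(Ty ((1:ℂ),(0:ℂ))).2 - (Tz ((1:ℂ),(0:ℂ))).2‖ ≤ L1 * d := by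
        calc ‖(Ty ((1:ℂ),(0:ℂ))).2 - (Tz ((1:ℂ),(0:ℂ))).2‖
            ≤ ‖Ty ((1:ℂ),(0:ℂ)) - Tz ((1:ℂ),(0:ℂ))‖ := norm_snd_le (Ty ((1:ℂ),(0:ℂ)) - Tz ((1:ℂ),(0:ℂ)))
          _ ≤ L1 * d := by
              rw [← dist_eq_norm]
              exact hlip1 j y hy1 z hz1
      have k21 : ‖(Ty ((0:ℂ),(1:ℂ))).1 - (Tz ((0:ℂ),(1:ℂ))).1‖ ≤ L2 * d := by
        calc ‖(Ty ((0:ℂ),(1:ℂ))).1 - (Tz ((0:ℂ),(1:ℂ))).1‖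
            ≤ ‖Ty ((0:ℂ),(1:ℂ)) - Tz ((0:ℂ),(1:ℂ))‖ := norm_fst_le (Ty ((0:ℂ),(1:ℂ)) - Tz ((0:ℂ),(1:ℂ)))
          _ ≤ L2 * d := by
              rw [← dist_eq_norm]
              exact hlip2 j y hy2 z hz2
      have k22 : ‖(Ty ((0:ℂ),(1:ℂ))).2 - (Tz ((0:ℂ),(1:ℂ))).2‖ ≤ L2 * d := by
        calc ‖(Ty ((0:ℂ),(1:ℂ))).2 - (Tz ((0:ℂ),(1:ℂ))).2‖
            ≤ ‖Ty ((0:ℂ),(1:ℂ)) - Tz ((0:ℂ),(1:ℂ))‖ := norm_snd_le (Ty ((0:ℂ),(1:ℂ)) - Tz ((0:ℂ),(1:ℂ)))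
          _ ≤ L2 * d := by
              rw [← dist_eq_norm]
              exact hlip2 j y hy2 z hz2
      have b11y : ‖(Ty ((1:ℂ),(0:ℂ))).1‖ ≤ C1 :=
        le_trans (norm_fst_le _) (hbd1 j y hy1)
      have b12y : ‖(Ty ((1:ℂ),(0:ℂ))).2‖ ≤ C1 :=
        le_trans (norm_snd_le _) (hbd1 j y hy1)
      have b21z : ‖(Tz ((0:ℂ),(1:ℂ))).1‖ ≤ C2 :=
        le_trans (norm_fst_le _) (hbd2 j z hz2)
      have b22z : ‖(Tz ((0:ℂ),(1:ℂ))).2‖ ≤ C2 :=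
        le_trans (norm_snd_le _) (hbd2 j z hz2)
      have b21y : ‖(Ty ((0:ℂ),(1:ℂ))).1‖ ≤ C2 :=
        le_trans (norm_fst_le _) (hbd2 j y hy2)
      have b12z : ‖(Tz ((1:ℂ),(0:ℂ))).2‖ ≤ C1 :=
        le_trans (norm_snd_le _) (hbd1 j z hz1)
      rw [dist_eq_norm]
      have hsplit : det2 Ty - det2 Tz =
          ((Ty ((1:ℂ),(0:ℂ))).1 * (Ty ((0:ℂ),(1:ℂ))).2 -
            (Tz ((1:ℂ),(0:ℂ))).1 * (Tz ((0:ℂ),(1:ℂ))).2) -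
          ((Ty ((0:ℂ),(1:ℂ))).1 * (Ty ((1:ℂ),(0:ℂ))).2 -
            (Tz ((0:ℂ),(1:ℂ))).1 * (Tz ((1:ℂ),(0:ℂ))).2) := by
        simp only [det2]; ring
      rw [hsplit]
      have t1 := abmul ((Ty ((1:ℂ),(0:ℂ))).1) ((Ty ((0:ℂ),(1:ℂ))).2)
        ((Tz ((1:ℂ),(0:ℂ))).1) ((Tz ((0:ℂ),(1:ℂ))).2)
      have t2 := abmul ((Ty ((0:ℂ),(1:ℂ))).1) ((Ty ((1:ℂ),(0:ℂ))).2)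
        ((Tz ((0:ℂ),(1:ℂ))).1) ((Tz ((1:ℂ),(0:ℂ))).2)
      have e1b : ‖(Ty ((1:ℂ),(0:ℂ))).1 * (Ty ((0:ℂ),(1:ℂ))).2 -
          (Tz ((1:ℂ),(0:ℂ))).1 * (Tz ((0:ℂ),(1:ℂ))).2‖ ≤ C1*(L2*d) + C2*(L1*d) := by
        refine le_trans t1 (add_le_add ?_ ?_)
        · exact mul_le_mul b11y k22 (norm_nonneg _) hC1
        · exact mul_le_mul b22z k11 (norm_nonneg _) hC2
      have e2b : ‖(Ty ((0:ℂ),(1:ℂ))).1 * (Ty ((1:ℂ),(0:ℂ))).2 -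
          (Tz ((0:ℂ),(1:ℂ))).1 * (Tz ((1:ℂ),(0:ℂ))).2‖ ≤ C2*(L1*d) + C1*(L2*d) := by
        refine le_trans t2 (add_le_add ?_ ?_)
        · exact mul_le_mul b21y k12 (norm_nonneg _) hC2
        · exact mul_le_mul b12z k21 (norm_nonneg _) hC1
      calc ‖_ - _‖ ≤ C1*(L2*d) + C2*(L1*d) + (C2*(L1*d) + C1*(L2*d)) :=
            le_trans (norm_sub_le _ _) (add_le_add e1b e2b)
        _ = 2*(C1*L2 + C2*L1) * d := by ring
  obtain ⟨J, hJc, hJt, hJu⟩ := hfamJ φ hφd hφm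
  obtain ⟨Jg, hJgc, hJgt, hJgu⟩ := hfamJ ψ hψd hψm
  -- chain rule: the Jacobians of the automorphisms never vanish
  have hdet1 : ∀ j, ∀ x ∈ D, det2 (fderiv ℂ (ψ j) (φ j x)) * det2 (fderiv ℂ (φ j) x) = 1 := by
    intro j x hx
    have hdφ : DifferentiableAt ℂ (φ j) x := (hφd j).differentiableAt (hDopen.mem_nhds hx)
    have hdψ : DifferentiableAt ℂ (ψ j) (φ j x) :=
      (hψd j).differentiableAt (hDopen.mem_nhds (hφm j hx))
    have hid : (ψ j ∘ φ j) =ᶠ[𝓝 x] id :=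
      Filter.eventuallyEq_of_mem (hDopen.mem_nhds hx) (hψφ j)
    have h1 : fderiv ℂ (ψ j ∘ φ j) x = fderiv ℂ (id : (ℂ × ℂ) → ℂ × ℂ) x := hid.fderiv_eq
    rw [fderiv_comp x hdψ hdφ, fderiv_id] at h1
    have := congrArg det2 h1
    rwa [det2_comp, det2_id] at this
  have hJjne : ∀ j, ∀ x ∈ D, det2 (fderiv ℂ (φ j) x) ≠ 0 := by
    intro j x hx h0
    have := hdet1 j x hx
    rw [h0, mul_zero] at this
    exact zero_ne_one this
  
  -- MAIN CLAIM: the limit maps D into the frontier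
  have hAempty : ∀ x₁ ∈ D, h x₁ ∉ D := by
    intro x₁ hx₁ hbmem
    -- (i) J x₁ ≠ 0 via the chain rule in the limit
    obtain ⟨rb, hrb, hrbD⟩ := hball (h x₁) hbmem
    have hKb : closedBall (h x₁) (rb/2) ⊆ D :=
      subset_trans (closedBall_subset_ball (by linarith)) hrbD
    have hKbc : IsCompact (closedBall (h x₁) (rb/2)) := isCompact_closedBall _ _
    have htb : Tendsto (fun j => φ j x₁) (𝒰 : Filter ℕ) (𝓝 (h x₁)) := hht x₁ hx₁
    have hevb : ∀ᶠ j in (𝒰 : Filter ℕ), φ j x₁ ∈ closedBall (h x₁) (rb/2) :=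
      htb (closedBall_mem_nhds _ (by positivity))
    have hlim1 : Tendsto (fun j => det2 (fderiv ℂ (ψ j) (φ j x₁))) (𝒰 : Filter ℕ)
        (𝓝 (Jg (h x₁))) :=
      tendsto_comp_of_uniform (hJgu _ hKb hKbc) (hJgc _ hbmem) _ hevb htb
    have hlim3 : Tendsto (fun j => det2 (fderiv ℂ (ψ j) (φ j x₁)) * det2 (fderiv ℂ (φ j) x₁))
        (𝒰 : Filter ℕ) (𝓝 (Jg (h x₁) * J x₁)) := hlim1.mul (hJt x₁ hx₁)
    have hone : Jg (h x₁) * J x₁ = 1 := by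
      have hconst : (fun j => det2 (fderiv ℂ (ψ j) (φ j x₁)) * det2 (fderiv ℂ (φ j) x₁))
          = fun _ => (1:ℂ) := funext fun j => hdet1 j x₁ hx₁
      rw [hconst] at hlim3
      exact tendsto_nhds_unique hlim3 tendsto_const_nhds
    have hJx₁ : J x₁ ≠ 0 := by
      intro h0
      rw [h0, mul_zero] at hone
      exact zero_ne_one hone
    -- (ii) Hurwitz: J never vanishes on D
    have hZball : ∀ x₀ ∈ D, J x₀ = 0 → ∃ R, 0 < R ∧ ball x₀ R ⊆ D ∧
        ∀ y ∈ ball x₀ (R/2), J y = 0 := by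
      intro x₀ hx₀ hJ0
      obtain ⟨R, hR, hsub⟩ := hball x₀ hx₀
      refine ⟨R, hR, hsub, ?_⟩
      intro y hy
      rcases eq_or_ne y x₀ with rfl | hne
      · exact hJ0
      set w : ℂ × ℂ := y - x₀ with hwdef
      have hwne : w ≠ 0 := sub_ne_zero.mpr hne
      have hwn : 0 < ‖w‖ := norm_pos_iff.mpr hwne
      have hwlt : ‖w‖ < R/2 := by
        have := mem_ball.mp hy
        rwa [dist_eq_norm] at this
      set ρw : ℝ := (3*R/4) / ‖w‖ with hρwdef
      have hρw1 : 1 < ρw := by rw [hρwdef, lt_div_iff₀ hwn, one_mul]; linarith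
      have hρwpos : 0 < ρw := by positivity
      have hslin : ∀ ζ ∈ ball (0:ℂ) ρw, x₀ + ζ • w ∈ ball x₀ (R - R/4) := by
        intro ζ hζ
        rw [mem_ball]
        calc dist (x₀ + ζ • w) x₀ = ‖ζ • w‖ := by rw [dist_eq_norm, add_sub_cancel_left]
          _ < ρw * ‖w‖ := by
              rw [norm_smul]
              exact mul_lt_mul_of_pos_right (mem_ball_zero_iff.mp hζ) hwn
          _ = 3*R/4 := by rw [hρwdef, div_mul_cancel₀ _ hwn.ne']
          _ ≤ R - R/4 := by linarith
      have hsubD : ∀ ζ ∈ ball (0:ℂ) ρw, x₀ + ζ • w ∈ D := by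
        intro ζ hζ
        apply hsub
        have := hslin ζ hζ
        rw [mem_ball] at this ⊢
        linarith
      have hcd : ∀ j, DifferentiableOn ℂ
          (fun ζ : ℂ => det2 (fderiv ℂ (φ j) (x₀ + ζ • w))) (ball 0 ρw) := by
        intro j
        have hGb : DifferentiableOn ℂ (φ j) (ball x₀ R) := (hφd j).mono hsub
        have hGM : ∀ u ∈ ball x₀ R, ‖φ j u‖ ≤ M := fun u hu => hM _ (hφm j (hsub hu))
        have hd1 := mixedHol (show (0:ℝ) < R/4 by positivity) hGb hGM hM0
          ((1:ℂ),(0:ℂ)) (by simp [Prod.ext_iff]) x₀ w hslin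
        have hd2 := mixedHol (show (0:ℝ) < R/4 by positivity) hGb hGM hM0
          ((0:ℂ),(1:ℂ)) (by simp [Prod.ext_iff]) x₀ w hslin
        exact ((hd1.fst.mul hd2.snd).sub (hd2.fst.mul hd1.snd))
      have hcne : ∀ j, ∀ ζ ∈ ball (0:ℂ) ρw, det2 (fderiv ℂ (φ j) (x₀ + ζ • w)) ≠ 0 :=
        fun j ζ hζ => hJjne j _ (hsubD ζ hζ)
      have hcconv : TendstoLocallyUniformlyOn
          (fun j (ζ : ℂ) => det2 (fderiv ℂ (φ j) (x₀ + ζ • w)))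
          (fun ζ : ℂ => J (x₀ + ζ • w)) (𝒰 : Filter ℕ) (ball 0 ρw) :=
        sliceTLU hJu x₀ w hsubD
      have h00 : J (x₀ + (0:ℂ) • w) = 0 := by simpa using hJ0
      have hval := hurwitz1 hρwpos hcd hcne hcconv h00 1 (by
        rw [mem_ball_zero_iff]
        simpa using hρw1)
      have : x₀ + (1:ℂ) • w = y := by rw [hwdef]; simp
      rwa [this] at hval
    have hJnz : ∀ x ∈ D, J x ≠ 0 := by
      by_contra hcon2
      push_neg at hcon2
      obtain ⟨x₀, hx₀, hJ0⟩ := hcon2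
      set Zs : Set (ℂ × ℂ) := {x | x ∈ D ∧ J x = 0} with hZsdef
      set Us : Set (ℂ × ℂ) := {x | x ∈ D ∧ J x ≠ 0} with hUsdef
      have hZopen : IsOpen Zs := by
        rw [Metric.isOpen_iff]
        rintro x ⟨hxD, hx0⟩
        obtain ⟨R, hR, hsubD, hprop⟩ := hZball x hxD hx0
        refine ⟨R/2, by positivity, ?_⟩
        intro y hy
        exact ⟨hsubD (ball_subset_ball (by linarith) hy), hprop y hy⟩
      have hUopen : IsOpen Us := by
        rw [Metric.isOpen_iff]
        rintro x ⟨hxD, hx0⟩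
        have h1 : ∀ᶠ y in 𝓝 x, J y ≠ 0 := (hJc x hxD).eventually_ne hx0
        have h2 : ∀ᶠ y in 𝓝 x, y ∈ D := hDopen.mem_nhds hxD
        obtain ⟨δ', hδ', hb⟩ := Metric.eventually_nhds_iff_ball.mp (h1.and h2)
        exact ⟨δ', hδ', fun y hy => ⟨(hb y hy).2, (hb y hy).1⟩⟩
      have hDcover : D ⊆ Us ∪ Zs := by
        intro x hx
        by_cases hJx : J x = 0
        · exact Or.inr ⟨hx, hJx⟩
        · exact Or.inl ⟨hx, hJx⟩
      have hres := hDconn.isPreconnected Us Zs hUopen hZopen hDcover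
        ⟨x₁, hx₁, hx₁, hJx₁⟩ ⟨x₀, hx₀, hx₀, hJ0⟩
      obtain ⟨y, hyD, hy1, hy2⟩ := hres
      exact hy1.2 hy2.2
    -- (iii) quantitative surjectivity near p: contradiction with pinf ∈ frontier D
    have hJp : J p ≠ 0 := hJnz p hp
    have hJpeq : J p = (a1 p).1 * (a2 p).2 - (a2 p).1 * (a1 p).2 := by
      have h1 := hJt p hp
      have t1 := ha1t p hp
      have t2 := ha2t p hp
      have c1 : Tendsto (fun j => (fderiv ℂ (φ j) p ((1:ℂ),(0:ℂ))).1) (𝒰 : Filter ℕ)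
          (𝓝 (a1 p).1) := (continuous_fst.tendsto _).comp t1
      have c2 : Tendsto (fun j => (fderiv ℂ (φ j) p ((1:ℂ),(0:ℂ))).2) (𝒰 : Filter ℕ)
          (𝓝 (a1 p).2) := (continuous_snd.tendsto _).comp t1
      have c3 : Tendsto (fun j => (fderiv ℂ (φ j) p ((0:ℂ),(1:ℂ))).1) (𝒰 : Filter ℕ)
          (𝓝 (a2 p).1) := (continuous_fst.tendsto _).comp t2
      have c4 : Tendsto (fun j => (fderiv ℂ (φ j) p ((0:ℂ),(1:ℂ))).2) (𝒰 : Filter ℕ)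
          (𝓝 (a2 p).2) := (continuous_snd.tendsto _).comp t2
      exact tendsto_nhds_unique h1 ((c1.mul c4).sub (c3.mul c2))
    set A1 : ℂ × ℂ := a1 p with hA1def
    set A2 : ℂ × ℂ := a2 p with hA2def
    set dA : ℂ := A1.1 * A2.2 - A2.1 * A1.2 with hdAdef
    have hdA : dA ≠ 0 := by
      have h0 := hJp
      rw [hJpeq] at h0
      exact h0
    set Tm : (ℂ × ℂ) →L[ℂ] ℂ × ℂ := mk2 A1 A2 with hTmdef
    set B1 : ℂ × ℂ := (A2.2/dA, -A1.2/dA) with hB1def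
    set B2 : ℂ × ℂ := (-A2.1/dA, A1.1/dA) with hB2def
    set Tm' : (ℂ × ℂ) →L[ℂ] ℂ × ℂ := mk2 B1 B2 with hTm'def
    have hTT' : ∀ u : ℂ × ℂ, Tm' (Tm u) = u := by
      intro u
      rw [hTm'def, hTmdef, mk2_apply, mk2_apply]
      apply Prod.ext
      · simp only [Prod.fst_add, Prod.smul_fst, Prod.snd_add, Prod.smul_snd, smul_eq_mul,
          mk2_apply, hB1def, hB2def]
        field_simp
        ring
      · simp only [Prod.fst_add, Prod.smul_fst, Prod.snd_add, Prod.smul_snd, smul_eq_mul,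
          mk2_apply, hB1def, hB2def]
        field_simp
        ring
    have hT'T : ∀ u : ℂ × ℂ, Tm (Tm' u) = u := by
      intro u
      rw [hTm'def, hTmdef, mk2_apply, mk2_apply]
      apply Prod.ext
      · simp only [Prod.fst_add, Prod.smul_fst, Prod.snd_add, Prod.smul_snd, smul_eq_mul,
          mk2_apply, hB1def, hB2def]
        field_simp
        ring
      · simp only [Prod.fst_add, Prod.smul_fst, Prod.snd_add, Prod.smul_snd, smul_eq_mul,
          mk2_apply, hB1def, hB2def]
        field_simp
        ring
    set κ : ℝ := ‖Tm'‖ + 1 with hκdef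
    have hκ : 0 < κ := by positivity
    set ε₀ : ℝ := 1/(2*κ) with hε₀def
    have hε₀ : 0 < ε₀ := by positivity
    obtain ⟨R, hR, hsubR⟩ := hball p hp
    obtain ⟨δ1, hδ1, hcball1⟩ := Metric.continuousAt_iff.mp (ha1c p hp) (ε₀/8) (by positivity)
    obtain ⟨δ2, hδ2, hcball2⟩ := Metric.continuousAt_iff.mp (ha2c p hp) (ε₀/8) (by positivity)
    set r : ℝ := min (R/2) (min (δ1/2) (δ2/2)) with hrdef
    have hr : 0 < r := by positivity
    have hrD : closedBall p r ⊆ D := by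
      intro z hz
      apply hsubR
      rw [mem_closedBall] at hz
      rw [mem_ball]
      calc dist z p ≤ r := hz
        _ ≤ R/2 := min_le_left _ _
        _ < R := by linarith
    have hev1 : ∀ᶠ j in (𝒰 : Filter ℕ), ∀ y ∈ closedBall p r,
        dist (a1 y) (fderiv ℂ (φ j) y ((1:ℂ),(0:ℂ))) < ε₀/8 :=
      Metric.tendstoUniformlyOn_iff.mp (ha1u _ hrD (isCompact_closedBall _ _)) _ (by positivity)
    have hev2 : ∀ᶠ j in (𝒰 : Filter ℕ), ∀ y ∈ closedBall p r,
        dist (a2 y) (fderiv ℂ (φ j) y ((0:ℂ),(1:ℂ))) < ε₀/8 :=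
      Metric.tendstoUniformlyOn_iff.mp (ha2u _ hrD (isCompact_closedBall _ _)) _ (by positivity)
    have happrox : ∀ᶠ j in (𝒰 : Filter ℕ), ∀ x ∈ closedBall p r, ∀ z ∈ closedBall p r,
        ‖(φ j x - Tm x) - (φ j z - Tm z)‖ ≤ (ε₀/2) * ‖x - z‖ := by
      filter_upwards [hev1, hev2] with j hj1 hj2
      intro x hxr z hzr
      have hder : ∀ y ∈ closedBall p r, HasFDerivWithinAt (fun x => φ j x - Tm x)
          (fderiv ℂ (φ j) y - Tm) (closedBall p r) y := by
        intro y hy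
        have hdy : DifferentiableAt ℂ (φ j) y :=
          (hφd j).differentiableAt (hDopen.mem_nhds (hrD hy))
        exact (hdy.hasFDerivAt.sub (Tm.hasFDerivAt (x := y))).hasFDerivWithinAt
      have hbound : ∀ y ∈ closedBall p r, ‖fderiv ℂ (φ j) y - Tm‖ ≤ ε₀/2 := by
        intro y hy
        apply ContinuousLinearMap.opNorm_le_bound _ (by positivity)
        intro u
        have hexp : (fderiv ℂ (φ j) y - Tm) u =
            u.1 • (fderiv ℂ (φ j) y ((1:ℂ),(0:ℂ)) - A1) +
            u.2 • (fderiv ℂ (φ j) y ((0:ℂ),(1:ℂ)) - A2) := by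
          rw [ContinuousLinearMap.sub_apply, apply_eq (fderiv ℂ (φ j) y) u, hTmdef, mk2_apply]
          simp only [smul_sub]
          abel
        have hyp : dist y p < δ1 ∧ dist y p < δ2 := by
          rw [mem_closedBall] at hy
          constructor
          · calc dist y p ≤ r := hy
              _ ≤ δ1/2 := le_trans (min_le_right _ _) (min_le_left _ _)
              _ < δ1 := by linarith
          · calc dist y p ≤ r := hy
              _ ≤ δ2/2 := le_trans (min_le_right _ _) (min_le_right _ _)
              _ < δ2 := by linarith
        have n1 : ‖fderiv ℂ (φ j) y ((1:ℂ),(0:ℂ)) - A1‖ ≤ ε₀/4 := by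
          have d1 := hj1 y hy
          have d2 := hcball1 hyp.1
          calc ‖fderiv ℂ (φ j) y ((1:ℂ),(0:ℂ)) - A1‖
              ≤ ‖fderiv ℂ (φ j) y ((1:ℂ),(0:ℂ)) - a1 y‖ + ‖a1 y - A1‖ := by
                have : fderiv ℂ (φ j) y ((1:ℂ),(0:ℂ)) - A1 =
                    (fderiv ℂ (φ j) y ((1:ℂ),(0:ℂ)) - a1 y) + (a1 y - A1) := by abel
                rw [this]
                exact norm_add_le _ _
            _ ≤ ε₀/8 + ε₀/8 := by
                apply add_le_add
                · rw [← dist_eq_norm, dist_comm]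
                  exact le_of_lt d1
                · rw [← dist_eq_norm]
                  exact le_of_lt d2
            _ = ε₀/4 := by ring
        have n2 : ‖fderiv ℂ (φ j) y ((0:ℂ),(1:ℂ)) - A2‖ ≤ ε₀/4 := by
          have d1 := hj2 y hy
          have d2 := hcball2 hyp.2
          calc ‖fderiv ℂ (φ j) y ((0:ℂ),(1:ℂ)) - A2‖
              ≤ ‖fderiv ℂ (φ j) y ((0:ℂ),(1:ℂ)) - a2 y‖ + ‖a2 y - A2‖ := by
                have : fderiv ℂ (φ j) y ((0:ℂ),(1:ℂ)) - A2 =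
                    (fderiv ℂ (φ j) y ((0:ℂ),(1:ℂ)) - a2 y) + (a2 y - A2) := by abel
                rw [this]
                exact norm_add_le _ _
            _ ≤ ε₀/8 + ε₀/8 := by
                apply add_le_add
                · rw [← dist_eq_norm, dist_comm]
                  exact le_of_lt d1
                · rw [← dist_eq_norm]
                  exact le_of_lt d2
            _ = ε₀/4 := by ring
        rw [hexp]
        calc ‖u.1 • (fderiv ℂ (φ j) y ((1:ℂ),(0:ℂ)) - A1) +
              u.2 • (fderiv ℂ (φ j) y ((0:ℂ),(1:ℂ)) - A2)‖
            ≤ ‖u.1‖ * ‖fderiv ℂ (φ j) y ((1:ℂ),(0:ℂ)) - A1‖ +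
              ‖u.2‖ * ‖fderiv ℂ (φ j) y ((0:ℂ),(1:ℂ)) - A2‖ := by
              refine le_trans (norm_add_le _ _) ?_
              rw [norm_smul, norm_smul]
          _ ≤ ‖u‖ * (ε₀/4) + ‖u‖ * (ε₀/4) := by
              apply add_le_add
              · exact mul_le_mul (norm_fst_le u) n1 (norm_nonneg _) (norm_nonneg _)
              · exact mul_le_mul (norm_snd_le u) n2 (norm_nonneg _) (norm_nonneg _)
          _ = ε₀/2 * ‖u‖ := by ring
      have := Convex.norm_image_sub_le_of_norm_hasFDerivWithin_le hder hbound
        (convex_closedBall p r) hzr hxr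
      exact this
    set ρ₀ : ℝ := r/(8*κ) with hρ₀def
    have hρ₀ : 0 < ρ₀ := by positivity
    have hev3 : ∀ᶠ j in (𝒰 : Filter ℕ), dist (φ j p) pinf < ρ₀ :=
      Metric.tendsto_nhds.mp (hlim.mono_left h𝒰le) ρ₀ hρ₀
    obtain ⟨j, hjapx, hjp⟩ := (happrox.and hev3).exists
    have hballD : closedBall pinf ρ₀ ⊆ D := by
      intro y hy
      set Gm : (ℂ × ℂ) → ℂ × ℂ := fun x => x - Tm' (φ j x - y) with hGmdef
      have hGdiff : ∀ x ∈ closedBall p r, ∀ z ∈ closedBall p r,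
          Gm x - Gm z = -(Tm' ((φ j x - Tm x) - (φ j z - Tm z))) := by
        intro x _ z _
        rw [hGmdef]
        have hTm'lin : Tm' ((φ j x - Tm x) - (φ j z - Tm z))
            = Tm' (φ j x - y) - Tm' (φ j z - y) - (x - z) := by
          have he : (φ j x - Tm x) - (φ j z - Tm z)
              = ((φ j x - y) - (φ j z - y)) - (Tm x - Tm z) := by abel
          rw [he]
          simp only [map_sub, hTT']
        rw [hTm'lin]
        show x - Tm' (φ j x - y) - (z - Tm' (φ j z - y)) = -(Tm' (φ j x - y) - Tm' (φ j z - y) - (x - z))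
        abel
      have hGlip : ∀ x ∈ closedBall p r, ∀ z ∈ closedBall p r,
          ‖Gm x - Gm z‖ ≤ (1/2) * ‖x - z‖ := by
        intro x hxr z hzr
        rw [hGdiff x hxr z hzr, norm_neg]
        calc ‖Tm' ((φ j x - Tm x) - (φ j z - Tm z))‖
            ≤ ‖Tm'‖ * ‖(φ j x - Tm x) - (φ j z - Tm z)‖ := Tm'.le_opNorm _
          _ ≤ ‖Tm'‖ * ((ε₀/2) * ‖x - z‖) := by
              apply mul_le_mul_of_nonneg_left (hjapx x hxr z hzr) (norm_nonneg _)
          _ ≤ κ * ((ε₀/2) * ‖x - z‖) := by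
              apply mul_le_mul_of_nonneg_right _ (by positivity)
              rw [hκdef]; linarith
          _ = (κ * ε₀) / 2 * ‖x - z‖ := by ring
          _ = (1/2 : ℝ)/2 * ‖x - z‖ := by
              congr 2
              rw [hε₀def]
              field_simp
          _ ≤ (1/2) * ‖x - z‖ := by
              apply mul_le_mul_of_nonneg_right _ (norm_nonneg _)
              norm_num
      have hGp : ‖Gm p - p‖ ≤ r/4 := by
        rw [hGmdef]
        have : p - Tm' (φ j p - y) - p = -(Tm' (φ j p - y)) := by abel
        rw [this, norm_neg]
        calc ‖Tm' (φ j p - y)‖ ≤ ‖Tm'‖ * ‖φ j p - y‖ := Tm'.le_opNorm _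
          _ ≤ κ * ‖φ j p - y‖ := by
              apply mul_le_mul_of_nonneg_right _ (norm_nonneg _)
              rw [hκdef]; linarith
          _ ≤ κ * (2*ρ₀) := by
              apply mul_le_mul_of_nonneg_left _ hκ.le
              calc ‖φ j p - y‖ ≤ ‖φ j p - pinf‖ + ‖pinf - y‖ := by
                    have : φ j p - y = (φ j p - pinf) + (pinf - y) := by abel
                    rw [this]; exact norm_add_le _ _
                _ ≤ ρ₀ + ρ₀ := by
                    apply add_le_add
                    · rw [← dist_eq_norm]; exact le_of_lt hjp
                    · rw [← dist_eq_norm, dist_comm]; exact mem_closedBall.mp hy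
                _ = 2*ρ₀ := by ring
          _ = r/4 := by
              rw [hρ₀def]
              field_simp
              ring
      have hGself : ∀ x ∈ closedBall p r, Gm x ∈ closedBall p r := by
        intro x hxr
        rw [mem_closedBall, dist_eq_norm]
        calc ‖Gm x - p‖ ≤ ‖Gm x - Gm p‖ + ‖Gm p - p‖ := by
              have : Gm x - p = (Gm x - Gm p) + (Gm p - p) := by abel
              rw [this]; exact norm_add_le _ _
          _ ≤ (1/2) * ‖x - p‖ + r/4 := by
              apply add_le_add _ hGp
              exact hGlip x hxr p (mem_closedBall_self hr.le)
          _ ≤ (1/2) * r + r/4 := by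
              apply add_le_add_left
              apply mul_le_mul_of_nonneg_left _ (by norm_num)
              rw [← dist_eq_norm]
              exact mem_closedBall.mp hxr
          _ ≤ r := by linarith
      haveI : Nonempty (closedBall p r) := ⟨⟨p, mem_closedBall_self hr.le⟩⟩
      haveI : CompleteSpace (closedBall p r) := Metric.isClosed_closedBall.completeSpace_coe
      set Gs : (closedBall p r) → (closedBall p r) := fun x => ⟨Gm x.1, hGself x.1 x.2⟩
        with hGsdef
      have hcw : ContractingWith (1/2 : NNReal) Gs := by
        constructor
        · rw [← NNReal.coe_lt_coe]
          norm_num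
        · apply LipschitzWith.of_dist_le_mul
          intro x z
          have h1 : dist (Gs x) (Gs z) = dist (Gm x.1) (Gm z.1) := Subtype.dist_eq _ _
          have h2 : dist (x : closedBall p r) z = dist x.1 z.1 := Subtype.dist_eq _ _
          rw [h1, h2, dist_eq_norm, dist_eq_norm]
          have := hGlip x.1 x.2 z.1 z.2
          calc ‖Gm x.1 - Gm z.1‖ ≤ (1/2) * ‖x.1 - z.1‖ := this
            _ = ((1/2 : NNReal) : ℝ) * ‖x.1 - z.1‖ := by norm_num
      obtain ⟨xf, hxf, -⟩ := hcw.exists_fixedPoint ⟨p, mem_closedBall_self hr.le⟩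
        (edist_ne_top _ _)
      have hfix : Gm xf.1 = xf.1 := congrArg Subtype.val hxf
      have hzero : Tm' (φ j xf.1 - y) = 0 := by
        rw [hGmdef] at hfix
        exact sub_eq_self.mp hfix
      have hsub0 : φ j xf.1 - y = 0 := by
        have h2 := congrArg Tm hzero
        rwa [hT'T, map_zero] at h2
      have : y = φ j xf.1 := (sub_eq_zero.mp hsub0).symm
      rw [this]
      exact hφm j (hrD xf.2)
    have hpinfD : pinf ∈ D := hballD (mem_closedBall_self hρ₀.le)
    have hpinfnotD : pinf ∉ D := by
      rw [hDopen.frontier_eq] at hpinf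
      exact hpinf.2
    exact hpinfnotD hpinfD
  
  -- h maps D into the frontier
  have hfr : ∀ x ∈ D, h x ∈ frontier D := by
    intro x hx
    rw [hDopen.frontier_eq]
    exact ⟨hcl x hx, hAempty x hx⟩
  -- slices of h are holomorphic
  have hsliceDiff : ∀ (x w : ℂ × ℂ) (ρ : ℝ), (∀ ζ ∈ ball (0:ℂ) ρ, x + ζ • w ∈ D) →
      DifferentiableOn ℂ (fun ζ : ℂ => h (x + ζ • w)) (ball 0 ρ) := by
    intro x w ρ hin
    apply (sliceTLU hhu x w hin).differentiableOn _ isOpen_ball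
    apply Filter.Eventually.of_forall
    intro j
    exact slice_diffOn (hφd j) x w hin
  -- the set where h is locally pinf
  set S : Set (ℂ × ℂ) := {x | x ∈ D ∧ ∃ δ, 0 < δ ∧ ball x δ ⊆ D ∧ ∀ y ∈ ball x δ, h y = pinf}
    with hSdef
  have hSopen : IsOpen S := by
    rw [Metric.isOpen_iff]
    rintro x ⟨hxD, δ, hδ, hbD, hval⟩
    refine ⟨δ/2, by positivity, ?_⟩
    intro y hy
    have hyd : dist y x < δ/2 := mem_ball.mp hy
    refine ⟨hbD (mem_ball.mpr (by linarith)), δ/2, by positivity, ?_, ?_⟩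
    · intro z hz
      apply hbD
      rw [mem_ball] at hz ⊢
      have := dist_triangle z y x
      linarith
    · intro z hz
      apply hval
      rw [mem_ball] at hz ⊢
      have := dist_triangle z y x
      linarith
  have hpS : p ∈ S := by
    have hUnhds : U ∈ 𝓝 (h p) := hU.mem_nhds (by rw [hhp]; exact hpU)
    have hpre : (h ⁻¹' U) ∈ 𝓝 p := (hhc p hp) hUnhds
    obtain ⟨δ₁, hδ₁, hball1⟩ := Metric.mem_nhds_iff.mp hpre
    obtain ⟨δ₂, hδ₂, hball2⟩ := Metric.mem_nhds_iff.mp (hDopen.mem_nhds hp)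
    set δ : ℝ := min δ₁ δ₂ / 2 with hδdef
    have hδ : 0 < δ := by positivity
    have h2δ1 : 2*δ ≤ δ₁ := by
      rw [hδdef]
      have := min_le_left δ₁ δ₂
      linarith
    have h2δ2 : 2*δ ≤ δ₂ := by
      rw [hδdef]
      have := min_le_right δ₁ δ₂
      linarith
    have hb2D : ball p (2*δ) ⊆ D := by
      intro z hz
      apply hball2
      rw [mem_ball] at hz ⊢
      linarith
    have hb2U : ∀ z ∈ ball p (2*δ), h z ∈ U := by
      intro z hz
      apply hball1
      rw [mem_ball] at hz ⊢
      linarith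
    refine ⟨hp, δ, hδ, fun z hz => hb2D (ball_subset_ball (by linarith) hz), ?_⟩
    intro y hy
    rcases eq_or_ne y p with rfl | hne
    · exact hhp
    set w : ℂ × ℂ := (3/2 : ℂ) • (y - p) with hwdef
    have hyp : ‖y - p‖ < δ := by
      have := mem_ball.mp hy
      rwa [dist_eq_norm] at this
    have hwin : ∀ ζ ∈ ball (0:ℂ) 1, p + ζ • w ∈ ball p (2*δ) := by
      intro ζ hζ
      rw [mem_ball]
      have hζ1 : ‖ζ‖ < 1 := mem_ball_zero_iff.mp hζ
      calc dist (p + ζ • w) p = ‖ζ • w‖ := by rw [dist_eq_norm, add_sub_cancel_left]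
        _ = ‖ζ‖ * ‖w‖ := norm_smul _ _
        _ ≤ 1 * ‖w‖ := mul_le_mul_of_nonneg_right hζ1.le (norm_nonneg _)
        _ = ‖(3/2 : ℂ)‖ * ‖y - p‖ := by rw [one_mul, hwdef, norm_smul]
        _ < 2*δ := by
            have h32 : ‖(3/2 : ℂ)‖ = 3/2 := by
              rw [show ((3:ℂ)/2) = ((3/2 : ℝ) : ℂ) by norm_num, Complex.norm_real]
              norm_num
            rw [h32]
            nlinarith [norm_nonneg (y - p)]
    have hwinD : ∀ ζ ∈ ball (0:ℂ) 1, p + ζ • w ∈ D := fun ζ hζ => hb2D (hwin ζ hζ)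
    have hfd : DifferentiableOn ℂ (fun ζ : ℂ => h (p + ζ • w)) (ball 0 1) :=
      hsliceDiff p w 1 hwinD
    have hfim : (fun ζ : ℂ => h (p + ζ • w)) '' (ball 0 1) ⊆ U ∩ frontier D := by
      rintro _ ⟨ζ, hζ, rfl⟩
      exact ⟨hb2U _ (hwin ζ hζ), hfr _ (hwinD ζ hζ)⟩
    have h23 : (2/3 : ℂ) ∈ ball (0:ℂ) 1 := by
      rw [mem_ball_zero_iff, show ((2:ℂ)/3) = ((2/3 : ℝ) : ℂ) by norm_num, Complex.norm_real]
      norm_num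
    have h0b : (0 : ℂ) ∈ ball (0:ℂ) 1 := mem_ball_self one_pos
    have hval := hdisc _ hfd hfim (2/3) h23 0 h0b
    have he1 : p + (2/3 : ℂ) • w = y := by
      rw [hwdef, smul_smul]
      norm_num
    have he0 : p + (0:ℂ) • w = p := by simp
    simp only [he1, he0] at hval
    rw [hval, hhp]
  -- propagation: D ∩ closure S ⊆ S
  have hprop : ∀ x ∈ D, x ∈ closure S → x ∈ S := by
    intro xs hxs hxc
    obtain ⟨R, hR, hsub⟩ := hball xs hxs
    obtain ⟨x₀, hx₀S, hx₀d⟩ := Metric.mem_closure_iff.mp hxc (R/8) (by positivity)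
    obtain ⟨hx₀D, δ₀, hδ₀, hb₀D, hval₀⟩ := hx₀S
    have hx₀dist : dist xs x₀ < R/8 := hx₀d
    have hclaim : ∀ y ∈ ball xs (R/8), h y = pinf := by
      intro y hy
      rcases eq_or_ne y x₀ with rfl | hne
      · exact hval₀ _ (mem_ball_self hδ₀)
      set w : ℂ × ℂ := y - x₀ with hwdef
      have hwne : w ≠ 0 := sub_ne_zero.mpr hne
      have hwn : 0 < ‖w‖ := norm_pos_iff.mpr hwne
      have hwlt : ‖w‖ < R/4 := by
        calc ‖w‖ = dist y x₀ := (dist_eq_norm _ _).symm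
          _ ≤ dist y xs + dist xs x₀ := dist_triangle _ _ _
          _ < R/8 + R/8 := add_lt_add (mem_ball.mp hy) hx₀dist
          _ = R/4 := by ring
      have hwin : ∀ ζ ∈ ball (0:ℂ) 2, x₀ + ζ • w ∈ D := by
        intro ζ hζ
        apply hsub
        rw [mem_ball]
        have hζ2 : ‖ζ‖ < 2 := mem_ball_zero_iff.mp hζ
        calc dist (x₀ + ζ • w) xs ≤ dist (x₀ + ζ • w) x₀ + dist x₀ xs := dist_triangle _ _ _
          _ < 2 * (R/4) + R/8 := by
              apply add_lt_add
              · rw [dist_eq_norm, add_sub_cancel_left, norm_smul]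
                nlinarith [norm_nonneg ζ, norm_nonneg w]
              · rw [dist_comm]; exact hx₀dist
          _ < R := by linarith
      have hu : DifferentiableOn ℂ (fun ζ : ℂ => h (x₀ + ζ • w)) (ball 0 2) :=
        hsliceDiff x₀ w 2 hwin
      have han : AnalyticOnNhd ℂ (fun ζ : ℂ => h (x₀ + ζ • w)) (ball 0 2) :=
        hu.analyticOnNhd isOpen_ball
      have hev : (fun ζ : ℂ => h (x₀ + ζ • w)) =ᶠ[𝓝 (0:ℂ)] (fun _ => pinf) := by
        rw [Filter.eventuallyEq_iff_exists_mem]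
        refine ⟨ball (0:ℂ) (δ₀/‖w‖), ball_mem_nhds _ (by positivity), ?_⟩
        intro ζ hζ
        apply hval₀
        rw [mem_ball]
        calc dist (x₀ + ζ • w) x₀ = ‖ζ • w‖ := by rw [dist_eq_norm, add_sub_cancel_left]
          _ = ‖ζ‖ * ‖w‖ := norm_smul _ _
          _ < (δ₀/‖w‖) * ‖w‖ := mul_lt_mul_of_pos_right (mem_ball_zero_iff.mp hζ) hwn
          _ = δ₀ := div_mul_cancel₀ _ hwn.ne'
      have heq := han.eqOn_of_preconnected_of_eventuallyEq analyticOnNhd_const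
        (convex_ball (0:ℂ) 2).isPreconnected (mem_ball_self two_pos) hev
      have h1b : (1:ℂ) ∈ ball (0:ℂ) 2 := by
        rw [mem_ball_zero_iff]
        norm_num
      have hfin : h (x₀ + (1:ℂ) • w) = pinf := heq h1b
      have he1 : x₀ + (1:ℂ) • w = y := by rw [hwdef]; simp
      rw [he1] at hfin
      exact hfin
    exact ⟨hxs, R/8, by positivity, fun z hz => hsub (ball_subset_ball (by linarith) hz), hclaim⟩
  -- clopen argument
  have hallD : ∀ x ∈ D, h x = pinf := by
    set Ws : Set (ℂ × ℂ) := D ∩ (closure S)ᶜ with hWsdef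
    have hWopen : IsOpen Ws := hDopen.inter isClosed_closure.isOpen_compl
    have hcover : D ⊆ S ∪ Ws := by
      intro x hx
      by_cases hxc : x ∈ closure S
      · exact Or.inl (hprop x hx hxc)
      · exact Or.inr ⟨hx, hxc⟩
    by_cases hWne : (D ∩ Ws).Nonempty
    · have hres := hDconn.isPreconnected S Ws hSopen hWopen hcover ⟨p, hp, hpS⟩ hWne
      obtain ⟨y, hyD, hyS, hyW⟩ := hres
      exact absurd (subset_closure hyS) hyW.2
    · intro x hx
      have hxS : x ∈ S := by
        rcases hcover hx with hS | hW
        · exact hS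
        · exact absurd ⟨x, hx, hW⟩ hWne
      obtain ⟨-, δ, hδ, -, hval⟩ := hxS
      exact hval x (mem_ball_self hδ)
  -- final contradiction
  have hfinal := hallD xbar (hKD hxbarK)
  rw [hfinal] at hbad
  simp at hbad
  linarith
end

section
/- Let P be a real polynomial without harmonic terms and let G = G_P. Let g : G → G be an automorphism of G such that for every t ∈ ℝ there exists t′ ∈ ℝ with g ∘ T_t = T_{t′} ∘ g on G. Then there exist complex numbers α ≠ 0, a ≠ 0, β, b and an entire function φ : ℂ → ℂ such that g(z₁, z₂) = (α·z₁ + β, φ(z₁) + a·z₂ + b) for all (z₁, z₂) ∈ G. -/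
open Complex ComplexConjugate Finset

/-- An automorphism of an open set `Ω ⊆ ℂ²`: a holomorphic self-map with a holomorphic
inverse. -/
def IsAutOn (Ω : Set (ℂ × ℂ)) (g : (ℂ × ℂ) → (ℂ × ℂ)) : Prop :=
  DifferentiableOn ℂ g Ω ∧ Set.MapsTo g Ω Ω ∧
    ∃ h : (ℂ × ℂ) → (ℂ × ℂ), DifferentiableOn ℂ h Ω ∧ Set.MapsTo h Ω Ω ∧
      Set.EqOn (h ∘ g) id Ω ∧ Set.EqOn (g ∘ h) id Ω

/-- The model domain `G_P = {2 Re z₂ + P(z₁) < 0}`. -/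
def Gdom (P : ℂ → ℝ) : Set (ℂ × ℂ) := {p : ℂ × ℂ | 2 * p.2.re + P p.1 < 0}

/-- The translation `T_t(z₁, z₂) = (z₁, z₂ + i t)`. -/
def Ttr (t : ℝ) : (ℂ × ℂ) → (ℂ × ℂ) := fun p => (p.1, p.2 + Complex.I * t)

open Filter Set Bornology Polynomial

noncomputable section
lemma const_of_deriv_zero {s : Set ℂ} (hs : Convex ℝ s) (ho : IsOpen s)
    {v : ℂ → ℂ} (hv : ∀ w ∈ s, DifferentiableAt ℂ v w)
    (hd : ∀ w ∈ s, deriv v w = 0) :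
    ∀ w ∈ s, ∀ w' ∈ s, v w = v w' := by
  intro w hw w' hw'
  refine hs.is_const_of_fderivWithin_eq_zero
    (fun x hx => (hv x hx).differentiableWithinAt) (fun x hx => ?_) hw hw'
  rw [fderivWithin_of_isOpen ho hx]
  have h1 : HasDerivAt v 0 x := by
    have := (hv x hx).hasDerivAt
    rwa [hd x hx] at this
  have := h1.hasFDerivAt.fderiv
  rw [this]; ext : 1; simp

/-- A holomorphic function on a convex open set invariant under all vertical
translations (which preserve the set) is constant. -/
lemma const_of_vert_inv {s : Set ℂ} (hs : Convex ℝ s) (ho : IsOpen s)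
    {v : ℂ → ℂ} (hv : ∀ w ∈ s, DifferentiableAt ℂ v w)
    (hinv : ∀ w ∈ s, ∀ t : ℝ, v (w + Complex.I * t) = v w) :
    ∀ w ∈ s, ∀ w' ∈ s, v w = v w' := by
  refine const_of_deriv_zero hs ho hv (fun w hw => ?_)
  have hd : HasDerivAt v (deriv v w) w := (hv w hw).hasDerivAt
  have hin : HasDerivAt (fun u : ℂ => w + Complex.I * u) Complex.I 0 := by
    simpa using ((hasDerivAt_id (0:ℂ)).const_mul Complex.I).const_add w
  have hd' : HasDerivAt v (deriv v w) (w + Complex.I * 0) := by simpa using hd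
  have hcomp : HasDerivAt (fun u : ℂ => v (w + Complex.I * u)) (deriv v w * Complex.I) 0 := by
    exact hd'.comp 0 hin
  have hψ : HasDerivAt (fun t : ℝ => v (w + Complex.I * (t : ℂ))) (deriv v w * Complex.I) 0 := by
    simpa using hcomp.comp_ofReal
  have hψ' : HasDerivAt (fun t : ℝ => v (w + Complex.I * (t : ℂ))) 0 0 := by
    have : (fun t : ℝ => v (w + Complex.I * (t : ℂ))) = fun _ => v w :=
      funext fun t => hinv w hw t
    rw [this]; exact hasDerivAt_const _ _
  have h0 : deriv v w * Complex.I = 0 := hψ.unique hψ'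
  rcases mul_eq_zero.mp h0 with h | h
  · exact h
  · exact absurd h Complex.I_ne_zero



lemma Gdom_isOpen {P : ℂ → ℝ} (hPc : Continuous P) : IsOpen (Gdom P) := by
  have : Continuous (fun p : ℂ × ℂ => 2 * p.2.re + P p.1) := by
    fun_prop
  exact isOpen_lt this continuous_const

/-- The vertical slice of `Gdom` over `z₁`. -/
def Hsl (P : ℂ → ℝ) (z₁ : ℂ) : Set ℂ := {w : ℂ | 2 * w.re + P z₁ < 0}

lemma Hsl_convex (P : ℂ → ℝ) (z₁ : ℂ) : Convex ℝ (Hsl P z₁) := by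
  have : Hsl P z₁ = {w : ℂ | w.re < -(P z₁) / 2} := by
    ext w; simp only [Hsl, Set.mem_setOf_eq]; constructor <;> intro h <;> linarith
  rw [this]; exact convex_halfSpace_re_lt _
  
lemma Hsl_isOpen (P : ℂ → ℝ) (z₁ : ℂ) : IsOpen (Hsl P z₁) :=
  isOpen_lt (by fun_prop) continuous_const

lemma Hsl_vert {P : ℂ → ℝ} {z₁ : ℂ} {w : ℂ} (hw : w ∈ Hsl P z₁) (t : ℝ) :
    w + Complex.I * t ∈ Hsl P z₁ := by
  simpa [Hsl, Complex.add_re, Complex.mul_re] using hw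

lemma Hsl_mem {P : ℂ → ℝ} {z₁ : ℂ} {w : ℂ} : (z₁, w) ∈ Gdom P ↔ w ∈ Hsl P z₁ := Iff.rfl

lemma Hsl_base (P : ℂ → ℝ) (z₁ : ℂ) : ((( -(P z₁) - 1)/2 : ℝ) : ℂ) ∈ Hsl P z₁ := by
  simp only [Hsl, Set.mem_setOf_eq, Complex.ofReal_re]; ring_nf; norm_num

/-- A function on `Gdom P` constant on vertical slices extends (via first coordinate)
to an entire function. -/
lemma slice_to_entire {P : ℂ → ℝ} (hPc : Continuous P) {u : ℂ × ℂ → ℂ}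
    (hu : ∀ p ∈ Gdom P, DifferentiableAt ℂ u p)
    (hconst : ∀ p ∈ Gdom P, ∀ q ∈ Gdom P, p.1 = q.1 → u p = u q) :
    ∃ F : ℂ → ℂ, Differentiable ℂ F ∧ ∀ p ∈ Gdom P, u p = F p.1 := by
  refine ⟨fun w => u (w, ((( -(P w) - 1)/2 : ℝ) : ℂ)), ?_, ?_⟩
  · intro w₀
    set c : ℝ := (-(P w₀) - 2)/2 with hc
    have hopen : IsOpen {w : ℂ | P w < P w₀ + 1} := isOpen_lt hPc continuous_const
    have hw₀mem : w₀ ∈ {w : ℂ | P w < P w₀ + 1} := by simp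
    have hmemc : ∀ w ∈ {w : ℂ | P w < P w₀ + 1}, (w, (c : ℂ)) ∈ Gdom P := by
      intro w hw
      simp only [Set.mem_setOf_eq] at hw
      simp only [Gdom, Set.mem_setOf_eq, Complex.ofReal_re]
      show 2 * ((-(P w₀) - 2)/2) + P w < 0
      linarith
    have heq : (fun w => u (w, ((( -(P w) - 1)/2 : ℝ) : ℂ)))
        =ᶠ[nhds w₀] (fun w => u (w, (c : ℂ))) := by
      filter_upwards [hopen.mem_nhds hw₀mem] with w hw
      exact hconst _ (Hsl_mem.mpr (Hsl_base P w)) _ (hmemc w hw) rfl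
    have hdc : DifferentiableAt ℂ (fun w => u (w, (c : ℂ))) w₀ := by
      exact (hu _ (hmemc w₀ hw₀mem)).comp w₀
        (differentiableAt_id.prodMk (differentiableAt_const _))
    exact heq.differentiableAt_iff.mpr hdc
  · intro p hp
    exact hconst p hp _ (Hsl_mem.mpr (Hsl_base P p.1)) rfl

/-- Representation: a holomorphic map on `Gdom P` commuting with the translations up to
retranslation has the form `(f z₁, a z₂ + φ z₁)` with `a` real and `f, φ` entire. -/
lemma aux_rep {P : ℂ → ℝ} (hPc : Continuous P)
    {g : (ℂ × ℂ) → (ℂ × ℂ)} (hgd : DifferentiableOn ℂ g (Gdom P))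
    (hnorm : ∀ t : ℝ, ∃ t' : ℝ, Set.EqOn (g ∘ Ttr t) (Ttr t' ∘ g) (Gdom P)) :
    ∃ (a : ℝ) (f φ : ℂ → ℂ), Differentiable ℂ f ∧ Differentiable ℂ φ ∧
      ∀ p ∈ Gdom P, g p = (f p.1, (a : ℂ) * p.2 + φ p.1) := by
  classical
  have hGo : IsOpen (Gdom P) := Gdom_isOpen hPc
  choose κ hκ using hnorm
  -- pointwise form of the normalization
  have hE : ∀ t : ℝ, ∀ p ∈ Gdom P,
      g (p.1, p.2 + Complex.I * t) = ((g p).1, (g p).2 + Complex.I * (κ t)) := by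
    intro t p hp
    have := hκ t hp
    simpa [Ttr, Function.comp] using this
  -- differentiability of the slices
  have hsl : ∀ z₁ : ℂ, ∀ w ∈ Hsl P z₁, DifferentiableAt ℂ (fun w => g (z₁, w)) w := by
    intro z₁ w hw
    exact (hgd.differentiableAt (hGo.mem_nhds (Hsl_mem.mpr hw))).comp w
      ((differentiableAt_const _).prodMk differentiableAt_id)
  have hsl1 : ∀ z₁ : ℂ, ∀ w ∈ Hsl P z₁,
      DifferentiableAt ℂ (fun w => (g (z₁, w)).1) w :=
    fun z₁ w hw => (hsl z₁ w hw).fst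
  have hsl2 : ∀ z₁ : ℂ, ∀ w ∈ Hsl P z₁,
      DifferentiableAt ℂ (fun w => (g (z₁, w)).2) w :=
    fun z₁ w hw => (hsl z₁ w hw).snd
  -- first coordinate: constant on slices
  have hconst1 : ∀ p ∈ Gdom P, ∀ q ∈ Gdom P, p.1 = q.1 → (g p).1 = (g q).1 := by
    intro p hp q hq hpq
    obtain ⟨z₁, w⟩ := p
    obtain ⟨z₁', w'⟩ := q
    simp only at hpq
    subst hpq
    exact const_of_vert_inv (Hsl_convex P z₁) (Hsl_isOpen P z₁) (hsl1 z₁)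
      (fun w hw t => by simpa using congrArg Prod.fst (hE t (z₁, w) (Hsl_mem.mpr hw)))
      w hp w' hq
  -- second coordinate: derivative analysis
  set a : ℝ := κ 1 with ha
  have hconst2 : ∀ p ∈ Gdom P, ∀ q ∈ Gdom P, p.1 = q.1 →
      (g p).2 - (a : ℂ) * p.2 = (g q).2 - (a : ℂ) * q.2 := by
    intro p hp q hq hpq
    obtain ⟨z₁, w⟩ := p
    obtain ⟨z₁', w'⟩ := q
    simp only at hpq
    subst hpq
    set v : ℂ → ℂ := fun w => (g (z₁, w)).2 with hv
    have hvd : ∀ w ∈ Hsl P z₁, DifferentiableAt ℂ v w := hsl2 z₁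
    -- v is analytic on the open slice, hence so is its derivative
    have hvan : ∀ w ∈ Hsl P z₁, DifferentiableAt ℂ (deriv v) w := by
      have hvo : DifferentiableOn ℂ v (Hsl P z₁) :=
        fun w hw => (hvd w hw).differentiableWithinAt
      have h1 : AnalyticOnNhd ℂ v (Hsl P z₁) := hvo.analyticOnNhd (Hsl_isOpen P z₁)
      exact fun w hw => (h1.deriv w hw).differentiableAt
    -- the derivative of v is invariant under vertical translations
    have hdinv : ∀ w ∈ Hsl P z₁, ∀ t : ℝ, deriv v (w + Complex.I * t) = deriv v w := by
      intro w hw t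
      have heq : (fun w => v (w + Complex.I * t))
          =ᶠ[nhds w] (fun w => v w + Complex.I * (κ t)) := by
        filter_upwards [(Hsl_isOpen P z₁).mem_nhds hw] with x hx
        exact congrArg Prod.snd (hE t (z₁, x) (Hsl_mem.mpr hx))
      have h2 := heq.deriv_eq
      rwa [deriv_comp_add_const, deriv_add_const] at h2
    -- hence deriv v is constant on the slice
    have hdc : ∀ x ∈ Hsl P z₁, ∀ y ∈ Hsl P z₁, deriv v x = deriv v y :=
      const_of_vert_inv (Hsl_convex P z₁) (Hsl_isOpen P z₁) hvan hdinv
    -- the base point of the slice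
    set b₀ : ℂ := ((( -(P z₁) - 1)/2 : ℝ) : ℂ) with hb₀
    have hb₀m : b₀ ∈ Hsl P z₁ := Hsl_base P z₁
    set d : ℂ := deriv v b₀ with hd
    -- w ↦ v w - d * w has zero derivative on the slice
    have hzero : ∀ x ∈ Hsl P z₁, deriv (fun w => v w - d * w) x = 0 := by
      intro x hx
      have h1 : HasDerivAt (fun w => v w - d * w) (deriv v x - d * 1) x :=
        ((hvd x hx).hasDerivAt).sub ((hasDerivAt_id x).const_mul d)
      rw [h1.deriv, hdc x hx b₀ hb₀m, mul_one, sub_self]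
    have hlin : ∀ x ∈ Hsl P z₁, ∀ y ∈ Hsl P z₁, v x - d * x = v y - d * y :=
      const_of_deriv_zero (Hsl_convex P z₁) (Hsl_isOpen P z₁)
        (fun x hx => ((hvd x hx).sub ((differentiableAt_id).const_mul d)))
        hzero
    -- identify d with κ 1
    have hd1 : d = (a : ℂ) := by
      have h1 : v (b₀ + Complex.I * (1:ℝ)) = v b₀ + Complex.I * (κ 1) :=
        congrArg Prod.snd (hE 1 (z₁, b₀) (Hsl_mem.mpr hb₀m))
      have h2 : v (b₀ + Complex.I * (1:ℝ)) - d * (b₀ + Complex.I * (1:ℝ)) = v b₀ - d * b₀ :=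
        hlin _ (Hsl_vert hb₀m 1) _ hb₀m
      rw [h1] at h2
      have h4 : d * Complex.I = ((κ 1 : ℝ) : ℂ) * Complex.I := by
        push_cast at h2 ⊢; linear_combination -h2
      have h5 := mul_right_cancel₀ Complex.I_ne_zero h4
      rw [ha]; exact_mod_cast h5
    -- conclude
    have h5 := hlin w hp w' hq
    rw [hd1] at h5
    simpa [hv] using h5
  -- build the entire functions
  obtain ⟨f, hfd, hf⟩ := slice_to_entire hPc
    (fun p hp => (hgd.differentiableAt (hGo.mem_nhds hp)).fst) hconst1
  obtain ⟨φ, hφd, hφ⟩ := slice_to_entire (u := fun p => (g p).2 - (a:ℂ) * p.2) hPc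
    (fun p hp => ((hgd.differentiableAt (hGo.mem_nhds hp)).snd).sub
      ((differentiableAt_snd).const_mul _)) hconst2
  refine ⟨a, f, φ, hfd, hφd, fun p hp => ?_⟩
  have h1 := hf p hp
  have h2 := hφ p hp
  have : (g p).2 = (a:ℂ) * p.2 + φ p.1 := by linear_combination h2
  exact Prod.ext h1 this


/-- An entire function of polynomial growth is a polynomial. -/
lemma growth_poly : ∀ (n : ℕ) (f : ℂ → ℂ), Differentiable ℂ f →
    ∀ D : ℝ, (∀ z, ‖f z‖ ≤ D * (1 + ‖z‖) ^ n) → ∃ p : Polynomial ℂ, ∀ z, f z = p.eval z := by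
  intro n
  induction n with
  | zero =>
    intro f hf D hD
    have hb : IsBounded (Set.range f) := by
      rw [isBounded_iff_forall_norm_le]
      exact ⟨D, fun x ⟨z, hz⟩ => hz ▸ (by simpa using hD z)⟩
    obtain ⟨c0, hc0⟩ := hf.exists_eq_const_of_bounded hb
    exact ⟨Polynomial.C c0, fun z => by rw [hc0]; simp [Function.const]⟩
  | succ n ih =>
    intro f hf D hD
    have hD0 : 0 ≤ D := le_trans (norm_nonneg (f 0)) (by simpa using hD 0)
    set q : ℂ → ℂ := dslope f 0 with hq
    have hqd : Differentiable ℂ q := by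
      rw [← differentiableOn_univ]
      exact (differentiableOn_dslope (Filter.univ_mem)).mpr hf.differentiableOn
    obtain ⟨M, hM⟩ := (isCompact_closedBall (0:ℂ) 1).exists_bound_of_continuousOn
      hqd.continuous.continuousOn
    have hM0 : 0 ≤ M := le_trans (norm_nonneg _) (hM 0 (by simp))
    set D' : ℝ := max (4 * D) M with hD'
    have hq_bound : ∀ z, ‖q z‖ ≤ D' * (1 + ‖z‖) ^ n := by
      intro z
      have h1 : (1:ℝ) ≤ (1 + ‖z‖) ^ n :=
        one_le_pow₀ (by linarith [norm_nonneg z])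
      by_cases hz : ‖z‖ ≤ 1
      · calc ‖q z‖ ≤ M := hM z (by simpa using hz)
          _ = M * 1 := (mul_one M).symm
          _ ≤ D' * (1 + ‖z‖) ^ n := by
              apply mul_le_mul (le_max_right _ _) h1 zero_le_one
              exact le_trans hM0 (le_max_right _ _)
      · push_neg at hz
        have hz0 : z ≠ 0 := by intro h; rw [h] at hz; simp at hz; linarith
        have hzpos : (0:ℝ) < ‖z‖ := by linarith
        have hqz : q z = (f z - f 0) / z := by
          rw [hq, dslope_of_ne f hz0, slope_def_field]
          simp [div_eq_iff hz0]
        have hf0 : ‖f 0‖ ≤ D := by simpa using hD 0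
        have key : ‖f z - f 0‖ ≤ 2 * D * (1 + ‖z‖) ^ (n + 1) := by
          calc ‖f z - f 0‖ ≤ ‖f z‖ + ‖f 0‖ := norm_sub_le _ _
            _ ≤ D * (1 + ‖z‖) ^ (n+1) + D := by gcongr; exact hD z
            _ ≤ 2 * D * (1 + ‖z‖) ^ (n+1) := by
                have : (1:ℝ) ≤ (1 + ‖z‖) ^ (n+1) := one_le_pow₀ (by linarith)
                nlinarith
        have hstep : (1 + ‖z‖) ^ (n + 1) ≤ (1 + ‖z‖) ^ n * (2 * ‖z‖) := by
          rw [pow_succ]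
          nlinarith [h1, hz]
        calc ‖q z‖ = ‖f z - f 0‖ / ‖z‖ := by rw [hqz, norm_div]
          _ ≤ 2 * D * (1 + ‖z‖) ^ (n+1) / ‖z‖ := by gcongr
          _ ≤ 2 * D * ((1 + ‖z‖) ^ n * (2 * ‖z‖)) / ‖z‖ := by gcongr
          _ = 4 * D * (1 + ‖z‖) ^ n := by
              have hne : ‖z‖ ≠ 0 := by
                simpa using hzpos.ne'
              field_simp
              ring
          _ ≤ D' * (1 + ‖z‖) ^ n := by gcongr; exact le_max_left _ _
    obtain ⟨p, hp⟩ := ih q hqd D' hq_bound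
    refine ⟨Polynomial.C (f 0) + Polynomial.X * p, fun z => ?_⟩
    have h2 : (z - 0) • q z = f z - f 0 := sub_smul_dslope f 0 z
    simp only [sub_zero, smul_eq_mul] at h2
    rw [Polynomial.eval_add, Polynomial.eval_C, Polynomial.eval_mul, Polynomial.eval_X, ← hp z]
    linear_combination -h2

/-- An entire function with an entire two-sided inverse is affine. -/
lemma entire_inverse_affine {f g : ℂ → ℂ} (hf : Differentiable ℂ f) (hg : Differentiable ℂ g)
    (hgf : ∀ z, g (f z) = z) (hfg : ∀ z, f (g z) = z) :
    ∃ α β : ℂ, α ≠ 0 ∧ ∀ z, f z = α * z + β := by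
  -- properness of f
  have hproper : ∀ R : ℝ, ∃ S : ℝ, 0 < S ∧ ∀ z : ℂ, ‖f z‖ ≤ R → ‖z‖ ≤ S := by
    intro R
    obtain ⟨S, hS⟩ := ((isCompact_closedBall (0:ℂ) R).image hg.continuous).isBounded.subset_closedBall (0:ℂ)
    refine ⟨max S 1, lt_of_lt_of_le one_pos (le_max_right _ _), fun z hz => ?_⟩
    have hmem : z ∈ g '' Metric.closedBall 0 R :=
      ⟨f z, by simpa [Metric.mem_closedBall, dist_zero_right] using hz, hgf z⟩
    have := hS hmem
    rw [Metric.mem_closedBall, dist_zero_right] at this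
    exact le_trans this (le_max_left _ _)
  -- nonvanishing derivative
  have hfder : ∀ z, deriv f z ≠ 0 := by
    intro z hz0
    have h1 : HasDerivAt (g ∘ f) (deriv g (f z) * deriv f z) z :=
      ((hg (f z)).hasDerivAt).comp z ((hf z).hasDerivAt)
    have h2 : (g ∘ f) = id := funext fun w => hgf w
    rw [h2] at h1
    have h3 := h1.unique (hasDerivAt_id z)
    rw [hz0, mul_zero] at h3
    exact one_ne_zero h3.symm
  -- set up the removable singularity at ∞
  obtain ⟨S, hS0, hS⟩ := hproper 1
  set r : ℝ := (S+1)⁻¹ with hr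
  have hr0 : 0 < r := by positivity
  have hbig : ∀ z : ℂ, S < ‖z‖ → 1 < ‖f z‖ := by
    intro z hz
    by_contra h
    push_neg at h
    exact absurd (hS z h) (not_le.2 hz)
  have hinvbig : ∀ z : ℂ, z ≠ 0 → ‖z‖ < r → S < ‖z⁻¹‖ := by
    intro z hz hzr
    rw [norm_inv]
    have hzpos : 0 < ‖z‖ := norm_pos_iff.mpr hz
    have : S + 1 < ‖z‖⁻¹ := by
      rw [hr] at hzr
      calc S + 1 = ((S+1)⁻¹)⁻¹ := by rw [inv_inv]
        _ < ‖z‖⁻¹ := by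
            apply inv_strictAnti₀ hzpos hzr
    linarith
  have hne : ∀ z : ℂ, z ≠ 0 → ‖z‖ < r → f z⁻¹ ≠ 0 := by
    intro z hz hzr h0
    have := hbig _ (hinvbig z hz hzr)
    rw [h0] at this
    norm_num at this
  set F : ℂ → ℂ := fun z => (f z⁻¹)⁻¹ with hF
  have hFd : DifferentiableOn ℂ F (Metric.ball (0:ℂ) r \ {0}) := by
    intro z hz
    have hz0 : z ≠ 0 := fun h => hz.2 (by simp [h])
    have hzr : ‖z‖ < r := by simpa [Metric.mem_ball, dist_zero_right] using hz.1
    exact (((hf _).comp z (differentiableAt_inv hz0)).inv (hne z hz0 hzr)).differentiableWithinAt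
  have hFb : BddAbove (norm ∘ F '' (Metric.ball (0:ℂ) r \ {0})) := by
    refine ⟨1, fun x hx => ?_⟩
    obtain ⟨z, hz, rfl⟩ := hx
    have hz0 : z ≠ 0 := fun h => hz.2 (by simp [h])
    have hzr : ‖z‖ < r := by simpa [Metric.mem_ball, dist_zero_right] using hz.1
    have h1 : 1 < ‖f z⁻¹‖ := hbig _ (hinvbig z hz0 hzr)
    simp only [Function.comp_apply, hF, norm_inv]
    exact inv_le_one_of_one_le₀ h1.le
  have key := Complex.differentiableOn_update_limUnder_of_bddAbove
    (Metric.ball_mem_nhds (0:ℂ) hr0) hFd hFb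
  -- the limit at 0 is 0
  have hFtend : Filter.Tendsto F (nhdsWithin (0:ℂ) {(0:ℂ)}ᶜ) (nhds 0) := by
    rw [NormedAddCommGroup.tendsto_nhds_zero]
    intro ε hε
    obtain ⟨Sε, hSε0, hSε⟩ := hproper (2/ε)
    have hball : {z : ℂ | ‖z‖ < (Sε+1)⁻¹} ∈ nhdsWithin (0:ℂ) {(0:ℂ)}ᶜ := by
      apply nhdsWithin_le_nhds
      have : Metric.ball (0:ℂ) ((Sε+1)⁻¹) ∈ nhds (0:ℂ) := Metric.ball_mem_nhds _ (by positivity)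
      simpa [Metric.ball, dist_zero_right] using this
    filter_upwards [hball, self_mem_nhdsWithin] with z hz1 hz2
    have hz0 : z ≠ 0 := hz2
    have h1 : Sε < ‖z⁻¹‖ := by
      rw [norm_inv]
      have hzpos : 0 < ‖z‖ := norm_pos_iff.mpr hz0
      have : Sε + 1 < ‖z‖⁻¹ := by
        calc Sε + 1 = ((Sε+1)⁻¹)⁻¹ := by rw [inv_inv]
          _ < ‖z‖⁻¹ := inv_strictAnti₀ hzpos hz1
      linarith
    have h2 : 2/ε < ‖f z⁻¹‖ := by
      by_contra h
      push_neg at h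
      exact absurd (hSε _ h) (not_le.2 h1)
    have h3 : 0 < 2/ε := by positivity
    have h4 : ‖F z‖ = ‖f z⁻¹‖⁻¹ := by simp [hF]
    rw [h4]
    calc ‖f z⁻¹‖⁻¹ ≤ (2/ε)⁻¹ := inv_anti₀ h3 h2.le
      _ = ε/2 := by rw [inv_div]
      _ < ε := by linarith
  have hL : limUnder (nhdsWithin (0:ℂ) {(0:ℂ)}ᶜ) F = 0 := hFtend.limUnder_eq
  set Fh : ℂ → ℂ := Function.update F 0 (limUnder (nhdsWithin (0:ℂ) {(0:ℂ)}ᶜ) F) with hFh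
  have hFh0 : Fh 0 = 0 := by rw [hFh, Function.update_self, hL]
  have hFhd : DifferentiableOn ℂ Fh (Metric.ball (0:ℂ) r) := key
  have hA : AnalyticAt ℂ Fh 0 :=
    hFhd.analyticAt (Metric.ball_mem_nhds _ hr0)
  -- the order of Fh at 0 is finite
  have horder : analyticOrderAt Fh 0 ≠ ⊤ := by
    intro htop
    rw [analyticOrderAt_eq_top] at htop
    have h1 : ∀ᶠ z in nhdsWithin (0:ℂ) {(0:ℂ)}ᶜ, Fh z = 0 ∧ ‖z‖ < r := by
      refine Filter.Eventually.and (htop.filter_mono nhdsWithin_le_nhds) ?_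
      apply nhdsWithin_le_nhds
      have : Metric.ball (0:ℂ) r ∈ nhds (0:ℂ) := Metric.ball_mem_nhds _ hr0
      simpa [Metric.ball, dist_zero_right] using this
    obtain ⟨z, ⟨hz1, hz2⟩, hz0⟩ : ∃ z, (Fh z = 0 ∧ ‖z‖ < r) ∧ z ∈ ({(0:ℂ)}ᶜ : Set ℂ) :=
      (h1.and self_mem_nhdsWithin).exists
    have hz0' : z ≠ 0 := hz0
    have : Fh z = F z := Function.update_of_ne hz0' _ _
    rw [this] at hz1
    exact (inv_ne_zero (hne z hz0' hz2)) hz1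
  obtain ⟨n, hn⟩ := WithTop.ne_top_iff_exists.mp horder
  obtain ⟨u, hu_an, hu0, huev⟩ := (hA.analyticOrderAt_eq_natCast (n := n)).mp hn.symm
  -- u stays away from 0 near 0
  have hucont : ContinuousAt u 0 := hu_an.continuousAt
  have hu0p : (0:ℝ) < ‖u 0‖ := norm_pos_iff.mpr hu0
  have huev2 : ∀ᶠ z in nhds (0:ℂ), ‖u 0‖/2 ≤ ‖u z‖ := by
    have h1 : ∀ᶠ z in nhds (0:ℂ), ‖u z - u 0‖ < ‖u 0‖/2 := by
      have := hucont.tendsto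
      rw [Metric.tendsto_nhds] at this
      have h2 := this (‖u 0‖/2) (by linarith)
      simpa [dist_eq_norm] using h2
    filter_upwards [h1] with z hz
    have := norm_sub_norm_le (u 0) (u z)
    have h3 : ‖u 0 - u z‖ = ‖u z - u 0‖ := norm_sub_rev _ _
    linarith [norm_sub_norm_le (u 0) (u z), h3 ▸ hz]
  have hball : ∀ᶠ z in nhds (0:ℂ), ‖z‖ < r := by
    have : Metric.ball (0:ℂ) r ∈ nhds (0:ℂ) := Metric.ball_mem_nhds _ hr0
    exact Filter.mem_of_superset this (fun z hz => by simpa [dist_zero_right] using hz)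
  obtain ⟨δ, hδ0, hδ⟩ := Metric.eventually_nhds_iff.mp ((huev.and huev2).and hball)
  -- the polynomial bound at infinity
  have hbound : ∀ w : ℂ, δ⁻¹ < ‖w‖ → ‖f w‖ ≤ (2/‖u 0‖) * ‖w‖^n := by
    intro w hw
    have hw0 : w ≠ 0 := by
      intro h; rw [h] at hw; simp at hw; exact absurd hw (not_lt.2 (by positivity))
    set z : ℂ := w⁻¹ with hz
    have hz0 : z ≠ 0 := inv_ne_zero hw0
    have hznorm : ‖z‖ < δ := by
      rw [hz, norm_inv]
      have hwpos : 0 < ‖w‖ := norm_pos_iff.mpr hw0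
      calc ‖w‖⁻¹ < (δ⁻¹)⁻¹ := inv_strictAnti₀ (by positivity) hw
        _ = δ := inv_inv δ
    have hdist : dist z 0 < δ := by rwa [dist_zero_right]
    obtain ⟨⟨h1, h2⟩, h3⟩ := hδ hdist
    -- h1 : Fh z = z^n • u z
    have hFz : Fh z = F z := Function.update_of_ne hz0 _ _
    have hfw : f w = f z⁻¹ := by rw [hz, inv_inv]
    have hfne : f z⁻¹ ≠ 0 := hne z hz0 h3
    have hFzval : F z = (f w)⁻¹ := by rw [hF]; rw [hfw]
    have heq : (f w)⁻¹ = z^n * u z := by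
      rw [← hFzval, ← hFz, h1]; simp [smul_eq_mul]
    have hu0' : (0:ℝ) < ‖u 0‖ := norm_pos_iff.mpr hu0
    have huz : (0:ℝ) < ‖u z‖ := lt_of_lt_of_le (by linarith) h2
    have hfwne : f w ≠ 0 := by rw [hfw]; exact hfne
    have hnorm_eq : ‖f w‖ = (‖z‖^n * ‖u z‖)⁻¹ := by
      have : ‖(f w)⁻¹‖ = ‖z^n * u z‖ := by rw [heq]
      rw [norm_inv, norm_mul, norm_pow] at this
      rw [← this, inv_inv]
    rw [hnorm_eq, mul_inv]
    have hzn : ‖z‖⁻¹ = ‖w‖ := by rw [hz, norm_inv, inv_inv]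
    have h5 : (‖z‖^n)⁻¹ = ‖w‖^n := by rw [← inv_pow, hzn]
    rw [h5]
    rw [mul_comm]
    apply mul_le_mul_of_nonneg_right _ (by positivity)
    calc ‖u z‖⁻¹ ≤ (‖u 0‖/2)⁻¹ := inv_anti₀ (by linarith) h2
      _ = 2/‖u 0‖ := by rw [inv_div]
  -- global polynomial bound
  obtain ⟨M, hM⟩ := (isCompact_closedBall (0:ℂ) (δ⁻¹+1)).exists_bound_of_continuousOn
    hf.continuous.continuousOn
  have hu0' : (0:ℝ) < ‖u 0‖ := norm_pos_iff.mpr hu0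
  have hM0 : 0 ≤ M := le_trans (norm_nonneg _) (hM 0 (Metric.mem_closedBall_self (by positivity)))
  set D : ℝ := max (2/‖u 0‖) M with hD
  have hD0 : 0 ≤ D := le_trans hM0 (le_max_right _ _)
  have hglobal : ∀ z : ℂ, ‖f z‖ ≤ D * (1 + ‖z‖)^n := by
    intro z
    have hpow : (1:ℝ) ≤ (1 + ‖z‖)^n := one_le_pow₀ (by linarith [norm_nonneg z])
    by_cases hz : ‖z‖ ≤ δ⁻¹ + 1
    · calc ‖f z‖ ≤ M := hM z (by simpa [Metric.mem_closedBall, dist_zero_right] using hz)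
        _ = M * 1 := (mul_one M).symm
        _ ≤ D * (1 + ‖z‖)^n := mul_le_mul (le_max_right _ _) hpow zero_le_one hD0
    · push_neg at hz
      have h6 : δ⁻¹ < ‖z‖ := by linarith
      calc ‖f z‖ ≤ (2/‖u 0‖) * ‖z‖^n := hbound z h6
        _ ≤ D * (1 + ‖z‖)^n := by
            apply mul_le_mul (le_max_left _ _) _ (by positivity) hD0
            exact pow_le_pow_left₀ (norm_nonneg z) (by linarith) n
  obtain ⟨p, hp⟩ := growth_poly n f hf D hglobal
  -- the polynomial has degree ≤ 1
  have hderiv_eval : ∀ z, deriv f z = p.derivative.eval z := by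
    intro z
    have : f = fun x => p.eval x := funext hp
    rw [this, Polynomial.deriv]
  have hdeg : p.natDegree ≤ 1 := by
    by_contra h
    push_neg at h
    have h1 : 0 < p.natDegree := by omega
    have h2 : p.derivative.degree = (p.natDegree - 1 : ℕ) := Polynomial.degree_derivative_eq p h1
    have h3 : 0 < p.derivative.degree := by
      rw [h2]
      exact_mod_cast Nat.pos_of_ne_zero (by omega)
    obtain ⟨z₀, hz₀⟩ := Complex.exists_root h3
    exact hfder z₀ (by rw [hderiv_eval z₀]; exact hz₀)
  have hform := Polynomial.eq_X_add_C_of_natDegree_le_one hdeg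
  refine ⟨p.coeff 1, p.coeff 0, ?_, fun z => ?_⟩
  · intro h0
    have hconst : ∀ z, f z = p.coeff 0 := by
      intro z
      rw [hp z, hform]
      simp [h0]
    have : (0:ℂ) = 1 := by
      calc (0:ℂ) = g (f 0) := (hgf 0).symm
        _ = g (f 1) := by rw [hconst 0, hconst 1]
        _ = 1 := hgf 1
    simp at this
  · rw [hp z, hform]
    simp

/-- Vertical translations preserve the domain. -/
lemma Gdom_vert {P : ℂ → ℝ} {p : ℂ × ℂ} (hp : p ∈ Gdom P) (t : ℝ) :
    (p.1, p.2 + Complex.I * t) ∈ Gdom P := by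
  simpa [Gdom, Complex.add_re, Complex.mul_re] using hp

/-- if `P` is a real polynomial without harmonic terms, `G = G_P`, and
`g ∈ Aut(G)` normalizes the translation group `(T_t)`, then
`g(z₁, z₂) = (α z₁ + β, φ(z₁) + a z₂ + b)` with `α, a ≠ 0` and `φ` entire. -/
theorem stmt1 (c : ℕ → ℕ → ℂ) (N : ℕ) (P : ℂ → ℝ)
    (hsym : ∀ j q, c j q = conj (c q j))
    (hharm : ∀ j q, j = 0 ∨ q = 0 → c j q = 0)
    (hsupp : ∀ j q, N < j ∨ N < q → c j q = 0)
    (hP : ∀ z : ℂ, (P z : ℂ) = ∑ j ∈ Finset.range (N + 1), ∑ q ∈ Finset.range (N + 1),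
      c j q * z ^ j * (conj z) ^ q)
    (g : (ℂ × ℂ) → (ℂ × ℂ)) (hg : IsAutOn (Gdom P) g)
    (hnorm : ∀ t : ℝ, ∃ t' : ℝ, Set.EqOn (g ∘ Ttr t) (Ttr t' ∘ g) (Gdom P)) :
    ∃ (α a β b : ℂ) (φ : ℂ → ℂ), α ≠ 0 ∧ a ≠ 0 ∧ Differentiable ℂ φ ∧
      ∀ p ∈ Gdom P, g p = (α * p.1 + β, φ p.1 + a * p.2 + b) := by
  obtain ⟨hgd, hgm, h, hhd, hhm, hhg, hgh⟩ := hg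
  -- `P` is continuous
  have hPc : Continuous P := by
    have h1 : P = fun z => (∑ j ∈ Finset.range (N + 1), ∑ q ∈ Finset.range (N + 1),
        c j q * z ^ j * (conj z) ^ q).re := by
      funext z; rw [← hP z, Complex.ofReal_re]
    rw [h1]
    apply Complex.continuous_re.comp
    apply continuous_finset_sum
    intro j _
    apply continuous_finset_sum
    intro q _
    exact (continuous_const.mul (continuous_pow j)).mul ((Complex.continuous_conj).pow q)
  -- representation of g
  obtain ⟨a, f, φ, hfd, hφd, hrep⟩ := aux_rep hPc hgd hnorm
  have hbase : ∀ z₁ : ℂ, (z₁, ((( -(P z₁) - 1)/2 : ℝ) : ℂ)) ∈ Gdom P :=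
    fun z₁ => Hsl_mem.mpr (Hsl_base P z₁)
  -- a ≠ 0
  have ha : a ≠ 0 := by
    intro h0
    set p₁ : ℂ × ℂ := (0, ((( -(P 0) - 1)/2 : ℝ) : ℂ)) with hp₁def
    set p₂ : ℂ × ℂ := (0, ((( -(P 0) - 3)/2 : ℝ) : ℂ)) with hp₂def
    have hp₁ : p₁ ∈ Gdom P := hbase 0
    have hp₂ : p₂ ∈ Gdom P := by
      simp only [Gdom, Set.mem_setOf_eq, hp₂def, Complex.ofReal_re]
      ring_nf; norm_num
    have hgeq : g p₁ = g p₂ := by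
      rw [hrep p₁ hp₁, hrep p₂ hp₂, h0]
      norm_num
    have he : p₁ = p₂ := by
      have e1 : h (g p₁) = p₁ := hhg hp₁
      have e2 : h (g p₂) = p₂ := hhg hp₂
      rw [← e1, ← e2, hgeq]
    have : ((( -(P 0) - 1)/2 : ℝ) : ℂ) = ((( -(P 0) - 3)/2 : ℝ) : ℂ) :=
      congrArg Prod.snd he
    rw [Complex.ofReal_inj] at this
    linarith
  have haC : (a : ℂ) ≠ 0 := Complex.ofReal_ne_zero.mpr ha
  -- h also normalizes the translations
  have hnorm_h : ∀ s : ℝ, ∃ s' : ℝ, Set.EqOn (h ∘ Ttr s) (Ttr s' ∘ h) (Gdom P) := by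
    intro s
    refine ⟨s / a, fun w hw => ?_⟩
    have hhw : h w ∈ Gdom P := hhm hw
    have h1 : ((h w).1, (h w).2 + Complex.I * ((s/a : ℝ) : ℂ)) ∈ Gdom P := Gdom_vert hhw _
    have h2 : g ((h w).1, (h w).2 + Complex.I * ((s/a : ℝ) : ℂ)) = Ttr s (g (h w)) := by
      rw [hrep _ h1, hrep _ hhw]
      simp only [Ttr]
      refine Prod.ext rfl ?_
      have : (a:ℂ) * ((s/a : ℝ) : ℂ) = (s:ℝ) := by
        push_cast
        field_simp
      push_cast at this ⊢
      ring_nf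
      ring_nf at this
      linear_combination Complex.I * this
    have h3 : g (h w) = w := hgh hw
    have h4 : (h ∘ g) ((h w).1, (h w).2 + Complex.I * ((s/a : ℝ) : ℂ))
        = ((h w).1, (h w).2 + Complex.I * ((s/a : ℝ) : ℂ)) := hhg h1
    calc (h ∘ Ttr s) w = h (Ttr s w) := rfl
      _ = h (g ((h w).1, (h w).2 + Complex.I * ((s/a : ℝ) : ℂ))) := by
          rw [h2, h3]
      _ = ((h w).1, (h w).2 + Complex.I * ((s/a : ℝ) : ℂ)) := h4
      _ = (Ttr (s/a) ∘ h) w := rfl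
  -- representation of h
  obtain ⟨a', f', φ', hf'd, hφ'd, hrep'⟩ := aux_rep hPc hhd hnorm_h
  -- f' is a two-sided inverse of f
  have hff' : ∀ z : ℂ, f' (f z) = z := by
    intro z
    have hp := hbase z
    have h1 : h (g (z, _)) = (z, ((( -(P z) - 1)/2 : ℝ) : ℂ)) := hhg hp
    have h2 : g (z, ((( -(P z) - 1)/2 : ℝ) : ℂ)) ∈ Gdom P := hgm hp
    have h3 := hrep' _ h2
    have h4 := h3.symm.trans h1
    have h5 := congrArg Prod.fst h4
    simp only at h5
    have h6 : (g (z, ((( -(P z) - 1)/2 : ℝ) : ℂ))).1 = f z := congrArg Prod.fst (hrep _ hp)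
    rw [← h6]
    exact h5
  have hf'f : ∀ w : ℂ, f (f' w) = w := by
    intro w
    have hp := hbase w
    have h1 : g (h (w, _)) = (w, ((( -(P w) - 1)/2 : ℝ) : ℂ)) := hgh hp
    have h2 : h (w, ((( -(P w) - 1)/2 : ℝ) : ℂ)) ∈ Gdom P := hhm hp
    have h3 := hrep _ h2
    have h4 := h3.symm.trans h1
    have h5 := congrArg Prod.fst h4
    simp only at h5
    have h6 : (h (w, ((( -(P w) - 1)/2 : ℝ) : ℂ))).1 = f' w := congrArg Prod.fst (hrep' _ hp)
    rw [← h6]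
    exact h5
  -- f is affine
  obtain ⟨α, β, hα, hfeq⟩ := entire_inverse_affine hfd hf'd hff' hf'f
  refine ⟨α, (a : ℂ), β, 0, φ, hα, haC, hφd, fun p hp => ?_⟩
  rw [hrep p hp, hfeq p.1]
  exact Prod.ext rfl (by ring)

end
end

section
/- Let P be a real polynomial without harmonic terms. Let α, a, β, b ∈ ℂ and let φ : ℂ → ℂ be an entire function such that 2·Re(φ(z₁) + a·z₂ + b) + P(α·z₁ + β) = 0 for every (z₁, z₂) ∈ ℂ² satisfying 2·Re z₂ + P(z₁) = 0. Then: (i) a is real; (ii) φ is a polynomial; and (iii) 2·Re(φ(z) + b) − a·P(z) + P(α·z + β) = 0 for all z ∈ ℂ. -/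
open Complex ComplexConjugate Finset

open Filter Topology in
private lemma entire_conj_conj' {φ : ℂ → ℂ} (hφ : Differentiable ℂ φ) :
    Differentiable ℂ (fun w => conj (φ (conj w))) := by
  intro w
  have h := (hφ (conj w)).hasDerivAt
  rw [hasDerivAt_iff_tendsto] at h
  have hc : Tendsto (fun x : ℂ => (conj x : ℂ)) (𝓝 w) (𝓝 (conj w)) :=
    (Complex.continuous_conj.tendsto w)
  have h2 := h.comp hc
  have : HasDerivAt (fun w => conj (φ (conj w))) (conj (deriv φ (conj w))) w := by
    rw [hasDerivAt_iff_tendsto]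
    convert h2 using 2 with x
    simp only [Function.comp, smul_eq_mul]
    have e1 : (x - w) * conj (deriv φ (conj w))
        = conj (conj (x - w) * deriv φ (conj w)) := by rw [map_mul, conj_conj]
    rw [e1, ← map_sub, ← map_sub, ← map_sub (starRingEnd ℂ) x w]
    rw [RCLike.norm_conj, RCLike.norm_conj]
  exact this.differentiableAt

open Filter Topology in
private lemma entire_zero_of_real_zero' {h : ℂ → ℂ} (hh : Differentiable ℂ h)
    (h0 : ∀ x : ℝ, h x = 0) : ∀ z, h z = 0 := by
  have ha : AnalyticOnNhd ℂ h Set.univ :=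
    hh.differentiableOn.analyticOnNhd isOpen_univ
  have ht : Tendsto (fun n : ℕ => ((((n:ℝ)+1)⁻¹ : ℝ) : ℂ)) atTop (𝓝[≠] (0:ℂ)) := by
    apply tendsto_nhdsWithin_of_tendsto_nhds_of_eventually_within
    · have h1 : Tendsto (fun n : ℕ => (((n:ℝ)+1)⁻¹ : ℝ)) atTop (𝓝 0) :=
        tendsto_one_div_add_atTop_nhds_zero_nat.congr (by intro n; rw [one_div])
      exact ((Complex.continuous_ofReal.tendsto 0).comp h1 : _)
    · filter_upwards with n
      simp only [Set.mem_compl_iff, Set.mem_singleton_iff]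
      exact_mod_cast (by positivity : (((n:ℝ)+1)⁻¹ : ℝ) ≠ 0)
  have hfreq : ∃ᶠ z in 𝓝[≠] (0:ℂ), h z = 0 :=
    ht.frequently (Eventually.of_forall fun n => h0 _).frequently
  exact fun z => ha.eqOn_zero_of_preconnected_of_frequently_eq_zero isPreconnected_univ
    (Set.mem_univ 0) hfreq (Set.mem_univ z)

/-- if the map `(z₁,z₂) ↦ (α z₁ + β, φ(z₁) + a z₂ + b)` maps the boundary
`{2 Re z₂ + P(z₁) = 0}` of `G_P` into itself, where `P` is a real polynomial without
harmonic terms and `φ` is entire, then `a` is real, `φ` is a polynomial, and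
`2 Re(φ(z) + b) − a P(z) + P(α z + β) = 0` for all `z`. -/
theorem stmt2 (c : ℕ → ℕ → ℂ) (N : ℕ) (P : ℂ → ℝ)
    (hsym : ∀ j q, c j q = conj (c q j))
    (hharm : ∀ j q, j = 0 ∨ q = 0 → c j q = 0)
    (hsupp : ∀ j q, N < j ∨ N < q → c j q = 0)
    (hP : ∀ z : ℂ, (P z : ℂ) = ∑ j ∈ Finset.range (N + 1), ∑ q ∈ Finset.range (N + 1),
      c j q * z ^ j * (conj z) ^ q)
    (α a β b : ℂ) (φ : ℂ → ℂ) (hφ : Differentiable ℂ φ)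
    (hbd : ∀ z₁ z₂ : ℂ, 2 * z₂.re + P z₁ = 0 →
      2 * (φ z₁ + a * z₂ + b).re + P (α * z₁ + β) = 0) :
    a.im = 0 ∧ (∃ Q : Polynomial ℂ, ∀ z : ℂ, φ z = Q.eval z) ∧
      ∀ z : ℂ, 2 * (φ z + b).re - a.re * P z + P (α * z + β) = 0 := by
  -- `P 0 = 0`
  have hP0 : P 0 = 0 := by
    have h := hP 0
    have hz : (∑ j ∈ Finset.range (N+1), ∑ q ∈ Finset.range (N+1),
        c j q * (0:ℂ)^j * (conj (0:ℂ))^q) = 0 := by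
      apply Finset.sum_eq_zero; intro j _; apply Finset.sum_eq_zero; intro q _
      rcases Nat.eq_zero_or_pos j with hj | hj
      · simp [hharm j q (Or.inl hj)]
      · simp [zero_pow hj.ne']
    rw [hz] at h
    exact_mod_cast h
  -- `a` is real
  have h1 := hbd 0 0 (by simp [hP0])
  have h2 := hbd 0 I (by simp [hP0])
  simp only [Complex.add_re, Complex.mul_re, Complex.I_re, Complex.I_im, mul_zero, mul_one,
    Complex.zero_re, Complex.zero_im, zero_sub, add_zero, sub_zero, mul_zero, zero_mul] at h1 h2
  have haim : a.im = 0 := by linarith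
  -- the key identity (iii)
  have key : ∀ z : ℂ, 2 * (φ z + b).re - a.re * P z + P (α * z + β) = 0 := by
    intro z
    have hz2 : 2 * ((((-(P z)/2 : ℝ)) : ℂ)).re + P z = 0 := by
      rw [Complex.ofReal_re]; ring
    have h := hbd z _ hz2
    simp only [Complex.add_re, Complex.mul_re, Complex.ofReal_re, Complex.ofReal_im,
      mul_zero, sub_zero] at h ⊢
    linarith
  -- `φ` is a polynomial
  refine ⟨haim, ?_, key⟩
  set ψ : ℂ → ℂ := fun w => conj (φ (conj w)) with hψdef
  have hψ : Differentiable ℂ ψ := entire_conj_conj' hφ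
  set S : ℂ → ℂ → ℂ := fun z w => ∑ j ∈ Finset.range (N+1), ∑ q ∈ Finset.range (N+1),
    c j q * z^j * w^q with hS
  set T : ℂ → ℂ → ℂ := fun z w => ∑ j ∈ Finset.range (N+1), ∑ q ∈ Finset.range (N+1),
    c j q * (α*z+β)^j * (conj α * w + conj β)^q with hT
  set F : ℂ → ℂ → ℂ := fun z w => φ z + ψ w + 2*(b.re:ℂ) - (a.re:ℂ) * S z w + T z w with hF
  have hb : b + conj b = 2*(b.re:ℂ) := by rw [Complex.add_conj]; push_cast; ring
  have hdiag : ∀ z : ℂ, F z (conj z) = 0 := by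
    intro z
    have hk := congrArg (fun r : ℝ => (r : ℂ)) (key z)
    push_cast at hk
    rw [hP, hP] at hk
    rw [show conj (α*z+β) = conj α * conj z + conj β by rw [map_add, map_mul]] at hk
    have hre : ((φ z + b).re : ℂ) = (φ z + conj (φ z) + b + conj b)/2 := by
      rw [show φ z + conj (φ z) + b + conj b = (φ z + b) + conj (φ z + b) by rw [map_add]; ring,
        Complex.add_conj]
      push_cast; ring
    rw [hre] at hk
    simp only [hF, hS, hT, hψdef, conj_conj]
    linear_combination hk - hb
  -- differentiability of the pieces
  have hSd : ∀ (g h : ℂ → ℂ), Differentiable ℂ g → Differentiable ℂ h →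
      Differentiable ℂ (fun u => S (g u) (h u)) := by
    intro g h hg hh
    simp only [hS]
    apply Differentiable.fun_sum; intro j _
    apply Differentiable.fun_sum; intro q _
    exact ((differentiable_const _).mul (hg.pow j)).mul (hh.pow q)
  have hTd : ∀ (g h : ℂ → ℂ), Differentiable ℂ g → Differentiable ℂ h →
      Differentiable ℂ (fun u => T (g u) (h u)) := by
    intro g h hg hh
    simp only [hT]
    apply Differentiable.fun_sum; intro j _
    apply Differentiable.fun_sum; intro q _
    exact ((differentiable_const _).mul
      ((((differentiable_const α).mul hg).add_const β).pow j)).mul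
      ((((differentiable_const (conj α)).mul hh).add_const (conj β)).pow q)
  have hFd : ∀ (g h : ℂ → ℂ), Differentiable ℂ g → Differentiable ℂ h →
      Differentiable ℂ (fun u => F (g u) (h u)) := by
    intro g h hg hh
    simp only [hF]
    exact ((((hφ.comp hg).add (hψ.comp hh)).add_const _).sub
      ((differentiable_const _).mul (hSd g h hg hh))).add (hTd g h hg hh)
  -- vanishing on the complexification, first in `u` for real `v`, then in `v`
  have step1 : ∀ (v : ℝ) (u : ℂ), F (u + I*v) (u - I*v) = 0 := by
    intro v
    apply entire_zero_of_real_zero'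
    · exact hFd (fun u => u + I*v) (fun u => u - I*v)
        (differentiable_id.add_const _) (differentiable_id.sub_const _)
    · intro x
      have hconj : conj ((x:ℂ) + I*(v:ℂ)) = (x:ℂ) - I*(v:ℂ) := by
        rw [map_add, map_mul, Complex.conj_ofReal, Complex.conj_ofReal, Complex.conj_I]; ring
      rw [show (x:ℂ) - I*(v:ℂ) = conj ((x:ℂ) + I*(v:ℂ)) from hconj.symm]
      exact hdiag _
  have step2 : ∀ (u v : ℂ), F (u + I*v) (u - I*v) = 0 := by
    intro u
    apply entire_zero_of_real_zero'
    · exact hFd (fun v => u + I*v) (fun v => u - I*v)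
        ((differentiable_const u).add ((differentiable_const I).mul differentiable_id))
        ((differentiable_const u).sub ((differentiable_const I).mul differentiable_id))
    · intro x; exact step1 x u
  have hFzero : ∀ z w : ℂ, F z w = 0 := by
    intro z w
    have h := step2 ((z+w)/2) (-(I)*(z-w)/2)
    have e1 : (z+w)/2 + I*(-(I)*(z-w)/2) = z := by linear_combination (-(z-w)/2) * Complex.I_sq
    have e2 : (z+w)/2 - I*(-(I)*(z-w)/2) = w := by linear_combination ((z-w)/2) * Complex.I_sq
    rwa [e1, e2] at h
  -- extract the polynomial
  refine ⟨Polynomial.C ((a.re:ℂ)) * (∑ j ∈ Finset.range (N+1), ∑ q ∈ Finset.range (N+1),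
      Polynomial.C (c j q * (0:ℂ)^q) * Polynomial.X^j)
    - (∑ j ∈ Finset.range (N+1), ∑ q ∈ Finset.range (N+1),
      Polynomial.C (c j q * (conj α * 0 + conj β)^q) *
        (Polynomial.C α * Polynomial.X + Polynomial.C β)^j)
    - Polynomial.C (ψ 0 + 2*(b.re:ℂ)), fun z => ?_⟩
  have h := hFzero z 0
  simp only [hF] at h
  simp only [Polynomial.eval_sub, Polynomial.eval_mul, Polynomial.eval_C, Polynomial.eval_add,
    Polynomial.eval_finset_sum, Polynomial.eval_pow, Polynomial.eval_X]
  have hSz : S z 0 = ∑ j ∈ Finset.range (N+1), ∑ q ∈ Finset.range (N+1),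
      c j q * (0:ℂ)^q * z^j := by
    simp only [hS]; congr 1; funext; congr 1; funext; ring
  have hTz : T z 0 = ∑ j ∈ Finset.range (N+1), ∑ q ∈ Finset.range (N+1),
      c j q * (conj α * 0 + conj β)^q * (α*z+β)^j := by
    simp only [hT]; congr 1; funext; congr 1; funext; ring
  rw [hSz, hTz] at h
  linear_combination h
end

section
/- Let k be a positive integer and let α ∈ ℂ satisfy |1 + α^m|^{2k} = 1 + |α^m|^{2k} for every positive integer m. Then α = 0 or |α| = 1. -/
open Complex

lemma polyBound : ∀ (k : ℕ) (u : ℝ), -1 ≤ u → u ≤ 3 →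
    (1 + u) ^ k ≤ 1 + k * u + 5 ^ k * u ^ 2 := by
  intro k
  induction k with
  | zero => intro u h1 h3; simp; nlinarith [sq_nonneg u]
  | succ k ih =>
    intro u h1 h3
    have hb := ih u h1 h3
    have hnn : (0:ℝ) ≤ 1 + u := by linarith
    have h4 : (1+u)^k * (1+u) ≤ (1 + (k:ℝ)*u + 5^k*u^2) * (1+u) :=
      mul_le_mul_of_nonneg_right hb hnn
    have hk5 : (k:ℝ) ≤ 5 ^ k := by
      exact_mod_cast (Nat.lt_pow_self (n := k) (by norm_num : 1 < 5)).le
    have h5 : (0:ℝ) < 5 ^ k := by positivity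
    have hrw : (1+u)^(k+1) = (1+u)^k * (1+u) := by ring
    rw [hrw, pow_succ]
    push_cast
    nlinarith [sq_nonneg u, mul_nonneg (sub_nonneg.2 hk5) (sq_nonneg u),
      mul_nonneg (mul_nonneg h5.le (sq_nonneg u)) (by linarith : (0:ℝ) ≤ 3 - u)]

lemma key (k : ℕ) (hk : 0 < k) (α : ℂ) (hα : α ≠ 0) (hlt : ‖α‖ < 1)
    (h : ∀ m : ℕ, 1 ≤ m →
      ‖1 + α ^ m‖ ^ (2 * k) = 1 + ‖α ^ m‖ ^ (2 * k)) :
    False := by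
  set r := ‖α‖ with hr
  have hr0 : 0 < r := norm_pos_iff.mpr hα
  have hk1 : (1:ℝ) ≤ (k:ℝ) := by exact_mod_cast hk
  -- Step A: per-m bound on the real part
  have bound : ∀ m : ℕ, 1 ≤ m →
      -((9 * 5 ^ k + (k:ℝ)) * (r ^ m) ^ 2) ≤ (α ^ m).re ∧ (α ^ m).re ≤ 0 := by
    intro m hm
    have ht0 : 0 < r ^ m := pow_pos hr0 m
    have ht1 : r ^ m < 1 := pow_lt_one₀ hr0.le hlt (by omega)
    set t : ℝ := r ^ m with htdef
    set a : ℝ := (α ^ m).re with hadef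
    have habs : ‖α ^ m‖ = t := by rw [norm_pow]
    have ha : |a| ≤ t := by rw [← habs]; exact Complex.abs_re_le_norm _
    have ha1 : -t ≤ a := (abs_le.mp ha).1
    have ha2 : a ≤ t := (abs_le.mp ha).2
    have ht2 : t ^ 2 ≤ t := by nlinarith
    set u : ℝ := 2 * a + t ^ 2 with hudef
    have hsq : ‖1 + α ^ m‖ ^ 2 = 1 + u := by
      rw [Complex.sq_norm, Complex.normSq_add, Complex.normSq_one, one_mul,
        Complex.conj_re, Complex.normSq_eq_norm_sq, habs, hudef]
      ring
    have heq : (1 + u) ^ k = 1 + (t ^ 2) ^ k := by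
      have h' := h m hm
      rw [habs, pow_mul, pow_mul, hsq] at h'
      exact h'
    have hu1 : (-1:ℝ) ≤ u := by
      have := sq_nonneg (‖1 + α ^ m‖)
      rw [hsq] at this; linarith
    have hu_le : u ≤ 3 * t := by linarith
    have hu_ge : -(3 * t) ≤ u := by linarith [sq_nonneg t, ht0.le]
    have hu3 : u ≤ 3 := by linarith
    have hbern := one_add_mul_le_pow (show (-2:ℝ) ≤ u by linarith) k
    have htk : (t ^ 2) ^ k ≤ t ^ 2 :=
      pow_le_of_le_one (sq_nonneg t) (by linarith) (by omega)
    have hup : (k:ℝ) * u ≤ t ^ 2 := by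
      rw [heq] at hbern; linarith
    have hpoly := polyBound k u hu1 hu3
    have h5 : (0:ℝ) < 5 ^ k := by positivity
    have husq : u ^ 2 ≤ 9 * t ^ 2 := by
      nlinarith [mul_nonneg (by linarith : (0:ℝ) ≤ 3*t - u) (by linarith : (0:ℝ) ≤ 3*t + u)]
    have htknn : (0:ℝ) ≤ (t ^ 2) ^ k := by positivity
    have hlow : -(9 * 5 ^ k * t ^ 2) ≤ (k:ℝ) * u := by
      rw [heq] at hpoly
      have h2 := mul_le_mul_of_nonneg_left husq h5.le
      linarith
    have h2ka : 2 * (k:ℝ) * a = (k:ℝ) * u - (k:ℝ) * t ^ 2 := by rw [hudef]; ring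
    have hfackt : (0:ℝ) ≤ ((k:ℝ) - 1) * t ^ 2 :=
      mul_nonneg (by linarith) (sq_nonneg t)
    have h2kale : 2 * (k:ℝ) * a ≤ 0 := by linarith
    have hale : a ≤ 0 := by
      by_contra hac
      push_neg at hac
      have := mul_pos (show (0:ℝ) < 2 * (k:ℝ) by linarith) hac
      linarith
    have hfac : (2 * (k:ℝ) - 1) * a ≤ 0 :=
      mul_nonpos_of_nonneg_of_nonpos (by linarith) hale
    have hage : -((9 * 5 ^ k + (k:ℝ)) * t ^ 2) ≤ a := by linarith
    exact ⟨hage, hale⟩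
  -- Step B: abbreviate constants and pick a large m
  set C : ℝ := 9 * 5 ^ k + (k:ℝ) with hC
  have hC0 : 0 < C := by rw [hC]; positivity
  set D : ℝ := 2 * C ^ 2 + C with hD
  have hD0 : 0 < D := by rw [hD]; positivity
  obtain ⟨n, hn⟩ := exists_pow_lt_of_lt_one (show (0:ℝ) < 1 / D by positivity) hlt
  set m := n + 1 with hmdef
  have hm1 : 1 ≤ m := by omega
  have hrm : r ^ m ≤ r ^ n := by
    rw [hmdef, pow_succ]
    nlinarith [pow_pos hr0 n]
  set t : ℝ := r ^ m with htdef
  have ht0 : 0 < t := pow_pos hr0 m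
  have ht1 : t < 1 := pow_lt_one₀ hr0.le hlt (by omega)
  have hsmall : D * t < 1 := by
    have h1 : t < 1 / D := lt_of_le_of_lt hrm hn
    rw [lt_div_iff₀ hD0] at h1; linarith
  -- Step C: contradiction
  have hb1 := bound m hm1
  have hb2 := bound (2 * m) (by omega)
  set a : ℝ := (α ^ m).re with hadef
  set b : ℝ := (α ^ m).im with hbdef
  have hnorm : t ^ 2 = a * a + b * b := by
    have h1 := Complex.sq_norm (α ^ m)
    rw [Complex.normSq_apply, norm_pow] at h1
    exact h1
  have hpow : α ^ (2 * m) = α ^ m * α ^ m := by rw [two_mul, pow_add]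
  have h2m : (α ^ (2 * m)).re = a * a - b * b := by rw [hpow, Complex.mul_re]
  have hr2m : r ^ (2 * m) = t ^ 2 := by rw [htdef, mul_comm, pow_mul]
  have hb2' := hb2.1
  rw [hr2m, h2m] at hb2'
  have p1 : (a + C * t ^ 2) * a ≤ 0 :=
    mul_nonpos_of_nonneg_of_nonpos (by linarith [hb1.1]) hb1.2
  have p2 : (0:ℝ) ≤ C * t ^ 2 * (a + C * t ^ 2) :=
    mul_nonneg (mul_nonneg hC0.le (sq_nonneg t)) (by linarith [hb1.1])
  have ha2 : a * a ≤ C ^ 2 * (t ^ 2) ^ 2 := by nlinarith [p1, p2]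
  have hkey : t ^ 2 ≤ D * (t ^ 2) ^ 2 := by
    rw [hD]
    linarith [hnorm, hb2', ha2]
  have q1 : D * t * t ^ 3 < 1 * t ^ 3 :=
    mul_lt_mul_of_pos_right hsmall (by positivity)
  have q2 : t * t ^ 2 ≤ 1 * t ^ 2 :=
    mul_le_mul_of_nonneg_right ht1.le (sq_nonneg t)
  linarith [hkey, q1, q2, mul_pos ht0 ht0]

/-- if `k ≥ 1` and `|1 + α^m|^(2k) = 1 + |α^m|^(2k)` for every `m ≥ 1`,
then `α = 0` or `|α| = 1`. -/
theorem stmt6 (k : ℕ) (hk : 0 < k) (α : ℂ)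
    (h : ∀ m : ℕ, 1 ≤ m →
      ‖1 + α ^ m‖ ^ (2 * k) = 1 + ‖α ^ m‖ ^ (2 * k)) :
    α = 0 ∨ ‖α‖ = 1 := by
  by_cases h0 : α = 0
  · exact Or.inl h0
  right
  by_contra hne
  rcases (Ne.lt_or_gt hne) with hlt | hgt
  · exact key k hk α h0 hlt h
  · have hβ0 : α⁻¹ ≠ 0 := inv_ne_zero h0
    have hβlt : ‖α⁻¹‖ < 1 := by
      rw [norm_inv]
      exact inv_lt_one_of_one_lt₀ hgt
    refine key k hk α⁻¹ hβ0 hβlt ?_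
    intro m hm
    have hαm : α ^ m ≠ 0 := pow_ne_zero _ h0
    have htm : ‖α ^ m‖ ≠ 0 := norm_ne_zero_iff.mpr hαm
    have e1 : 1 + (α⁻¹) ^ m = (1 + α ^ m) * (α ^ m)⁻¹ := by
      rw [inv_pow, add_mul, one_mul, mul_inv_cancel₀ hαm]
      ring
    have e2 : ‖1 + (α⁻¹) ^ m‖
        = ‖1 + α ^ m‖ * (‖α ^ m‖)⁻¹ := by
      rw [e1, norm_mul, norm_inv]
    have e3 : ‖(α⁻¹) ^ m‖ = (‖α ^ m‖)⁻¹ := by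
      rw [inv_pow, norm_inv]
    rw [e2, e3, mul_pow, h m hm]
    rw [add_mul, one_mul, ← mul_pow, mul_inv_cancel₀ htm, one_pow]
    ring
end

section
/- Let p and q be positive integers with p ≠ q. Then there exists ε > 0 such that for every z ∈ ℂ with 0 < |z| < ε one has (1 + z)^p · (1 + conj z)^q ≠ 1 + z^p · (conj z)^q. In other words, the origin is an isolated zero of the real-analytic function f(z) = (1 + z)^p (1 + conj z)^q − 1 − z^p (conj z)^q. -/
open Complex ComplexConjugate

/-- Remainder bound for the binomial expansion. -/
lemma rem_bound (p : ℕ) (z : ℂ) (hz : ‖z‖ ≤ 1) :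
    ‖(1 + z) ^ p - 1 - p * z‖ ≤ 4 ^ p * (‖z‖) ^ 2 := by
  induction p with
  | zero => simp
  | succ n ih =>
    have key : (1 + z) ^ (n + 1) - 1 - (↑(n + 1) : ℂ) * z
        = (1 + z) * ((1 + z) ^ n - 1 - n * z) + n * z ^ 2 := by
      push_cast; ring
    rw [key]
    have h1 : ‖(1 + z) * ((1 + z) ^ n - 1 - n * z)‖
        ≤ 2 * (4 ^ n * (‖z‖) ^ 2) := by
      rw [norm_mul]
      have hb : ‖1 + z‖ ≤ 2 := by
        calc ‖1 + z‖ ≤ ‖1‖ + ‖z‖ :=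
              norm_add_le _ _
        _ ≤ 2 := by simp; linarith
      have := ih
      have h0 : (0:ℝ) ≤ ‖(1 + z) ^ n - 1 - n * z‖ := by positivity
      nlinarith [norm_nonneg (1 + z)]
    have h2 : ‖(n : ℂ) * z ^ 2‖ ≤ (n : ℝ) * (‖z‖) ^ 2 := by
      rw [norm_mul, norm_pow, Complex.norm_natCast]
    have h3 : (n : ℝ) ≤ 2 * 4 ^ n := by
      have := Nat.lt_two_pow_self (n := n)
      have h4 : (2:ℝ) ^ n ≤ 4 ^ n := by
        apply pow_le_pow_left₀ <;> norm_num
      have : (n : ℝ) < 2 ^ n := by exact_mod_cast this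
      nlinarith
    calc ‖(1 + z) * ((1 + z) ^ n - 1 - n * z) + n * z ^ 2‖
        ≤ ‖(1 + z) * ((1 + z) ^ n - 1 - n * z)‖
          + ‖(n : ℂ) * z ^ 2‖ := norm_add_le _ _
      _ ≤ 2 * (4 ^ n * (‖z‖) ^ 2) + (n : ℝ) * (‖z‖) ^ 2 := by
          linarith
      _ ≤ 4 ^ (n + 1) * (‖z‖) ^ 2 := by
          have h0 : (0:ℝ) ≤ (‖z‖) ^ 2 := by positivity
          have h4s : (4:ℝ) ^ (n + 1) = 4 ^ n * 4 := pow_succ _ _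
          nlinarith [mul_le_mul_of_nonneg_right h3 h0]

/-- The linear part `p z + q conj z` dominates `|z|` when `p ≠ q` are positive. -/
lemma lin_bound (p q : ℕ) (hp : 0 < p) (hq : 0 < q) (hpq : p ≠ q) (z : ℂ) :
    ‖z‖ ≤ ‖(p : ℂ) * z + q * conj z‖ := by
  have hsq : (‖z‖) ^ 2 ≤ (‖(p : ℂ) * z + q * conj z‖) ^ 2 := by
    rw [Complex.sq_norm, Complex.sq_norm]
    simp only [Complex.normSq_apply, Complex.add_re, Complex.add_im, Complex.mul_re,
      Complex.mul_im, Complex.conj_re, Complex.conj_im, Complex.natCast_re,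
      Complex.natCast_im]
    have hp1 : (1:ℝ) ≤ p := by exact_mod_cast hp
    have hq1 : (1:ℝ) ≤ q := by exact_mod_cast hq
    have hd : (1:ℝ) ≤ ((p:ℝ) - q) ^ 2 := by
      rcases hpq.lt_or_gt with h | h
      · have : (p:ℝ) + 1 ≤ q := by exact_mod_cast h
        nlinarith
      · have : (q:ℝ) + 1 ≤ p := by exact_mod_cast h
        nlinarith
    have hs : (1:ℝ) ≤ ((p:ℝ) + q) ^ 2 := by nlinarith
    have k1 : z.re ^ 2 ≤ ((p:ℝ) + q) ^ 2 * z.re ^ 2 := by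
      nlinarith [sq_nonneg z.re, mul_le_mul_of_nonneg_right hs (sq_nonneg z.re)]
    have k2 : z.im ^ 2 ≤ ((p:ℝ) - q) ^ 2 * z.im ^ 2 := by
      nlinarith [sq_nonneg z.im, mul_le_mul_of_nonneg_right hd (sq_nonneg z.im)]
    nlinarith [k1, k2]
  have h0 : (0:ℝ) ≤ ‖(p : ℂ) * z + q * conj z‖ := norm_nonneg _
  nlinarith [norm_nonneg z]

/-- for positive integers `p ≠ q`, the origin is an isolated zero of
`f(z) = (1 + z)^p (1 + conj z)^q − 1 − z^p (conj z)^q`. -/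
theorem stmt7 (p q : ℕ) (hp : 0 < p) (hq : 0 < q) (hpq : p ≠ q) :
    ∃ ε > (0 : ℝ), ∀ z : ℂ, 0 < ‖z‖ → ‖z‖ < ε →
      (1 + z) ^ p * (1 + conj z) ^ q ≠ 1 + z ^ p * (conj z) ^ q := by
  set C : ℝ := 4 ^ p + 4 ^ q + p * q + p * 4 ^ q + q * 4 ^ p + 4 ^ (p + q) + 1 with hC
  have hCpos : (0:ℝ) < C := by rw [hC]; positivity
  clear_value C
  refine ⟨min 1 (1 / C), lt_min one_pos (by positivity), fun z hz0 hzε heq => ?_⟩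
  set w : ℂ := conj z with hw
  set r : ℝ := ‖z‖ with hr
  clear_value w
  have hwabs : ‖w‖ = r := by rw [hw, hr]; exact Complex.norm_conj z
  have hr1 : r ≤ 1 := le_of_lt (lt_of_lt_of_le hzε (min_le_left _ _))
  have hrC : r < 1 / C := lt_of_lt_of_le hzε (min_le_right _ _)
  set R : ℂ := (1 + z) ^ p - 1 - p * z with hR
  set S : ℂ := (1 + w) ^ q - 1 - q * w with hS
  clear_value R
  clear_value S
  have hRb : ‖R‖ ≤ 4 ^ p * r ^ 2 := by
    rw [hR, hr]; exact rem_bound p z hr1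
  have hSb : ‖S‖ ≤ 4 ^ q * r ^ 2 := by
    rw [hS]
    have := rem_bound q w (by rw [hwabs]; exact hr1)
    rwa [hwabs] at this
  -- algebraic identity
  have key : (1 + z) ^ p * (1 + w) ^ q - 1 - p * z - q * w
      = R + S + ((p : ℂ) * z) * ((q : ℂ) * w) + ((p : ℂ) * z) * S
        + ((q : ℂ) * w) * R + R * S := by
    rw [hR, hS]; ring
  -- bounds on each piece
  have hr0 : (0:ℝ) ≤ r := norm_nonneg z
  have habs_pz : ‖(p : ℂ) * z‖ = p * r := by
    rw [norm_mul, Complex.norm_natCast, hr]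
  have habs_qw : ‖(q : ℂ) * w‖ = q * r := by
    rw [norm_mul, Complex.norm_natCast, hwabs]
  have hEb : ‖(1 + z) ^ p * (1 + w) ^ q - 1 - p * z - q * w‖
      ≤ (C - 1) * r ^ 2 := by
    rw [key]
    have t1 : ‖((p : ℂ) * z) * ((q : ℂ) * w)‖ ≤ (p * q : ℝ) * r ^ 2 := by
      rw [norm_mul, habs_pz, habs_qw]; nlinarith
    have t2 : ‖((p : ℂ) * z) * S‖ ≤ (p : ℝ) * 4 ^ q * r ^ 2 := by
      rw [norm_mul, habs_pz]
      have hp0 : (0:ℝ) ≤ (p:ℝ) := Nat.cast_nonneg p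
      have h4 : (0:ℝ) ≤ 4 ^ q * r ^ 2 := by positivity
      calc (p : ℝ) * r * ‖S‖ ≤ (p : ℝ) * r * (4 ^ q * r ^ 2) := by
            apply mul_le_mul_of_nonneg_left hSb; positivity
        _ ≤ (p : ℝ) * 4 ^ q * r ^ 2 := by
            nlinarith [mul_le_mul_of_nonneg_left hr1
              (by positivity : (0:ℝ) ≤ (p:ℝ) * 4 ^ q * r ^ 2)]
    have t3 : ‖((q : ℂ) * w) * R‖ ≤ (q : ℝ) * 4 ^ p * r ^ 2 := by
      rw [norm_mul, habs_qw]
      calc (q : ℝ) * r * ‖R‖ ≤ (q : ℝ) * r * (4 ^ p * r ^ 2) := by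
            apply mul_le_mul_of_nonneg_left hRb; positivity
        _ ≤ (q : ℝ) * 4 ^ p * r ^ 2 := by
            nlinarith [mul_le_mul_of_nonneg_left hr1
              (by positivity : (0:ℝ) ≤ (q:ℝ) * 4 ^ p * r ^ 2)]
    have t4 : ‖R * S‖ ≤ (4:ℝ) ^ (p + q) * r ^ 2 := by
      rw [norm_mul]
      have hR0 : (0:ℝ) ≤ ‖R‖ := norm_nonneg R
      have hS0 : (0:ℝ) ≤ ‖S‖ := norm_nonneg S
      have : ‖R‖ * ‖S‖ ≤ (4 ^ p * r ^ 2) * (4 ^ q * r ^ 2) := by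
        apply mul_le_mul hRb hSb hS0; positivity
      calc ‖R‖ * ‖S‖ ≤ (4 ^ p * r ^ 2) * (4 ^ q * r ^ 2) := this
        _ = 4 ^ (p + q) * r ^ 2 * r ^ 2 := by rw [pow_add]; ring
        _ ≤ 4 ^ (p + q) * r ^ 2 := by
            nlinarith [mul_le_mul_of_nonneg_left (mul_le_one₀ hr1 hr0 hr1)
              (by positivity : (0:ℝ) ≤ (4:ℝ) ^ (p + q) * r ^ 2), sq_nonneg r]
    have tri : ‖R + S + ((p : ℂ) * z) * ((q : ℂ) * w) + ((p : ℂ) * z) * S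
          + ((q : ℂ) * w) * R + R * S‖
        ≤ ‖R‖ + ‖S‖ + ‖((p : ℂ) * z) * ((q : ℂ) * w)‖
          + ‖((p : ℂ) * z) * S‖ + ‖((q : ℂ) * w) * R‖
          + ‖R * S‖ := by
      calc _ ≤ ‖R + S + ((p : ℂ) * z) * ((q : ℂ) * w) + ((p : ℂ) * z) * S
          + ((q : ℂ) * w) * R‖ + ‖R * S‖ := norm_add_le _ _
        _ ≤ _ := by
          have a1 := norm_add_le (R + S + ((p : ℂ) * z) * ((q : ℂ) * w)
            + ((p : ℂ) * z) * S) (((q : ℂ) * w) * R)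
          have a2 := norm_add_le (R + S + ((p : ℂ) * z) * ((q : ℂ) * w))
            (((p : ℂ) * z) * S)
          have a3 := norm_add_le (R + S) (((p : ℂ) * z) * ((q : ℂ) * w))
          have a4 := norm_add_le R S
          linarith
    have : (C - 1) * r ^ 2 = 4 ^ p * r ^ 2 + 4 ^ q * r ^ 2 + (p * q : ℝ) * r ^ 2
        + (p : ℝ) * 4 ^ q * r ^ 2 + (q : ℝ) * 4 ^ p * r ^ 2 + 4 ^ (p + q) * r ^ 2 := by
      rw [hC]; ring
    linarith
  -- bound on z^p w^q
  have hzw : ‖z ^ p * w ^ q‖ ≤ r ^ 2 := by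
    rw [norm_mul, norm_pow, norm_pow, hwabs, ← hr, ← pow_add]
    have hpq2 : 2 ≤ p + q := by omega
    exact pow_le_pow_of_le_one hr0 hr1 hpq2
  -- from the equation, the linear part is small
  have hlin : (p : ℂ) * z + q * w
      = -(((1 + z) ^ p * (1 + w) ^ q - 1 - p * z - q * w) - z ^ p * w ^ q) := by
    have : (1 + z) ^ p * (1 + w) ^ q = 1 + z ^ p * w ^ q := heq
    rw [this]; ring
  have hsmall : ‖(p : ℂ) * z + q * w‖ ≤ C * r ^ 2 := by
    rw [hlin, norm_neg]
    calc ‖((1 + z) ^ p * (1 + w) ^ q - 1 - p * z - q * w) - z ^ p * w ^ q‖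
        ≤ ‖(1 + z) ^ p * (1 + w) ^ q - 1 - p * z - q * w‖
          + ‖z ^ p * w ^ q‖ := by
            rw [sub_eq_add_neg]
            calc _ ≤ _ := norm_add_le _ _
              _ = _ := by rw [norm_neg]
      _ ≤ (C - 1) * r ^ 2 + r ^ 2 := by linarith
      _ = C * r ^ 2 := by ring
  have hbig : r ≤ ‖(p : ℂ) * z + q * w‖ := by
    rw [hw, hr]; exact lin_bound p q hp hq hpq z
  have : C * r ^ 2 < r := by
    have h1 : C * r < 1 := by
      rw [lt_div_iff₀ hCpos] at hrC
      linarith [mul_comm r C]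
    calc C * r ^ 2 = (C * r) * r := by ring
      _ < 1 * r := mul_lt_mul_of_pos_right h1 hz0
      _ = r := one_mul r
  linarith
end

section
/- Let N be a natural number and let h : ℝ × ℂ → ℂ satisfy: h(0, z) = 0 for all z ∈ ℂ; for every s ∈ ℝ the function z ↦ h(s, z) is a polynomial of degree at most N; for every z ∈ ℂ the function s ↦ h(s, z) is differentiable at s = 0; and the cocycle relation h(s₁ + s₂, z) = h(s₂, z) + h(s₁, z + i·s₂) holds for all s₁, s₂ ∈ ℝ and z ∈ ℂ. Then there exists a polynomial q : ℂ → ℂ such that h(s, z) = q(z + i·s) − q(z) for all s ∈ ℝ and z ∈ ℂ. -/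
open Complex

private lemma antideriv_exists (P : Polynomial ℂ) :
    ∃ Q : Polynomial ℂ, Q.derivative = P := by
  refine ⟨P.sum (fun n a => Polynomial.C (a / (n + 1)) * Polynomial.X ^ (n + 1)), ?_⟩
  rw [Polynomial.sum, map_sum]
  conv_rhs => rw [← Polynomial.sum_C_mul_X_pow_eq P, Polynomial.sum]
  refine Finset.sum_congr rfl fun n _ => ?_
  rw [Polynomial.derivative_C_mul, Polynomial.derivative_X_pow]
  push_cast
  rw [← mul_assoc, ← Polynomial.C_mul]
  have hne : ((n : ℂ) + 1) ≠ 0 := by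
    exact_mod_cast Nat.cast_add_one_ne_zero (R := ℂ) n
  congr 2
  field_simp

/-- a cocycle `h : ℝ × ℂ → ℂ` with `h(0,·) = 0`, polynomial of degree `≤ N`
in the second variable, differentiable at `s = 0` in the first variable, and satisfying
`h(s₁+s₂, z) = h(s₂, z) + h(s₁, z + i s₂)`, has the form `h(s,z) = q(z + i s) − q(z)`
for a polynomial `q`. -/
theorem stmt9 (N : ℕ) (h : ℝ → ℂ → ℂ)
    (h0 : ∀ z : ℂ, h 0 z = 0)
    (hpoly : ∀ s : ℝ, ∃ p : Polynomial ℂ, p.natDegree ≤ N ∧ ∀ z : ℂ, h s z = p.eval z)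
    (hdiff : ∀ z : ℂ, DifferentiableAt ℝ (fun s : ℝ => h s z) 0)
    (hcoc : ∀ s₁ s₂ : ℝ, ∀ z : ℂ, h (s₁ + s₂) z = h s₂ z + h s₁ (z + Complex.I * s₂)) :
    ∃ q : Polynomial ℂ, ∀ s : ℝ, ∀ z : ℂ,
      h s z = q.eval (z + Complex.I * s) - q.eval z := by
  classical
  set v : ℕ → ℂ := fun j => (j : ℂ) with hv
  have hvinj : Set.InjOn v ((Finset.range (N + 1) : Finset ℕ) : Set ℕ) :=
    fun a _ b _ hab => Nat.cast_injective hab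
  set T : Finset ℕ := Finset.range (N + 1) with hT
  -- interpolation identity
  have hinterp : ∀ s : ℝ, ∀ z : ℂ,
      h s z = ∑ j ∈ T, (Lagrange.basis T v j).eval z * h s (v j) := by
    intro s z
    obtain ⟨p, hdeg, hp⟩ := hpoly s
    have hdeg' : p.degree < (T.card : ℕ) := by
      refine lt_of_le_of_lt p.degree_le_natDegree ?_
      simp only [hT, Finset.card_range]
      exact_mod_cast Nat.lt_succ_of_le hdeg
    have hi := Lagrange.eq_interpolate (v := v) hvinj hdeg'
    simp only [hp]
    conv_lhs => rw [hi]
    simp only [Lagrange.interpolate_apply, Polynomial.eval_finset_sum,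
      Polynomial.eval_mul, Polynomial.eval_C]
    exact Finset.sum_congr rfl fun j _ => mul_comm _ _
  -- derivative at zero
  set g : ℂ → ℂ := fun z => deriv (fun s : ℝ => h s z) 0 with hg
  have hgd : ∀ z : ℂ, HasDerivAt (fun s : ℝ => h s z) (g z) 0 :=
    fun z => (hdiff z).hasDerivAt
  -- g is a polynomial
  set P : Polynomial ℂ := ∑ j ∈ T, Polynomial.C (g (v j)) * Lagrange.basis T v j with hP
  have hgP : ∀ z : ℂ, g z = P.eval z := by
    intro z
    have h1 : HasDerivAt (fun s : ℝ => ∑ j ∈ T, (Lagrange.basis T v j).eval z * h s (v j))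
        (∑ j ∈ T, (Lagrange.basis T v j).eval z * g (v j)) 0 :=
      HasDerivAt.fun_sum fun j _ => (hgd (v j)).const_mul _
    have h2 : (fun s : ℝ => ∑ j ∈ T, (Lagrange.basis T v j).eval z * h s (v j))
        = fun s : ℝ => h s z := by
      funext s; exact (hinterp s z).symm
    rw [h2] at h1
    have := (hgd z).unique h1
    rw [this, hP]
    simp only [Polynomial.eval_finset_sum, Polynomial.eval_mul, Polynomial.eval_C]
    exact Finset.sum_congr rfl fun j _ => mul_comm _ _
  -- derivative everywhere
  have hD : ∀ (s : ℝ) (z : ℂ), HasDerivAt (fun t : ℝ => h t z) (g (z + Complex.I * s)) s := by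
    intro s z
    have heq : (fun t : ℝ => h t z)
        = fun t : ℝ => h s z + h (t - s) (z + Complex.I * s) := by
      funext t
      have := hcoc (t - s) s z
      rw [sub_add_cancel] at this
      rw [this]
    rw [heq]
    have hinner : HasDerivAt (fun t : ℝ => t - s) 1 s := by
      simpa using (hasDerivAt_id s).sub_const s
    have hcomp : HasDerivAt (fun t : ℝ => h (t - s) (z + Complex.I * s))
        (g (z + Complex.I * s)) s := by
      have := HasDerivAt.scomp (𝕜 := ℝ) s
        (by simpa using (hgd (z + Complex.I * s))) hinner
      simpa [Function.comp_def] using this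
    simpa using hcomp.const_add (h s z)
  -- antiderivative
  obtain ⟨Q, hQ⟩ := antideriv_exists (Polynomial.C (-Complex.I) * P)
  refine ⟨Q, fun s z => ?_⟩
  -- derivative of the candidate
  have hφ : ∀ (s : ℝ), HasDerivAt (fun t : ℝ => Q.eval (z + Complex.I * t))
      (g (z + Complex.I * s)) s := by
    intro s
    have hc : HasDerivAt (fun w : ℂ => Q.eval (z + Complex.I * w))
        (Q.derivative.eval (z + Complex.I * s) * Complex.I) (s : ℂ) := by
      have h1 : HasDerivAt (fun w : ℂ => z + Complex.I * w) Complex.I (s : ℂ) := by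
        simpa using ((hasDerivAt_id ((s : ℝ) : ℂ)).const_mul Complex.I).const_add z
      simpa [Function.comp_def] using (Q.hasDerivAt (z + Complex.I * s)).comp (s : ℂ) h1
    have := hc.comp_ofReal
    have heval : Q.derivative.eval (z + Complex.I * s) * Complex.I
        = g (z + Complex.I * s) := by
      rw [hQ, Polynomial.eval_mul, Polynomial.eval_C, ← hgP]
      ring_nf
      rw [Complex.I_sq]
      ring
    rwa [heval] at this
  -- conclude: difference has zero derivative
  set D : ℝ → ℂ := fun t => h t z - (Q.eval (z + Complex.I * t) - Q.eval z) with hDdef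
  have hDd : ∀ t : ℝ, HasDerivAt D 0 t := by
    intro t
    have := ((hD t z).sub ((hφ t).sub_const (Q.eval z)))
    rw [sub_self] at this
    exact this
  have hconst : ∀ t : ℝ, D t = D 0 := by
    intro t
    have hdiffD : Differentiable ℝ D := fun t => (hDd t).differentiableAt
    have hderiv : ∀ t : ℝ, deriv D t = 0 := fun t => (hDd t).deriv
    exact is_const_of_deriv_eq_zero hdiffD hderiv t 0
  have hD0 : D 0 = 0 := by
    simp [hDdef, h0 z]
  have := hconst s
  rw [hD0] at this
  exact sub_eq_zero.mp this
end

section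
/- Let μ be a nonzero real number and let P be a real polynomial without harmonic terms which is not identically zero, say P(z) = Σ_{j,q≥1} c_{j,q} z^j (conj z)^q, and write P_z(z) = Σ_{j,q≥1} j·c_{j,q} z^{j−1} (conj z)^q for its derivative in z. Then there do not exist entire functions h₁, h₂ : ℂ → ℂ with h₁ nowhere vanishing such that for all z ∈ ℂ: (h₁(z)·P_z(z) + h₂(z)) + exp(−2·i·μ·P(z)) · conj( h₁(z)·P_z(z) + h₂(z) ) = 0. Equivalently: if entire functions h₁, h₂ satisfy this identity for all z ∈ ℂ, then h₁ must vanish somewhere in ℂ. -/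
open Complex ComplexConjugate Finset Polynomial Filter

def IsPolyFun (f : ℂ → ℂ) : Prop := ∃ p : Polynomial ℂ, ∀ z, f z = p.eval z

lemma isPolyFun_const (a : ℂ) : IsPolyFun (fun _ => a) := ⟨C a, by simp⟩

lemma isPolyFun_cpow (a : ℂ) (n : ℕ) : IsPolyFun (fun z => a * z ^ n) := ⟨C a * X ^ n, by simp⟩

lemma IsPolyFun.mul {f g : ℂ → ℂ} (hf : IsPolyFun f) (hg : IsPolyFun g) :
    IsPolyFun (fun z => f z * g z) := by
  obtain ⟨p, hp⟩ := hf; obtain ⟨q, hq⟩ := hg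
  exact ⟨p * q, fun z => by simp [hp, hq]⟩

lemma IsPolyFun.add {f g : ℂ → ℂ} (hf : IsPolyFun f) (hg : IsPolyFun g) :
    IsPolyFun (fun z => f z + g z) := by
  obtain ⟨p, hp⟩ := hf; obtain ⟨q, hq⟩ := hg
  exact ⟨p + q, fun z => by simp [hp, hq]⟩

lemma IsPolyFun.sub {f g : ℂ → ℂ} (hf : IsPolyFun f) (hg : IsPolyFun g) :
    IsPolyFun (fun z => f z - g z) := by
  obtain ⟨p, hp⟩ := hf; obtain ⟨q, hq⟩ := hg
  exact ⟨p - q, fun z => by simp [hp, hq]⟩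

lemma isPolyFun_sum {ι : Type*} (s : Finset ι) (f : ι → ℂ → ℂ)
    (h : ∀ i ∈ s, IsPolyFun (f i)) : IsPolyFun (fun z => ∑ i ∈ s, f i z) := by
  classical
  induction s using Finset.cons_induction with
  | empty => exact ⟨0, by simp⟩
  | cons a s ha ih =>
    obtain ⟨p, hp⟩ := h a (Finset.mem_cons_self a s)
    obtain ⟨q, hq⟩ := ih (fun i hi => h i (Finset.mem_cons_of_mem hi))
    refine ⟨p + q, fun z => ?_⟩
    show ∑ i ∈ Finset.cons a s ha, f i z = eval z (p + q)
    rw [Finset.sum_cons, hp z]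
    have := hq z
    simp only at this
    rw [this, eval_add]

lemma coeff_zero_of_sum_zero (n : ℕ) (a : ℕ → ℂ)
    (h : ∀ z : ℂ, ∑ j ∈ range n, a j * z ^ j = 0) : ∀ j ∈ range n, a j = 0 := by
  have hp : (∑ j ∈ range n, C (a j) * X ^ j : Polynomial ℂ) = 0 := by
    apply Polynomial.funext
    intro r
    simpa [Polynomial.eval_finset_sum] using h r
  intro j hj
  have h2 := congrArg (fun p : Polynomial ℂ => p.coeff j) hp
  simp only [Polynomial.finset_sum_coeff, Polynomial.coeff_zero] at h2
  rw [Finset.sum_eq_single j] at h2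
  · simpa using h2
  · intro b _ hb
    simp [Polynomial.coeff_C_mul, Polynomial.coeff_X_pow, Ne.symm hb]
  · intro hnj; exact absurd hj hnj
open Complex ComplexConjugate Finset Polynomial

lemma entire_polyfun_aux (n : ℕ) : ∀ (u : ℂ → ℂ), Continuous u → ∀ p q : Polynomial ℂ,
    p ≠ 0 → p.natDegree ≤ n → (∀ z, u z * p.eval z = q.eval z) →
    ∃ r : Polynomial ℂ, ∀ z, u z = r.eval z := by
  induction n with
  | zero =>
    intro u hu p q hp hdeg h
    have hpC : p = C (p.coeff 0) := Polynomial.eq_C_of_natDegree_le_zero hdeg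
    have ha : p.coeff 0 ≠ 0 := fun h0 => hp (by rw [hpC, h0, map_zero])
    refine ⟨C (p.coeff 0)⁻¹ * q, fun z => ?_⟩
    have hz := h z
    rw [hpC, eval_C] at hz
    rw [eval_mul, eval_C, ← hz]
    field_simp
  | succ n ih =>
    intro u hu p q hp hdeg h
    by_cases h0 : p.natDegree = 0
    · have hpC : p = C (p.coeff 0) := Polynomial.eq_C_of_natDegree_le_zero (le_of_eq h0)
      have ha : p.coeff 0 ≠ 0 := fun h0' => hp (by rw [hpC, h0', map_zero])
      refine ⟨C (p.coeff 0)⁻¹ * q, fun z => ?_⟩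
      have hz := h z
      rw [hpC, eval_C] at hz
      rw [eval_mul, eval_C, ← hz]
      field_simp
    · have hdpos : 0 < p.degree := Polynomial.natDegree_pos_iff_degree_pos.mp (Nat.pos_of_ne_zero h0)
      obtain ⟨a, ha⟩ := Complex.exists_root hdpos
      obtain ⟨p₁, hp₁⟩ := (Polynomial.dvd_iff_isRoot).mpr ha
      have hqa : q.IsRoot a := by
        show eval a q = 0
        rw [← h a, show eval a p = 0 from ha, mul_zero]
      obtain ⟨q₁, hq₁⟩ := (Polynomial.dvd_iff_isRoot).mpr hqa
      have hp₁ne : p₁ ≠ 0 := by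
        rintro rfl
        rw [mul_zero] at hp₁
        exact hp hp₁
      have hdeg₁ : p₁.natDegree ≤ n := by
        have hXa : (X - C a : Polynomial ℂ) ≠ 0 := Polynomial.X_sub_C_ne_zero a
        have hm := Polynomial.natDegree_mul hXa hp₁ne
        rw [← hp₁, Polynomial.natDegree_X_sub_C] at hm
        omega
      have hnew : ∀ z, u z * p₁.eval z = q₁.eval z := by
        have heqn : (fun z => u z * p₁.eval z) = (fun z => q₁.eval z) := by
          apply Continuous.ext_on (dense_compl_singleton a) (hu.mul p₁.continuous)
            q₁.continuous
          intro z hz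
          have hz' : z - a ≠ 0 := sub_ne_zero.mpr hz
          have hzz := h z
          rw [hp₁, hq₁] at hzz
          simp only [eval_mul, eval_sub, eval_X, eval_C] at hzz
          show u z * p₁.eval z = q₁.eval z
          apply mul_left_cancel₀ hz'
          linear_combination hzz
        exact fun z => congrFun heqn z
      exact ih u hu p₁ q₁ hp₁ne hdeg₁ hnew

lemma const_of_mul_eq_polyfun {u s g : ℂ → ℂ} (hu : Continuous u) (hune : ∀ z, u z ≠ 0)
    (hs : ∃ p : Polynomial ℂ, ∀ z, s z = p.eval z) (hg : ∃ p : Polynomial ℂ, ∀ z, g z = p.eval z)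
    (hsne : ∃ z, s z ≠ 0) (h : ∀ z, u z * s z = g z) :
    ∀ z, u z = u 0 := by
  obtain ⟨p, hp⟩ := hs
  obtain ⟨q, hq⟩ := hg
  have hpne : p ≠ 0 := by
    rintro rfl
    obtain ⟨z, hz⟩ := hsne
    exact hz (by rw [hp z]; simp)
  obtain ⟨r, hr⟩ := entire_polyfun_aux p.natDegree u hu p q hpne le_rfl
    (fun z => by rw [← hp, ← hq]; exact h z)
  have hrC : r.degree ≤ 0 := by
    by_contra hd
    push_neg at hd
    obtain ⟨z, hz⟩ := Complex.exists_root hd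
    exact hune z (by rw [hr z]; exact hz)
  have hC := Polynomial.eq_C_of_degree_le_zero hrC
  intro z
  rw [hr z, hr 0, hC]
  simp

lemma eq_zero_of_cexp_eq_one (G : ℂ → ℂ) (hG : Continuous G) (h0 : G 0 = 0)
    (h1 : ∀ z, Complex.exp (G z) = 1) : ∀ z, G z = 0 := by
  have hA : IsClopen (G ⁻¹' {0}) := by
    constructor
    · exact IsClosed.preimage hG isClosed_singleton
    · rw [isOpen_iff_mem_nhds]
      intro z hz
      have hz0 : G z = 0 := hz
      have hmem : G z ∈ Metric.ball (0:ℂ) 6 := by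
        simp [hz0]
      have hcont : ∀ᶠ y in nhds z, G y ∈ Metric.ball (0:ℂ) 6 :=
        hG.continuousAt.eventually_mem (Metric.isOpen_ball.mem_nhds hmem)
      filter_upwards [hcont] with y hy
      show G y = 0
      obtain ⟨k, hk⟩ := (Complex.exp_eq_one_iff).mp (h1 y)
      have hnorm : ‖G y‖ < 6 := by
        simpa [Metric.mem_ball, Complex.dist_eq] using hy
      have hknorm : ‖G y‖ = |(k : ℝ)| * (2 * Real.pi) := by
        rw [hk]
        simp [norm_mul, abs_of_pos Real.pi_pos]
      by_cases hk0 : k = 0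
      · rw [hk, hk0]; simp
      · exfalso
        have h1k : (1:ℝ) ≤ |(k:ℝ)| := by
          exact_mod_cast Int.one_le_abs hk0
        have hpi : (6:ℝ) < 2 * Real.pi := by
          have := Real.pi_gt_three
          linarith
        have : (6:ℝ) ≤ ‖G y‖ := by
          rw [hknorm]
          nlinarith [Real.pi_gt_three]
        linarith
  have huniv : G ⁻¹' {0} = Set.univ :=
    hA.eq_univ ⟨0, by simp [h0]⟩
  intro z
  have : z ∈ G ⁻¹' {0} := huniv ▸ Set.mem_univ z
  exact this
lemma entire_zero_on_reals (f : ℂ → ℂ) (hf : Differentiable ℂ f) (h : ∀ x : ℝ, f x = 0) :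
    ∀ z, f z = 0 := by
  have ha : AnalyticOnNhd ℂ f Set.univ := analyticOnNhd_univ_iff_differentiable.mpr hf
  have freq : ∃ᶠ z in nhdsWithin (0:ℂ) {(0:ℂ)}ᶜ, f z = 0 := by
    have ht : Filter.Tendsto (fun n : ℕ => ((1/(n+1) : ℝ) : ℂ)) Filter.atTop
        (nhdsWithin 0 {(0:ℂ)}ᶜ) := by
      apply tendsto_nhdsWithin_of_tendsto_nhds_of_eventually_within
      · have h1 : Filter.Tendsto (fun n : ℕ => (1/(n+1) : ℝ)) Filter.atTop (nhds 0) :=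
          tendsto_one_div_add_atTop_nhds_zero_nat
        have h2 := (Complex.continuous_ofReal.tendsto 0).comp h1
        simpa [Function.comp_def] using h2
      · filter_upwards with n
        simp only [Set.mem_compl_iff, Set.mem_singleton_iff]
        exact Complex.ofReal_ne_zero.mpr (by positivity)
    exact ht.frequently (Filter.Frequently.of_forall fun n => h _)
  have := ha.eqOn_zero_of_preconnected_of_frequently_eq_zero isPreconnected_univ
    (Set.mem_univ 0) freq
  exact fun z => this (Set.mem_univ z)

lemma differentiable_conj_conj (h : ℂ → ℂ) (hh : Differentiable ℂ h) :
    Differentiable ℂ fun w => (starRingEnd ℂ) (h ((starRingEnd ℂ) w)) := by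
  intro w
  set L := Complex.conjCLE.toContinuousLinearMap with hL
  have hLf : ∀ x : ℂ, L x = (starRingEnd ℂ) x := fun x => rfl
  set d := deriv h ((starRingEnd ℂ) w) with hd
  have hder : HasFDerivAt h (ContinuousLinearMap.smulRight (1 : ℂ →L[ℂ] ℂ) d)
      ((starRingEnd ℂ) w) := (hh _).hasDerivAt.hasFDerivAt
  have hc1 : HasFDerivAt (fun x : ℂ => L x) L w := L.hasFDerivAt
  have hcomp1 := (hder.restrictScalars ℝ).comp w hc1
  have hc2 : HasFDerivAt (fun x : ℂ => L x) L (h (L w)) := L.hasFDerivAt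
  have hcomp2 := hc2.comp w hcomp1
  have hmap : (ContinuousLinearMap.smulRight (1 : ℂ →L[ℂ] ℂ)
      ((starRingEnd ℂ) d)).restrictScalars ℝ
      = L.comp (((ContinuousLinearMap.smulRight (1 : ℂ →L[ℂ] ℂ) d).restrictScalars ℝ).comp L) := by
    apply ContinuousLinearMap.ext
    intro v
    simp only [ContinuousLinearMap.coe_restrictScalars', ContinuousLinearMap.comp_apply,
      ContinuousLinearMap.smulRight_apply, ContinuousLinearMap.one_apply, smul_eq_mul, hL,
      ContinuousLinearEquiv.coe_coe, Complex.conjCLE_apply, map_mul, Complex.conj_conj]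
  have hfin : HasFDerivAt (fun x : ℂ => L (h (L x)))
      (ContinuousLinearMap.smulRight (1 : ℂ →L[ℂ] ℂ) ((starRingEnd ℂ) d)) w :=
    hasFDerivAt_of_restrictScalars ℝ hcomp2 hmap
  exact hfin.differentiableAt

noncomputable def ptil (c : ℕ → ℕ → ℂ) (N : ℕ) (z w : ℂ) : ℂ :=
  ∑ j ∈ range (N+1), ∑ q ∈ range (N+1), c j q * z ^ j * w ^ q

noncomputable def pzz (c : ℕ → ℕ → ℂ) (N : ℕ) (z w : ℂ) : ℂ :=
  ∑ j ∈ range (N+1), ∑ q ∈ range (N+1), (j:ℂ) * c j q * z ^ (j-1) * w ^ q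

noncomputable def qzf (c : ℕ → ℕ → ℂ) (N : ℕ) (z w : ℂ) : ℂ :=
  ∑ j ∈ range (N+1), ∑ q ∈ range (N+1), (j:ℂ) * (starRingEnd ℂ) (c j q) * w ^ (j-1) * z ^ q

noncomputable def ptw (c : ℕ → ℕ → ℂ) (N : ℕ) (z w : ℂ) : ℂ :=
  ∑ j ∈ range (N+1), ∑ q ∈ range (N+1), c j q * z ^ j * ((q:ℂ) * w ^ (q-1))

noncomputable def pzw (c : ℕ → ℕ → ℂ) (N : ℕ) (z w : ℂ) : ℂ :=
  ∑ j ∈ range (N+1), ∑ q ∈ range (N+1), (j:ℂ) * c j q * z ^ (j-1) * ((q:ℂ) * w ^ (q-1))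

noncomputable def qzw (c : ℕ → ℕ → ℂ) (N : ℕ) (z w : ℂ) : ℂ :=
  ∑ j ∈ range (N+1), ∑ q ∈ range (N+1),
    (j:ℂ) * (starRingEnd ℂ) (c j q) * (((j-1 : ℕ):ℂ) * w ^ (j-1-1)) * z ^ q

lemma hasDerivAt_ptil_w (c : ℕ → ℕ → ℂ) (N : ℕ) (z w₀ : ℂ) :
    HasDerivAt (fun w => ptil c N z w) (ptw c N z w₀) w₀ := by
  simp only [ptil, ptw]
  apply HasDerivAt.fun_sum
  intro j _
  apply HasDerivAt.fun_sum
  intro q _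
  exact (hasDerivAt_pow q w₀).const_mul (c j q * z ^ j)

lemma hasDerivAt_pzz_w (c : ℕ → ℕ → ℂ) (N : ℕ) (z w₀ : ℂ) :
    HasDerivAt (fun w => pzz c N z w) (pzw c N z w₀) w₀ := by
  simp only [pzz, pzw]
  apply HasDerivAt.fun_sum
  intro j _
  apply HasDerivAt.fun_sum
  intro q _
  exact (hasDerivAt_pow q w₀).const_mul ((j:ℂ) * c j q * z ^ (j-1))

lemma hasDerivAt_qzf_w (c : ℕ → ℕ → ℂ) (N : ℕ) (z w₀ : ℂ) :
    HasDerivAt (fun w => qzf c N z w) (qzw c N z w₀) w₀ := by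
  simp only [qzf, qzw]
  apply HasDerivAt.fun_sum
  intro j _
  apply HasDerivAt.fun_sum
  intro q _
  exact (((hasDerivAt_pow (j-1) w₀).const_mul ((j:ℂ) * (starRingEnd ℂ) (c j q))).mul_const (z ^ q))

lemma diff_ptil_z (c : ℕ → ℕ → ℂ) (N : ℕ) (w : ℂ) :
    Differentiable ℂ (fun z => ptil c N z w) := by
  simp only [ptil]
  apply Differentiable.fun_sum
  intro j _
  apply Differentiable.fun_sum
  intro q _
  exact ((differentiable_pow j).const_mul (c j q)).mul_const (w ^ q)

lemma diff2_ptil (c : ℕ → ℕ → ℂ) (N : ℕ) :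
    Differentiable ℂ (fun p : ℂ × ℂ => ptil c N p.1 p.2) := by
  simp only [ptil]
  apply Differentiable.fun_sum
  intro j _
  apply Differentiable.fun_sum
  intro q _
  exact ((differentiable_fst.pow j).const_mul (c j q)).mul (differentiable_snd.pow q)

lemma diff2_pzz (c : ℕ → ℕ → ℂ) (N : ℕ) :
    Differentiable ℂ (fun p : ℂ × ℂ => pzz c N p.1 p.2) := by
  simp only [pzz]
  apply Differentiable.fun_sum
  intro j _
  apply Differentiable.fun_sum
  intro q _
  exact ((differentiable_fst.pow (j-1)).const_mul ((j:ℂ) * c j q)).mul (differentiable_snd.pow q)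

lemma diff2_qzf (c : ℕ → ℕ → ℂ) (N : ℕ) :
    Differentiable ℂ (fun p : ℂ × ℂ => qzf c N p.1 p.2) := by
  simp only [qzf]
  apply Differentiable.fun_sum
  intro j _
  apply Differentiable.fun_sum
  intro q _
  exact ((differentiable_snd.pow (j-1)).const_mul ((j:ℂ) * (starRingEnd ℂ) (c j q))).mul
    (differentiable_fst.pow q)

lemma ipf_ptw (c : ℕ → ℕ → ℂ) (N : ℕ) (w : ℂ) : IsPolyFun (fun z => ptw c N z w) := by
  simp only [ptw]
  apply isPolyFun_sum; intro j _
  apply isPolyFun_sum; intro q _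
  exact (isPolyFun_cpow (c j q) j).mul (isPolyFun_const ((q:ℂ) * w ^ (q-1)))

lemma ipf_pzw (c : ℕ → ℕ → ℂ) (N : ℕ) (w : ℂ) : IsPolyFun (fun z => pzw c N z w) := by
  simp only [pzw]
  apply isPolyFun_sum; intro j _
  apply isPolyFun_sum; intro q _
  exact (isPolyFun_cpow ((j:ℂ) * c j q) (j-1)).mul (isPolyFun_const ((q:ℂ) * w ^ (q-1)))

lemma ipf_qzf (c : ℕ → ℕ → ℂ) (N : ℕ) (w : ℂ) : IsPolyFun (fun z => qzf c N z w) := by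
  simp only [qzf]
  apply isPolyFun_sum; intro j _
  apply isPolyFun_sum; intro q _
  exact isPolyFun_cpow ((j:ℂ) * (starRingEnd ℂ) (c j q) * w ^ (j-1)) q

lemma ipf_qzw (c : ℕ → ℕ → ℂ) (N : ℕ) (w : ℂ) : IsPolyFun (fun z => qzw c N z w) := by
  simp only [qzw]
  apply isPolyFun_sum; intro j _
  apply isPolyFun_sum; intro q _
  exact isPolyFun_cpow ((j:ℂ) * (starRingEnd ℂ) (c j q) * (((j-1 : ℕ):ℂ) * w ^ (j-1-1))) q

lemma ptil_zero (c : ℕ → ℕ → ℂ) (N : ℕ) (h0 : ∀ q, c 0 q = 0) (w : ℂ) : ptil c N 0 w = 0 := by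
  simp only [ptil]
  apply Finset.sum_eq_zero; intro j _
  apply Finset.sum_eq_zero; intro q _
  rcases Nat.eq_zero_or_pos j with hj|hj
  · subst hj; rw [h0 q]; ring
  · rw [zero_pow (by omega : j ≠ 0)]; ring

/-- if `μ ≠ 0` is real, `P` is a nonzero real polynomial without harmonic
terms with `z`-derivative `P_z`, and entire functions `h₁, h₂` satisfy the tangency
identity `(h₁ P_z + h₂) + e^{−2iμP} ⋅ conj(h₁ P_z + h₂) = 0` on `ℂ`, then `h₁` vanishes
somewhere. -/
theorem stmt11 (μ : ℝ) (hμ : μ ≠ 0) (c : ℕ → ℕ → ℂ) (N : ℕ) (P : ℂ → ℝ) (Pz : ℂ → ℂ)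
    (hsym : ∀ j q, c j q = conj (c q j))
    (hharm : ∀ j q, j = 0 ∨ q = 0 → c j q = 0)
    (hsupp : ∀ j q, N < j ∨ N < q → c j q = 0)
    (hP : ∀ z : ℂ, (P z : ℂ) = ∑ j ∈ Finset.range (N + 1), ∑ q ∈ Finset.range (N + 1),
      c j q * z ^ j * (conj z) ^ q)
    (hPz : ∀ z : ℂ, Pz z = ∑ j ∈ Finset.range (N + 1), ∑ q ∈ Finset.range (N + 1),
      (j : ℂ) * c j q * z ^ (j - 1) * (conj z) ^ q)
    (hPne : ∃ z : ℂ, P z ≠ 0)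
    (h₁ h₂ : ℂ → ℂ) (hh₁ : Differentiable ℂ h₁) (hh₂ : Differentiable ℂ h₂)
    (heq : ∀ z : ℂ, (h₁ z * Pz z + h₂ z) +
      Complex.exp (-2 * Complex.I * μ * P z) * conj (h₁ z * Pz z + h₂ z) = 0) :
    ∃ z : ℂ, h₁ z = 0 := by
  by_contra hcon
  push_neg at hcon
  -- there is a nonzero coefficient
  have hcex : ∃ j₀ q₀ : ℕ, j₀ ∈ range (N+1) ∧ q₀ ∈ range (N+1) ∧ c j₀ q₀ ≠ 0 := by
    by_contra hall
    push_neg at hall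
    obtain ⟨z, hz⟩ := hPne
    apply hz
    have hz0 : (P z : ℂ) = 0 := by
      rw [hP z]
      apply Finset.sum_eq_zero; intro j hj
      apply Finset.sum_eq_zero; intro q hq
      rw [hall j q hj hq]; ring
    exact_mod_cast hz0
  obtain ⟨j₀, q₀, hj₀, hq₀, hc0⟩ := hcex
  rw [mem_range] at hj₀ hq₀
  have hj₀1 : 1 ≤ j₀ := by
    by_contra h
    exact hc0 (hharm j₀ q₀ (Or.inl (by omega)))
  have hq₀1 : 1 ≤ q₀ := by
    by_contra h
    exact hc0 (hharm j₀ q₀ (Or.inr (by omega)))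
  set K : ℂ := 2 * Complex.I * (μ:ℂ) with hKdef
  have hK : K ≠ 0 := by
    rw [hKdef]
    exact mul_ne_zero (mul_ne_zero two_ne_zero Complex.I_ne_zero) (Complex.ofReal_ne_zero.mpr hμ)
  set H₁ : ℂ → ℂ := fun w => (starRingEnd ℂ) (h₁ ((starRingEnd ℂ) w)) with hH₁
  set H₂ : ℂ → ℂ := fun w => (starRingEnd ℂ) (h₂ ((starRingEnd ℂ) w)) with hH₂
  have DH₁ : Differentiable ℂ H₁ := differentiable_conj_conj h₁ hh₁
  have DH₂ : Differentiable ℂ H₂ := differentiable_conj_conj h₂ hh₂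
  set Φ : ℂ × ℂ → ℂ := fun p =>
    Complex.exp (K * ptil c N p.1 p.2) * (h₁ p.1 * pzz c N p.1 p.2 + h₂ p.1)
      + H₁ p.2 * qzf c N p.1 p.2 + H₂ p.2 with hΦ
  have DΦ : Differentiable ℂ Φ := by
    apply Differentiable.add
    apply Differentiable.add
    · exact (((diff2_ptil c N).const_mul K).cexp).mul
        (((hh₁.comp differentiable_fst).mul (diff2_pzz c N)).add (hh₂.comp differentiable_fst))
    · exact (DH₁.comp differentiable_snd).mul (diff2_qzf c N)
    · exact DH₂.comp differentiable_snd
  have hdiag : ∀ z : ℂ, Φ (z, (starRingEnd ℂ) z) = 0 := by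
    intro z
    have e1 : ptil c N z ((starRingEnd ℂ) z) = (P z : ℂ) := (hP z).symm
    have e2 : pzz c N z ((starRingEnd ℂ) z) = Pz z := (hPz z).symm
    have e3 : qzf c N z ((starRingEnd ℂ) z) = (starRingEnd ℂ) (Pz z) := by
      rw [hPz z, map_sum]
      apply Finset.sum_congr rfl; intro j _
      rw [map_sum]
      apply Finset.sum_congr rfl; intro q _
      simp only [map_mul, map_pow, Complex.conj_conj, map_natCast]
    have hexp : Complex.exp (K * (P z:ℂ)) * Complex.exp (-2 * Complex.I * (μ:ℂ) * (P z:ℂ)) = 1 := by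
      rw [← Complex.exp_add,
        show K * (P z:ℂ) + -2 * Complex.I * (μ:ℂ) * (P z:ℂ) = 0 from by rw [hKdef]; ring,
        Complex.exp_zero]
    have heqz := heq z
    rw [map_add, map_mul] at heqz
    have e4 : H₁ ((starRingEnd ℂ) z) = (starRingEnd ℂ) (h₁ z) := by
      rw [hH₁]; simp [Complex.conj_conj]
    have e5 : H₂ ((starRingEnd ℂ) z) = (starRingEnd ℂ) (h₂ z) := by
      rw [hH₂]; simp [Complex.conj_conj]
    show Complex.exp (K * ptil c N z ((starRingEnd ℂ) z))
        * (h₁ z * pzz c N z ((starRingEnd ℂ) z) + h₂ z)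
        + H₁ ((starRingEnd ℂ) z) * qzf c N z ((starRingEnd ℂ) z) + H₂ ((starRingEnd ℂ) z) = 0
    rw [e1, e2, e3, e4, e5]
    linear_combination Complex.exp (K * (P z:ℂ)) * heqz
      - ((starRingEnd ℂ) (h₁ z) * (starRingEnd ℂ) (Pz z) + (starRingEnd ℂ) (h₂ z)) * hexp
  have hglob : ∀ z w : ℂ, Φ (z, w) = 0 := by
    have step1 : ∀ (y : ℝ) (u : ℂ),
        Φ (u + Complex.I * (y:ℂ), u - Complex.I * (y:ℂ)) = 0 := by
      intro y
      apply entire_zero_on_reals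
      · exact DΦ.comp ((differentiable_id.add_const _).prodMk (differentiable_id.sub_const _))
      · intro x
        show Φ ((x:ℂ) + Complex.I * (y:ℂ), (x:ℂ) - Complex.I * (y:ℂ)) = 0
        have hcc : (starRingEnd ℂ) ((x:ℂ) + Complex.I * (y:ℂ))
            = (x:ℂ) - Complex.I * (y:ℂ) := by
          rw [map_add, map_mul, Complex.conj_I, Complex.conj_ofReal, Complex.conj_ofReal]
          ring
        rw [← hcc]
        exact hdiag _
    have step2 : ∀ (u v : ℂ), Φ (u + Complex.I * v, u - Complex.I * v) = 0 := by
      intro u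
      apply entire_zero_on_reals
      · exact DΦ.comp (((differentiable_id.const_mul Complex.I).const_add u).prodMk
          ((differentiable_const u).sub (differentiable_id.const_mul Complex.I)))
      · intro x
        exact step1 x u
    intro z w
    have h := step2 ((z+w)/2) ((z-w)/(2*Complex.I))
    have h2I : (2:ℂ) * Complex.I ≠ 0 := mul_ne_zero two_ne_zero Complex.I_ne_zero
    have e1 : (z+w)/2 + Complex.I * ((z-w)/(2*Complex.I)) = z := by
      field_simp
      ring
    have e2 : (z+w)/2 - Complex.I * ((z-w)/(2*Complex.I)) = w := by
      field_simp
      ring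
    rw [e1, e2] at h
    exact h
  have hval : ∀ z w : ℂ, Complex.exp (K * ptil c N z w) * (h₁ z * pzz c N z w + h₂ z)
      = -(H₁ w * qzf c N z w + H₂ w) := by
    intro z w
    have h := hglob z w
    simp only [hΦ] at h
    linear_combination h
  have hder : ∀ w₀ z : ℂ, Complex.exp (K * ptil c N z w₀) * (h₁ z * pzw c N z w₀)
      = K * ptw c N z w₀ * (H₁ w₀ * qzf c N z w₀ + H₂ w₀)
        - (deriv H₁ w₀ * qzf c N z w₀ + H₁ w₀ * qzw c N z w₀) - deriv H₂ w₀ := by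
    intro w₀ z
    have hA : HasDerivAt (fun w => Complex.exp (K * ptil c N z w))
        (Complex.exp (K * ptil c N z w₀) * (K * ptw c N z w₀)) w₀ :=
      ((hasDerivAt_ptil_w c N z w₀).const_mul K).cexp
    have hB : HasDerivAt (fun w => h₁ z * pzz c N z w + h₂ z) (h₁ z * pzw c N z w₀) w₀ :=
      ((hasDerivAt_pzz_w c N z w₀).const_mul (h₁ z)).add_const (h₂ z)
    have hC : HasDerivAt (fun w => H₁ w * qzf c N z w)
        (deriv H₁ w₀ * qzf c N z w₀ + H₁ w₀ * qzw c N z w₀) w₀ :=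
      ((DH₁ w₀).hasDerivAt).mul (hasDerivAt_qzf_w c N z w₀)
    have hD : HasDerivAt H₂ (deriv H₂ w₀) w₀ := (DH₂ w₀).hasDerivAt
    have htot : HasDerivAt (fun w => Complex.exp (K * ptil c N z w)
          * (h₁ z * pzz c N z w + h₂ z) + H₁ w * qzf c N z w + H₂ w)
        (Complex.exp (K * ptil c N z w₀) * (K * ptw c N z w₀) * (h₁ z * pzz c N z w₀ + h₂ z)
          + Complex.exp (K * ptil c N z w₀) * (h₁ z * pzw c N z w₀)
          + (deriv H₁ w₀ * qzf c N z w₀ + H₁ w₀ * qzw c N z w₀) + deriv H₂ w₀) w₀ :=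
      ((hA.mul hB).add hC).add hD
    have hfn : (fun w => Complex.exp (K * ptil c N z w) * (h₁ z * pzz c N z w + h₂ z)
        + H₁ w * qzf c N z w + H₂ w) = fun _ => (0:ℂ) := by
      funext w
      have h := hglob z w
      simp only [hΦ] at h
      exact h
    rw [hfn] at htot
    have h0 := htot.unique (hasDerivAt_const w₀ (0:ℂ))
    linear_combination h0 - K * ptw c N z w₀ * hval z w₀
  have hconst : ∀ w₀ : ℂ, (∃ z, pzw c N z w₀ ≠ 0) →
      ∀ z, h₁ z * Complex.exp (K * ptil c N z w₀) = h₁ 0 := by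
    intro w₀ hw
    have hu : Continuous (fun z => h₁ z * Complex.exp (K * ptil c N z w₀)) :=
      (hh₁.continuous).mul (((diff_ptil_z c N w₀).const_mul K).cexp.continuous)
    have hune : ∀ z, h₁ z * Complex.exp (K * ptil c N z w₀) ≠ 0 :=
      fun z => mul_ne_zero (hcon z) (Complex.exp_ne_zero _)
    have hg : IsPolyFun (fun z => K * ptw c N z w₀ * (H₁ w₀ * qzf c N z w₀ + H₂ w₀)
        - (deriv H₁ w₀ * qzf c N z w₀ + H₁ w₀ * qzw c N z w₀) - deriv H₂ w₀) := by
      apply IsPolyFun.sub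
      · apply IsPolyFun.sub
        · apply IsPolyFun.mul
          · exact (isPolyFun_const K).mul (ipf_ptw c N w₀)
          · exact ((isPolyFun_const (H₁ w₀)).mul (ipf_qzf c N w₀)).add (isPolyFun_const (H₂ w₀))
        · exact ((isPolyFun_const (deriv H₁ w₀)).mul (ipf_qzf c N w₀)).add
            ((isPolyFun_const (H₁ w₀)).mul (ipf_qzw c N w₀))
      · exact isPolyFun_const (deriv H₂ w₀)
    have hcm := const_of_mul_eq_polyfun hu hune (ipf_pzw c N w₀) hg hw
      (fun z => by linear_combination hder w₀ z)
    intro z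
    have h0' : h₁ 0 * Complex.exp (K * ptil c N 0 w₀) = h₁ 0 := by
      rw [ptil_zero c N (fun q => hharm 0 q (Or.inl rfl)) w₀, mul_zero, Complex.exp_zero,
        mul_one]
    rw [hcm z, h0']
  have hpair : ∀ w w' : ℂ, (∃ z, pzw c N z w ≠ 0) → (∃ z, pzw c N z w' ≠ 0) →
      ∀ z, ptil c N z w = ptil c N z w' := by
    intro w w' hw hw'
    have hexp1 : ∀ z, Complex.exp (K * ptil c N z w - K * ptil c N z w') = 1 := by
      intro z
      have e1 := hconst w hw z
      have e2 := hconst w' hw' z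
      have he : Complex.exp (K * ptil c N z w) = Complex.exp (K * ptil c N z w') :=
        mul_left_cancel₀ (hcon z) (e1.trans e2.symm)
      rw [Complex.exp_sub, he, div_self (Complex.exp_ne_zero _)]
    have hG : ∀ z, K * ptil c N z w - K * ptil c N z w' = 0 := by
      apply eq_zero_of_cexp_eq_one
      · exact (((diff_ptil_z c N w).const_mul K).sub
          ((diff_ptil_z c N w').const_mul K)).continuous
      · rw [ptil_zero c N (fun q => hharm 0 q (Or.inl rfl)) w,
          ptil_zero c N (fun q => hharm 0 q (Or.inl rfl)) w']
        simp
      · exact hexp1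
    intro z
    apply mul_left_cancel₀ hK
    linear_combination hG z
  -- coefficient functions
  have hptilphi : ∀ z w : ℂ, ptil c N z w
      = ∑ j ∈ range (N+1), (∑ q ∈ range (N+1), c j q * w ^ q) * z ^ j := by
    intro z w
    simp only [ptil]
    apply Finset.sum_congr rfl; intro j _
    rw [Finset.sum_mul]
    apply Finset.sum_congr rfl; intro q _
    ring
  have hphiconst : ∀ w w' : ℂ, (∃ z, pzw c N z w ≠ 0) → (∃ z, pzw c N z w' ≠ 0) →
      ∀ j ∈ range (N+1),
        (∑ q ∈ range (N+1), c j q * w ^ q) = (∑ q ∈ range (N+1), c j q * w' ^ q) := by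
    intro w w' hw hw'
    have hz : ∀ z : ℂ, ∑ j ∈ range (N+1),
        ((∑ q ∈ range (N+1), c j q * w ^ q) - (∑ q ∈ range (N+1), c j q * w' ^ q)) * z ^ j
        = 0 := by
      intro z
      have hpz := hpair w w' hw hw' z
      rw [hptilphi z w, hptilphi z w'] at hpz
      calc ∑ j ∈ range (N+1),
          ((∑ q ∈ range (N+1), c j q * w ^ q) - (∑ q ∈ range (N+1), c j q * w' ^ q)) * z ^ j
          = ∑ j ∈ range (N+1), ((∑ q ∈ range (N+1), c j q * w ^ q) * z ^ j
              - (∑ q ∈ range (N+1), c j q * w' ^ q) * z ^ j) := by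
            apply Finset.sum_congr rfl; intros; ring
        _ = (∑ j ∈ range (N+1), (∑ q ∈ range (N+1), c j q * w ^ q) * z ^ j)
              - ∑ j ∈ range (N+1), (∑ q ∈ range (N+1), c j q * w' ^ q) * z ^ j :=
            Finset.sum_sub_distrib _ _
        _ = 0 := by rw [hpz, sub_self]
    intro j hj
    have hcz := coeff_zero_of_sum_zero (N+1)
      (fun j => (∑ q ∈ range (N+1), c j q * w ^ q) - (∑ q ∈ range (N+1), c j q * w' ^ q))
      hz j hj
    exact sub_eq_zero.mp hcz
  -- the good set
  set dP : Polynomial ℂ := ∑ q ∈ range (N+1), C (c j₀ q * (q:ℂ)) * X ^ (q - 1) with hdP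
  have hdPne : dP ≠ 0 := by
    intro h0
    have hco := congrArg (fun p : Polynomial ℂ => p.coeff (q₀ - 1)) h0
    simp only [hdP, Polynomial.finset_sum_coeff, Polynomial.coeff_zero] at hco
    rw [Finset.sum_eq_single q₀] at hco
    · rw [Polynomial.coeff_C_mul, Polynomial.coeff_X_pow, if_pos rfl, mul_one] at hco
      have hqc : (q₀:ℂ) ≠ 0 := Nat.cast_ne_zero.mpr (by omega)
      exact (mul_ne_zero hc0 hqc) hco
    · intro b hb hbq
      rcases Nat.eq_zero_or_pos b with h|h
      · subst h; simp
      · have hne : q₀ - 1 ≠ b - 1 := by omega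
        rw [Polynomial.coeff_C_mul, Polynomial.coeff_X_pow, if_neg hne, mul_zero]
    · intro h; exact absurd (mem_range.mpr (by omega)) h
  have hgood : ∀ w : ℂ, ¬ dP.IsRoot w → ∃ z, pzw c N z w ≠ 0 := by
    intro w hw
    by_contra hall
    push_neg at hall
    apply hw
    have hform : ∀ z : ℂ, pzw c N z w = ∑ j ∈ range (N+1),
        ((j:ℂ) * ∑ q ∈ range (N+1), c j q * ((q:ℂ) * w ^ (q-1))) * z ^ (j-1) := by
      intro z
      simp only [pzw]
      apply Finset.sum_congr rfl; intro j _
      rw [Finset.mul_sum, Finset.sum_mul]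
      apply Finset.sum_congr rfl; intro q _
      ring
    have hz2 : ∀ z : ℂ, ∑ i ∈ range N,
        (((i+1:ℕ):ℂ) * ∑ q ∈ range (N+1), c (i+1) q * ((q:ℂ) * w ^ (q-1))) * z ^ i = 0 := by
      intro z
      have h := hall z
      rw [hform z] at h
      rw [Finset.sum_range_succ'] at h
      simp only [Nat.cast_zero, zero_mul, add_zero, Nat.add_sub_cancel] at h
      exact h
    have hBj := coeff_zero_of_sum_zero N
      (fun i => ((i+1:ℕ):ℂ) * ∑ q ∈ range (N+1), c (i+1) q * ((q:ℂ) * w ^ (q-1)))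
      hz2 (j₀ - 1) (mem_range.mpr (by omega))
    have hj' : (j₀ - 1) + 1 = j₀ := by omega
    rw [hj'] at hBj
    have hj0c : (j₀:ℂ) ≠ 0 := Nat.cast_ne_zero.mpr (by omega)
    have hsum0 : ∑ q ∈ range (N+1), c j₀ q * ((q:ℂ) * w ^ (q-1)) = 0 := by
      rcases mul_eq_zero.mp hBj with h|h
      · exact absurd h hj0c
      · exact h
    show eval w dP = 0
    rw [hdP]
    rw [Polynomial.eval_finset_sum]
    calc ∑ q ∈ range (N+1), eval w (C (c j₀ q * (q:ℂ)) * X ^ (q-1))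
        = ∑ q ∈ range (N+1), c j₀ q * ((q:ℂ) * w ^ (q-1)) := by
          apply Finset.sum_congr rfl; intro q _
          rw [Polynomial.eval_mul, Polynomial.eval_C, Polynomial.eval_pow, Polynomial.eval_X]
          ring
      _ = 0 := hsum0
  have hfin : ({w : ℂ | dP.IsRoot w}).Finite := Polynomial.finite_setOf_isRoot hdPne
  have hinf : ({w : ℂ | ¬ dP.IsRoot w}).Infinite := by
    exact hfin.infinite_compl
  obtain ⟨wst, hwst⟩ := hinf.nonempty
  set E : Polynomial ℂ := (∑ q ∈ range (N+1), C (c j₀ q) * X ^ q)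
      - C (∑ q ∈ range (N+1), c j₀ q * wst ^ q) with hE
  have hEinf : ({w : ℂ | E.IsRoot w}).Infinite := by
    apply Set.Infinite.mono _ hinf
    intro w hw
    show E.IsRoot w
    show eval w E = 0
    rw [hE, Polynomial.eval_sub, Polynomial.eval_C, Polynomial.eval_finset_sum]
    have hphi := hphiconst w wst (hgood w hw) (hgood wst hwst) j₀ (mem_range.mpr (by omega))
    rw [sub_eq_zero]
    rw [← hphi]
    apply Finset.sum_congr rfl; intro q _
    rw [Polynomial.eval_mul, Polynomial.eval_C, Polynomial.eval_pow, Polynomial.eval_X]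
  have hE0 : E = 0 := Polynomial.eq_zero_of_infinite_isRoot E hEinf
  have hphiall : ∀ w : ℂ, ∑ q ∈ range (N+1), c j₀ q * w ^ q
      = ∑ q ∈ range (N+1), c j₀ q * wst ^ q := by
    intro w
    have h := congrArg (eval w) hE0
    rw [hE, Polynomial.eval_sub, Polynomial.eval_C, Polynomial.eval_finset_sum,
      Polynomial.eval_zero] at h
    rw [sub_eq_zero] at h
    rw [← h]
    apply Finset.sum_congr rfl; intro q _
    rw [Polynomial.eval_mul, Polynomial.eval_C, Polynomial.eval_pow, Polynomial.eval_X]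
  have hκ0 : ∑ q ∈ range (N+1), c j₀ q * wst ^ q = 0 := by
    rw [← hphiall 0]
    apply Finset.sum_eq_zero; intro q _
    rcases Nat.eq_zero_or_pos q with hq|hq
    · subst hq; rw [hharm j₀ 0 (Or.inr rfl)]; ring
    · rw [zero_pow (by omega : q ≠ 0)]; ring
  have hzero : ∀ w : ℂ, ∑ q ∈ range (N+1), c j₀ q * w ^ q = 0 := by
    intro w
    rw [hphiall w, hκ0]
  exact hc0 (coeff_zero_of_sum_zero (N+1) (c j₀) hzero q₀ (mem_range.mpr (by omega)))
end
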